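/- arXiv:1010.1961 — 4 statements merged into one kernel-verified Lean document; each statement's English description precedes it below -/
import Mathlib

section
/- (Doob's maximal identity.) Let τ be a stopping time of (𝓕_t) with P[τ < ∞] = 1, and let a > 0 be a real number. Then, almost surely, P[sup_{s ∈ [τ, ∞)} M_s ≥ a | 𝓕_τ] = min(1, M_τ / a). -/
open MeasureTheory Filter Set
open scoped NNReal ENNReal

namespace DoobAux

variable {Ω : Type*} {m : MeasurableSpace Ω} {P : Measure Ω} [IsProbabilityMeasure P]
  {ℱ : Filtration ℝ≥0 m} {M : ℝ≥0 → Ω → ℝ}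

/-- dyadic upper approximation of a stopping time -/
noncomputable def dy (ρ : Ω → ℝ≥0) (k : ℕ) (ω : Ω) : ℝ≥0 :=
  (⌈(2 ^ k : ℝ≥0) * ρ ω⌉₊ : ℝ≥0) / 2 ^ k

lemma two_pow_pos (k : ℕ) : (0:ℝ≥0) < 2 ^ k := pow_pos (by norm_num) k

lemma le_dy (ρ : Ω → ℝ≥0) (k : ℕ) (ω : Ω) : ρ ω ≤ dy ρ k ω := by
  rw [dy, le_div_iff₀ (two_pow_pos k)]
  rw [mul_comm]
  exact Nat.le_ceil _

lemma dy_le {ρ : Ω → Ω → ℝ≥0} : True := trivial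

lemma dy_le_add (ρ : Ω → ℝ≥0) (k : ℕ) (ω : Ω) : dy ρ k ω ≤ ρ ω + (2 ^ k)⁻¹ := by
  rw [dy, div_le_iff₀ (two_pow_pos k)]
  have h1 : (⌈(2 ^ k : ℝ≥0) * ρ ω⌉₊ : ℝ≥0) ≤ (2 ^ k : ℝ≥0) * ρ ω + 1 :=
    (Nat.ceil_lt_add_one zero_le).le
  refine h1.trans (le_of_eq ?_)
  rw [add_mul, inv_mul_cancel₀ (two_pow_pos k).ne', mul_comm]

lemma isST_of {ρ : Ω → ℝ≥0} (h : ∀ t, MeasurableSet[ℱ t] {ω | ρ ω ≤ t}) :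
    IsStoppingTime ℱ (fun ω => (ρ ω : WithTop ℝ≥0)) := fun t => by
  simpa only [WithTop.coe_le_coe] using h t

lemma mset_le_coe {ρ : Ω → ℝ≥0} (hρ : IsStoppingTime ℱ (fun ω => (ρ ω : WithTop ℝ≥0)))
    (t : ℝ≥0) : MeasurableSet[ℱ t] {ω | ρ ω ≤ t} := by
  simpa only [WithTop.coe_le_coe] using hρ.measurableSet_le t

lemma mset_le'_coe {ρ : Ω → ℝ≥0} (hρ : IsStoppingTime ℱ (fun ω => (ρ ω : WithTop ℝ≥0)))
    (t : ℝ≥0) : MeasurableSet[hρ.measurableSpace] {ω | ρ ω ≤ t} := by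
  simpa only [WithTop.coe_le_coe] using hρ.measurableSet_le' t

lemma minc {ρ : Ω → ℝ≥0} (hρ : IsStoppingTime ℱ (fun ω => (ρ ω : WithTop ℝ≥0))) (n : ℝ≥0) :
    IsStoppingTime ℱ (fun ω => ((min (ρ ω) n : ℝ≥0) : WithTop ℝ≥0)) := by
  simpa only [WithTop.coe_min] using hρ.min_const n

lemma msp_congr {σ σ' : Ω → WithTop ℝ≥0} (hσ : IsStoppingTime ℱ σ) (hσ' : IsStoppingTime ℱ σ')
    (h : σ = σ') : hσ.measurableSpace = hσ'.measurableSpace := by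
  subst h; rfl

lemma dy_isStoppingTime {ρ : Ω → ℝ≥0} (hρ : IsStoppingTime ℱ (fun ω => (ρ ω : WithTop ℝ≥0))) (k : ℕ) :
    IsStoppingTime ℱ (fun ω => (dy ρ k ω : WithTop ℝ≥0)) := by
  refine isST_of fun t => ?_
  have hset : {ω | dy ρ k ω ≤ t} = {ω | ρ ω ≤ (⌊t * (2 ^ k : ℝ≥0)⌋₊ : ℝ≥0) / 2 ^ k} := by
    ext ω
    simp only [Set.mem_setOf_eq, dy]
    rw [div_le_iff₀ (two_pow_pos k),
      le_div_iff₀ (two_pow_pos k)]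
    constructor
    · intro h
      have h2 : (⌈(2 ^ k : ℝ≥0) * ρ ω⌉₊ : ℕ) ≤ ⌊t * 2 ^ k⌋₊ := Nat.le_floor h
      calc ρ ω * 2 ^ k = (2 ^ k : ℝ≥0) * ρ ω := mul_comm _ _
      _ ≤ (⌈(2 ^ k : ℝ≥0) * ρ ω⌉₊ : ℝ≥0) := Nat.le_ceil _
      _ ≤ (⌊t * 2 ^ k⌋₊ : ℝ≥0) := by exact_mod_cast h2
    · intro h
      have h' : (⌈(2 ^ k : ℝ≥0) * ρ ω⌉₊ : ℕ) ≤ ⌊t * 2 ^ k⌋₊ := by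
        rw [Nat.ceil_le, mul_comm]
        exact h
      calc (⌈(2 ^ k : ℝ≥0) * ρ ω⌉₊ : ℝ≥0) ≤ (⌊t * 2 ^ k⌋₊ : ℝ≥0) := by exact_mod_cast h'
      _ ≤ t * 2 ^ k := Nat.floor_le zero_le
  rw [hset]
  have hle : (⌊t * (2 ^ k : ℝ≥0)⌋₊ : ℝ≥0) / 2 ^ k ≤ t := by
    rw [div_le_iff₀ (two_pow_pos k), mul_comm t]
    exact Nat.floor_le zero_le
  exact ℱ.mono hle _ (mset_le_coe hρ _)

lemma dy_countable_range (ρ : Ω → ℝ≥0) (k : ℕ) : (Set.range (dy ρ k)).Countable := by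
  have : Set.range (dy ρ k) ⊆ Set.range (fun n : ℕ => (n : ℝ≥0) / 2 ^ k) := by
    rintro x ⟨ω, rfl⟩
    exact ⟨⌈(2 ^ k : ℝ≥0) * ρ ω⌉₊, rfl⟩
  exact (Set.countable_range _).mono this

lemma dy_tendsto (ρ : Ω → ℝ≥0) (ω : Ω) :
    Tendsto (fun k => dy ρ k ω) atTop (nhds (ρ ω)) := by
  rw [← NNReal.tendsto_coe]
  have h1 : Tendsto (fun k : ℕ => ((ρ ω : ℝ) + ((2:ℝ) ^ k)⁻¹)) atTop (nhds ((ρ ω : ℝ) + 0)) := by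
    refine Tendsto.add tendsto_const_nhds ?_
    simp_rw [← inv_pow]
    exact tendsto_pow_atTop_nhds_zero_of_lt_one (by norm_num) (by norm_num)
  rw [add_zero] at h1
  refine tendsto_of_tendsto_of_tendsto_of_le_of_le tendsto_const_nhds h1 ?_ ?_
  · intro k; exact_mod_cast le_dy ρ k ω
  · intro k
    have := dy_le_add ρ k ω
    calc (dy ρ k ω : ℝ) ≤ ((ρ ω + (2 ^ k)⁻¹ : ℝ≥0) : ℝ) := by exact_mod_cast this
    _ = (ρ ω : ℝ) + ((2:ℝ) ^ k)⁻¹ := by push_cast; ring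


lemma dy_le_const {ρ : Ω → ℝ≥0} {N : ℝ≥0} (hρN : ∀ ω, ρ ω ≤ N) (k : ℕ) (ω : Ω) :
    dy ρ k ω ≤ N + 1 := by
  refine (dy_le_add ρ k ω).trans ?_
  gcongr
  · exact hρN ω
  · rw [← one_div]
    refine (div_le_one (two_pow_pos k)).mpr ?_
    exact one_le_pow₀ (by norm_num)

/-- Continuous-time optional sampling, set-integral form. -/
theorem os_main (hMmart : Martingale M ℱ P) (hMcont : ∀ ω, Continuous fun t => M t ω)
    {ρ : Ω → ℝ≥0} (hρ : IsStoppingTime ℱ (fun ω => (ρ ω : WithTop ℝ≥0))) {N : ℝ≥0} (hρN : ∀ ω, ρ ω ≤ N) :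
    Integrable (stoppedValue M (fun ω => (ρ ω : WithTop ℝ≥0))) P ∧
    ∀ B : Set Ω, MeasurableSet[hρ.measurableSpace] B →
      ∫ ω in B, stoppedValue M (fun ω => (ρ ω : WithTop ℝ≥0)) ω ∂P = ∫ ω in B, M (N + 1) ω ∂P := by
  have hprog : ProgMeasurable ℱ M := hMmart.stronglyAdapted.progMeasurable_of_continuous hMcont
  set ρk : ℕ → Ω → ℝ≥0 := fun k => dy ρ k with hρk_def
  have hst : ∀ k, IsStoppingTime ℱ (fun ω => (ρk k ω : WithTop ℝ≥0)) := fun k => dy_isStoppingTime hρ k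
  have hρ_le : ∀ k, ρ ≤ ρk k := fun k ω => le_dy ρ k ω
  have hρk_le : ∀ k, ∀ ω, ρk k ω ≤ N + 1 := fun k ω => dy_le_const hρN k ω
  have hcond : ∀ k, stoppedValue M (fun ω => (ρk k ω : WithTop ℝ≥0)) =ᵐ[P] P[M (N + 1) | (hst k).measurableSpace] := by
    intro k
    exact hMmart.stoppedValue_ae_eq_condExp_of_le_const_of_countable_range (hst k)
      (fun ω => WithTop.coe_le_coe.mpr (hρk_le k ω))
      (((dy_countable_range ρ k).image (fun x : ℝ≥0 => (x : WithTop ℝ≥0))).mono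
        (by rintro _ ⟨ω, rfl⟩; exact ⟨_, ⟨ω, rfl⟩, rfl⟩))
  -- measurability
  have hmeask : ∀ k, AEStronglyMeasurable (stoppedValue M (fun ω => (ρk k ω : WithTop ℝ≥0))) P := fun k =>
    ((measurable_stoppedValue hprog (hst k)).mono (hst k).measurableSpace_le le_rfl
      ).stronglyMeasurable.aestronglyMeasurable
  have hmeasρ : AEStronglyMeasurable (stoppedValue M (fun ω => (ρ ω : WithTop ℝ≥0))) P :=
    ((measurable_stoppedValue hprog hρ).mono hρ.measurableSpace_le le_rfl
      ).stronglyMeasurable.aestronglyMeasurable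
  -- pointwise convergence
  have htendsto : ∀ ω, Tendsto (fun k => stoppedValue M (fun ω => (ρk k ω : WithTop ℝ≥0)) ω) atTop
      (nhds (stoppedValue M (fun ω => (ρ ω : WithTop ℝ≥0)) ω)) := by
    intro ω
    exact ((hMcont ω).tendsto (ρ ω)).comp (dy_tendsto ρ ω)
  -- uniform integrability
  have hint1 : Integrable (M (N + 1)) P := hMmart.integrable (N + 1)
  have hui : UnifIntegrable (fun k => stoppedValue M (fun ω => (ρk k ω : WithTop ℝ≥0))) 1 P := by
    have := (hint1.uniformIntegrable_condExp (fun k => (hst k).measurableSpace_le)).2.1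
    exact this.ae_eq (fun k => (hcond k).symm)
  -- the limit is in L¹
  have hLp : MemLp (stoppedValue M (fun ω => (ρ ω : WithTop ℝ≥0))) 1 P := by
    refine ⟨hmeasρ, ?_⟩
    have hfatou := MeasureTheory.Lp.eLpNorm_lim_le_liminf_eLpNorm (f := fun k => stoppedValue M (fun ω => (ρk k ω : WithTop ℝ≥0)))
      (p := 1) hmeask (stoppedValue M (fun ω => (ρ ω : WithTop ℝ≥0))) (ae_of_all P htendsto)
    refine lt_of_le_of_lt hfatou ?_
    refine lt_of_le_of_lt (b := eLpNorm (M (N + 1)) 1 P) ?_ (memLp_one_iff_integrable.mpr hint1).eLpNorm_lt_top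
    refine Filter.liminf_le_of_frequently_le (Filter.Frequently.of_forall (fun k => ?_))
      (by isBoundedDefault)
    show eLpNorm (stoppedValue M (fun ω => (ρk k ω : WithTop ℝ≥0))) 1 P ≤ eLpNorm (M (N + 1)) 1 P
    rw [eLpNorm_congr_ae (hcond k)]
    exact eLpNorm_one_condExp_le_eLpNorm _
  have hintρ : Integrable (stoppedValue M (fun ω => (ρ ω : WithTop ℝ≥0))) P := memLp_one_iff_integrable.mp hLp
  refine ⟨hintρ, fun B hB => ?_⟩
  -- L¹ convergence (Vitali)
  have hL1 : Tendsto (fun k => eLpNorm (stoppedValue M (fun ω => (ρk k ω : WithTop ℝ≥0)) - stoppedValue M (fun ω => (ρ ω : WithTop ℝ≥0))) 1 P)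
      atTop (nhds 0) :=
    tendsto_Lp_finite_of_tendsto_ae le_rfl ENNReal.one_ne_top hmeask hLp hui
      (ae_of_all P htendsto)
  have hintk : ∀ k, Integrable (stoppedValue M (fun ω => (ρk k ω : WithTop ℝ≥0))) P := fun k =>
    integrable_condExp.congr (hcond k).symm
  have hset : Tendsto (fun k => ∫ ω in B, stoppedValue M (fun ω => (ρk k ω : WithTop ℝ≥0)) ω ∂P) atTop
      (nhds (∫ ω in B, stoppedValue M (fun ω => (ρ ω : WithTop ℝ≥0)) ω ∂P)) := by
    refine tendsto_setIntegral_of_L1 _ hintρ.aestronglyMeasurable (Filter.Eventually.of_forall hintk) ?_ B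
    simpa only [eLpNorm_one_eq_lintegral_enorm, Pi.sub_apply] using hL1
  have hconst : ∀ k, ∫ ω in B, stoppedValue M (fun ω => (ρk k ω : WithTop ℝ≥0)) ω ∂P = ∫ ω in B, M (N + 1) ω ∂P := by
    intro k
    have hBk : MeasurableSet[(hst k).measurableSpace] B :=
      hρ.measurableSpace_mono (hst k) (fun ω => WithTop.coe_le_coe.mpr (hρ_le k ω)) _ hB
    rw [setIntegral_congr_ae ((hst k).measurableSpace_le _ hBk)
      ((hcond k).mono (fun ω hω _ => hω))]
    exact setIntegral_condExp (hst k).measurableSpace_le hint1 hBk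
  exact tendsto_nhds_unique hset (by simp_rw [hconst]; exact tendsto_const_nhds)


section Hitting

variable (M) {τ : Ω → ℝ≥0} (a : ℝ)

/-- The set of hitting of level `a` on the window `[τ ω, t]`. -/
def hitSet (τ : Ω → ℝ≥0) (t : ℝ≥0) : Set Ω := {ω | ∃ s ∈ Set.Icc (τ ω) t, a ≤ M s ω}

lemma hit_measurableSet (hAd : StronglyAdapted ℱ M) (hMcont : ∀ ω, Continuous fun t => M t ω)
    (hτ : IsStoppingTime ℱ (fun ω => (τ ω : WithTop ℝ≥0))) {a : ℝ} (ha : 0 < a) (t : ℝ≥0) :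
    MeasurableSet[ℱ t] (hitSet M a τ t) := by
  classical
  set v : Option ℚ → ℝ≥0 := fun j => j.elim t (fun q => min (Real.toNNReal q) t) with hv
  have hv_le : ∀ j, v j ≤ t := by
    rintro (_ | q)
    · exact le_rfl
    · exact min_le_right _ _
  have hEq : hitSet M a τ t = ⋂ k : ℕ, ⋃ j : Option ℚ,
      ({ω | τ ω ≤ v j} ∩ {ω | a - 1 / (k + 1) < M (v j) ω}) := by
    ext ω
    simp only [hitSet, Set.mem_setOf_eq, Set.mem_iInter, Set.mem_iUnion, Set.mem_inter_iff]
    constructor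
    · rintro ⟨s, ⟨hτs, hst⟩, hMs⟩ k
      have hε : (0:ℝ) < 1 / (k + 1) := by positivity
      have hsO : a - 1 / (k + 1) < M s ω := by linarith
      rcases eq_or_lt_of_le hst with rfl | hlt
      · exact ⟨none, hτs, hsO⟩
      · -- s < t; find a rational point nearby
        have hO : {u : ℝ≥0 | a - 1 / (k + 1) < M u ω} ∈ nhds s := by
          have : IsOpen {u : ℝ≥0 | a - 1 / (k + 1) < M u ω} :=
            isOpen_lt continuous_const (hMcont ω)
          exact this.mem_nhds hsO
        obtain ⟨u, hsu, hIco⟩ := exists_Ico_subset_of_mem_nhds hO ⟨t, hlt⟩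
        obtain ⟨q, hq1, hq2⟩ := exists_rat_btwn (show (s:ℝ) < ((min t u : ℝ≥0) : ℝ) by
          exact_mod_cast lt_min hlt hsu)
        have hq0 : (0:ℝ) ≤ (q:ℝ) := le_trans s.coe_nonneg hq1.le
        have hqs : s ≤ Real.toNNReal (q:ℝ) := by
          rw [Real.le_toNNReal_iff_coe_le hq0]
          exact hq1.le
        have hqt : Real.toNNReal (q:ℝ) ≤ t := by
          rw [Real.toNNReal_le_iff_le_coe]
          exact hq2.le.trans (by exact_mod_cast min_le_left t u)
        have hqu : Real.toNNReal (q:ℝ) < u := by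
          rw [← NNReal.coe_lt_coe, Real.coe_toNNReal _ hq0]
          exact hq2.trans_le (by exact_mod_cast min_le_right t u)
        refine ⟨some q, ?_, ?_⟩
        · show τ ω ≤ min (Real.toNNReal (q:ℝ)) t
          exact le_min (hτs.trans hqs) (hτs.trans hst)
        · show a - 1 / (k + 1) < M (min (Real.toNNReal (q:ℝ)) t) ω
          rw [min_eq_left hqt]
          exact hIco ⟨hqs, hqu⟩
    · intro h
      obtain ⟨j₀, hj₀⟩ := h 0
      have hτt : τ ω ≤ t := hj₀.1.trans (hv_le j₀)
      obtain ⟨s', hs'K, hs'max⟩ := isCompact_Icc.exists_isMaxOn (Set.nonempty_Icc.mpr hτt)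
        ((hMcont ω).continuousOn : ContinuousOn (fun u => M u ω) (Set.Icc (τ ω) t))
      refine ⟨s', hs'K, ?_⟩
      have hten : Tendsto (fun k : ℕ => a - 1 / ((k:ℝ) + 1)) atTop (nhds a) := by
        have h2 : Tendsto (fun _ : ℕ => a) atTop (nhds a) := tendsto_const_nhds
        simpa using h2.sub tendsto_one_div_add_atTop_nhds_zero_nat
      refine le_of_tendsto' hten (fun k => ?_)
      obtain ⟨j, hj1, hj2⟩ := h k
      have hvK : v j ∈ Set.Icc (τ ω) t := ⟨hj1, hv_le j⟩
      exact le_trans hj2.le (hs'max hvK)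
  rw [hEq]
  refine MeasurableSet.iInter fun k => MeasurableSet.iUnion fun j => ?_
  refine MeasurableSet.inter ?_ ?_
  · exact ℱ.mono (hv_le j) _ (mset_le_coe hτ (v j))
  · exact ℱ.mono (hv_le j) _ (measurableSet_lt measurable_const (hAd (v j)).measurable)

end Hitting

open scoped Classical in
noncomputable def hitT (M : ℝ≥0 → Ω → ℝ) (a : ℝ) (τ : Ω → ℝ≥0) (n : ℝ≥0) (ω : Ω) : ℝ≥0 :=
  if ∃ s ∈ Set.Icc (τ ω) n, a ≤ M s ω
    then sInf {s | s ∈ Set.Icc (τ ω) n ∧ a ≤ M s ω} else n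

section Hitting2

variable {M : ℝ≥0 → Ω → ℝ} {τ : Ω → ℝ≥0} {a : ℝ}

lemma not_hit_iff' {n : ℝ≥0} {ω : Ω} :
    ω ∉ hitSet M a τ n ↔ ¬∃ s ∈ Set.Icc (τ ω) n, a ≤ M s ω := Iff.rfl

lemma hit_iff' {n : ℝ≥0} {ω : Ω} :
    ω ∈ hitSet M a τ n ↔ ∃ s ∈ Set.Icc (τ ω) n, a ≤ M s ω := Iff.rfl

lemma hitT_mem (hMcont : ∀ ω, Continuous fun t => M t ω) {n : ℝ≥0} {ω : Ω}
    (h : ω ∈ hitSet M a τ n) :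
    hitT M a τ n ω ∈ Set.Icc (τ ω) n ∧ a ≤ M (hitT M a τ n ω) ω := by
  obtain ⟨s, hs, hMs⟩ := h
  have hC : IsClosed {s | s ∈ Set.Icc (τ ω) n ∧ a ≤ M s ω} := by
    have : {s | s ∈ Set.Icc (τ ω) n ∧ a ≤ M s ω}
        = Set.Icc (τ ω) n ∩ (fun u => M u ω) ⁻¹' (Set.Ici a) := rfl
    rw [this]
    exact isClosed_Icc.inter (isClosed_Ici.preimage (hMcont ω))
  have hmem := hC.csInf_mem ⟨s, hs, hMs⟩ (OrderBot.bddBelow _)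
  rw [hitT, if_pos (⟨s, hs, hMs⟩ : ∃ s ∈ Set.Icc (τ ω) n, a ≤ M s ω)]
  exact hmem

lemma hitT_le {n : ℝ≥0} (hMcont : ∀ ω, Continuous fun t => M t ω) (ω : Ω) :
    hitT M a τ n ω ≤ n := by
  by_cases h : ω ∈ hitSet M a τ n
  · exact (hitT_mem hMcont h).1.2
  · rw [hitT, if_neg (not_hit_iff'.mp h)]

lemma min_le_hitT {n : ℝ≥0} (hMcont : ∀ ω, Continuous fun t => M t ω) (ω : Ω) :
    min (τ ω) n ≤ hitT M a τ n ω := by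
  by_cases h : ω ∈ hitSet M a τ n
  · exact le_trans (min_le_left _ _) (hitT_mem hMcont h).1.1
  · rw [hitT, if_neg (not_hit_iff'.mp h)]
    exact min_le_right _ _

lemma hitT_isStoppingTime (hAd : StronglyAdapted ℱ M) (hMcont : ∀ ω, Continuous fun t => M t ω)
    (hτ : IsStoppingTime ℱ (fun ω => (τ ω : WithTop ℝ≥0))) (ha : 0 < a) (n : ℝ≥0) :
    IsStoppingTime ℱ (fun ω => (hitT M a τ n ω : WithTop ℝ≥0)) := by
  refine isST_of fun t => ?_
  by_cases htn : n ≤ t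
  · have : {ω | hitT M a τ n ω ≤ t} = Set.univ :=
      Set.eq_univ_of_forall fun ω => (hitT_le hMcont ω).trans htn
    rw [this]
    exact MeasurableSet.univ
  · push_neg at htn
    have hset : {ω | hitT M a τ n ω ≤ t} = hitSet M a τ t := by
      ext ω
      simp only [Set.mem_setOf_eq]
      constructor
      · intro h
        by_cases hh : ω ∈ hitSet M a τ n
        · obtain ⟨⟨h1, _⟩, h3⟩ := hitT_mem hMcont hh
          exact hit_iff'.mpr ⟨hitT M a τ n ω, ⟨h1, h⟩, h3⟩
        · rw [hitT, if_neg (not_hit_iff'.mp hh)] at h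
          exact absurd h (not_le.mpr htn)
      · intro hx
        obtain ⟨s, ⟨hs1, hs2⟩, hMs⟩ := hit_iff'.mp hx
        have hsn : s ∈ Set.Icc (τ ω) n := ⟨hs1, hs2.trans htn.le⟩
        rw [hitT, if_pos (⟨s, hsn, hMs⟩ : ∃ s ∈ Set.Icc (τ ω) n, a ≤ M s ω)]
        refine le_trans (csInf_le (OrderBot.bddBelow _) ?_) hs2
        exact ⟨hsn, hMs⟩
    rw [hset]
    exact hit_measurableSet M hAd hMcont hτ ha t

lemma hitT_eq_of_not_mem {n : ℝ≥0} {ω : Ω} (h : ω ∉ hitSet M a τ n) :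
    hitT M a τ n ω = n := by rw [hitT, if_neg (not_hit_iff'.mp h)]

lemma M_lt_of_not_mem {n : ℝ≥0} {ω : Ω} (h : ω ∉ hitSet M a τ n) (hτn : τ ω ≤ n) :
    M n ω < a := by
  by_contra hc
  exact h ⟨n, ⟨hτn, le_rfl⟩, not_lt.mp hc⟩

lemma hitT_val (hMcont : ∀ ω, Continuous fun t => M t ω) {n : ℝ≥0} {ω : Ω}
    (h : ω ∈ hitSet M a τ n) (hMτ : M (τ ω) ω < a) :
    M (hitT M a τ n ω) ω = a := by
  obtain ⟨⟨h1, h2⟩, h3⟩ := hitT_mem hMcont h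
  refine le_antisymm ?_ h3
  -- τ ω < hitT
  have hτlt : τ ω < hitT M a τ n ω := by
    rcases eq_or_lt_of_le h1 with he | hlt
    · exact absurd (he ▸ h3) (not_le.mpr hMτ)
    · exact hlt
  -- before the hitting time, M < a
  have hbefore : ∀ u, u ∈ Set.Ioo (τ ω) (hitT M a τ n ω) → M u ω < a := by
    intro u ⟨hu1, hu2⟩
    by_contra hc
    have humem : u ∈ {s | s ∈ Set.Icc (τ ω) n ∧ a ≤ M s ω} :=
      ⟨⟨hu1.le, hu2.le.trans h2⟩, not_lt.mp hc⟩
    have : hitT M a τ n ω ≤ u := by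
      rw [hitT, if_pos (hit_iff'.mp h)]
      exact csInf_le (OrderBot.bddBelow _) humem
    exact absurd hu2 (not_lt.mpr this)
  -- limit from the left
  haveI : (nhdsWithin (hitT M a τ n ω) (Set.Iio (hitT M a τ n ω))).NeBot :=
    nhdsWithin_Iio_self_neBot' ⟨τ ω, hτlt⟩
  have htendsto : Tendsto (fun u => M u ω)
      (nhdsWithin (hitT M a τ n ω) (Set.Iio (hitT M a τ n ω))) (nhds (M (hitT M a τ n ω) ω)) :=
    ((hMcont ω).tendsto _).mono_left nhdsWithin_le_nhds
  refine le_of_tendsto htendsto ?_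
  filter_upwards [Ioo_mem_nhdsLT_of_mem ⟨hτlt, le_rfl⟩] with u hu
  exact (hbefore u hu).le

end Hitting2

lemma integral_M_eq_one (hMmart : Martingale M ℱ P) (hM0 : ∀ᵐ ω ∂P, M 0 ω = 1) (t : ℝ≥0) :
    ∫ ω, M t ω ∂P = 1 := by
  have hce : P[M t | ℱ 0] =ᵐ[P] M 0 := hMmart.condExp_ae_eq (zero_le (a := t))
  have h1 : ∫ ω, M t ω ∂P = ∫ ω, (P[M t | ℱ 0]) ω ∂P := (integral_condExp (ℱ.le 0)).symm
  rw [h1, integral_congr_ae hce, integral_congr_ae hM0]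
  simp

lemma integrable_stoppedValue_finite (hMmart : Martingale M ℱ P)
    (hMcont : ∀ ω, Continuous fun t => M t ω) (hMnonneg : ∀ t ω, 0 ≤ M t ω)
    (hM0 : ∀ᵐ ω ∂P, M 0 ω = 1)
    {τ : Ω → ℝ≥0} (hτ : IsStoppingTime ℱ (fun ω => (τ ω : WithTop ℝ≥0))) :
    Integrable (stoppedValue M (fun ω => (τ ω : WithTop ℝ≥0))) P := by
  have hprog : ProgMeasurable ℱ M := hMmart.stronglyAdapted.progMeasurable_of_continuous hMcont
  have hmeasτ : AEStronglyMeasurable (stoppedValue M (fun ω => (τ ω : WithTop ℝ≥0))) P :=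
    ((measurable_stoppedValue hprog hτ).mono hτ.measurableSpace_le le_rfl
      ).stronglyMeasurable.aestronglyMeasurable
  set f : ℕ → Ω → ℝ := fun n => stoppedValue M (fun ω => ((min (τ ω) (n : ℝ≥0) : ℝ≥0) : WithTop ℝ≥0)) with hf
  have hint : ∀ n : ℕ, Integrable (f n) P := fun n =>
    (os_main hMmart hMcont (minc hτ _) (fun ω => min_le_right _ _)).1
  have hintegral : ∀ n : ℕ, ∫ ω, f n ω ∂P = 1 := by
    intro n
    have h2 := (os_main hMmart hMcont (minc hτ (n:ℝ≥0))
      (fun ω => min_le_right _ _)).2 Set.univ MeasurableSet.univ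
    simp only [Measure.restrict_univ] at h2
    show ∫ ω, stoppedValue M (fun ω => ((min (τ ω) (n : ℝ≥0) : ℝ≥0) : WithTop ℝ≥0)) ω ∂P = 1
    rw [h2, integral_M_eq_one hMmart hM0]
  have hmeasn : ∀ n : ℕ, AEStronglyMeasurable (f n) P := fun n =>
    ((measurable_stoppedValue hprog (minc hτ _)).mono
      (minc hτ _).measurableSpace_le le_rfl).stronglyMeasurable.aestronglyMeasurable
  have hnorm : ∀ n : ℕ, eLpNorm (f n) 1 P = 1 := by
    intro n
    rw [eLpNorm_one_eq_lintegral_enorm]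
    have hnn : 0 ≤ᵐ[P] f n := ae_of_all P (fun ω => hMnonneg _ ω)
    have := (ofReal_integral_eq_lintegral_ofReal (hint n) hnn).symm
    calc ∫⁻ ω, ‖f n ω‖ₑ ∂P = ∫⁻ ω, ENNReal.ofReal (f n ω) ∂P :=
          lintegral_congr fun ω => Real.enorm_eq_ofReal (hMnonneg _ ω)
    _ = ENNReal.ofReal (∫ ω, f n ω ∂P) := this
    _ = 1 := by rw [hintegral n]; simp
  have htendsto : ∀ ω, Tendsto (fun n : ℕ => f n ω) atTop (nhds (stoppedValue M (fun ω => (τ ω : WithTop ℝ≥0)) ω)) := by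
    intro ω
    refine tendsto_atTop_of_eventually_const (i₀ := ⌈(τ ω)⌉₊) fun n hn => ?_
    have : τ ω ≤ (n : ℝ≥0) := (Nat.le_ceil _).trans (by exact_mod_cast Nat.cast_le.mpr hn)
    simp only [f, stoppedValue, WithTop.untopD_coe, min_eq_left this]
  have hbound : eLpNorm (stoppedValue M (fun ω => (τ ω : WithTop ℝ≥0))) 1 P ≤ 1 := by
    refine le_trans (MeasureTheory.Lp.eLpNorm_lim_le_liminf_eLpNorm hmeasn _
      (ae_of_all P htendsto)) ?_
    refine Filter.liminf_le_of_frequently_le (Filter.Frequently.of_forall fun n => ?_)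
      (by isBoundedDefault)
    rw [hnorm n]
  exact memLp_one_iff_integrable.mp ⟨hmeasτ, lt_of_le_of_lt hbound ENNReal.one_lt_top⟩

end DoobAux



open DoobAux

/-- **Doob's maximal identity.** Let `M` be a nonnegative continuous martingale
with `M 0 = 1` a.s. and `M t → 0` a.s. as `t → ∞`. Let `τ` be an (a.s. finite, hence here
finite-valued) stopping time of the filtration `ℱ` and let `a > 0`. Then, almost surely,
`P[sup_{s ∈ [τ, ∞)} M s ≥ a | 𝓕_τ] = min 1 (M τ / a)`. -/
theorem doob_maximal_identity
    {Ω : Type*} {m : MeasurableSpace Ω} {P : Measure Ω} [IsProbabilityMeasure P]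
    (ℱ : Filtration ℝ≥0 m) (M : ℝ≥0 → Ω → ℝ)
    (hMmart : Martingale M ℱ P)
    (hMnonneg : ∀ t ω, 0 ≤ M t ω)
    (hMcont : ∀ ω, Continuous fun t => M t ω)
    (hM0 : ∀ᵐ ω ∂P, M 0 ω = 1)
    (hMlim : ∀ᵐ ω ∂P, Tendsto (fun t => M t ω) atTop (nhds (0 : ℝ)))
    (τ : Ω → ℝ≥0) (hτ : IsStoppingTime ℱ (fun ω => (τ ω : WithTop ℝ≥0))) (a : ℝ) (ha : 0 < a) :
    P[Set.indicator {ω | a ≤ ⨆ s, M (max (τ ω) s) ω} (fun _ => (1 : ℝ)) |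
        hτ.measurableSpace]
      =ᵐ[P] fun ω => min 1 (M (τ ω) ω / a) := by
  classical
  have hprog : ProgMeasurable ℱ M := hMmart.stronglyAdapted.progMeasurable_of_continuous hMcont
  set g : Ω → ℝ := fun ω => min 1 (M (τ ω) ω / a) with hg_def
  set U : Set Ω := ⋃ n : ℕ, hitSet M a τ (n : ℝ≥0) with hU_def
  have hHitMeas : ∀ n : ℕ, MeasurableSet (hitSet M a τ (n : ℝ≥0)) := fun n =>
    (ℱ.le _) _ (hit_measurableSet M hMmart.stronglyAdapted hMcont hτ ha (n : ℝ≥0))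
  have hUmeas : MeasurableSet U := MeasurableSet.iUnion hHitMeas
  have hHitMono : Monotone (fun n : ℕ => hitSet M a τ (n : ℝ≥0)) := by
    intro i j hij ω hω
    obtain ⟨s, hs, hMs⟩ := hit_iff'.mp hω
    exact hit_iff'.mpr ⟨s, ⟨hs.1, hs.2.trans (by exact_mod_cast Nat.cast_le.mpr hij)⟩, hMs⟩
  -- a.e. identification of the sup event with U
  have hae : ∀ᵐ ω ∂P, (a ≤ ⨆ s, M (max (τ ω) s) ω ↔ ω ∈ U) := by
    filter_upwards [hMlim] with ω hlim
    obtain ⟨T₁, hT₁⟩ := eventually_atTop.mp (hlim.eventually_lt_const one_pos)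
    obtain ⟨s₁, hs₁K, hs₁max⟩ := isCompact_Icc.exists_isMaxOn
      (Set.nonempty_Icc.mpr (zero_le (a := T₁))) ((hMcont ω).continuousOn)
    have hbdd : BddAbove (Set.range fun s => M s ω) := by
      refine ⟨max (M s₁ ω) 1, ?_⟩
      rintro x ⟨s, rfl⟩
      rcases le_or_gt s T₁ with h | h
      · exact le_max_of_le_left (hs₁max ⟨zero_le, h⟩)
      · exact le_max_of_le_right (hT₁ s h.le).le
    have hsub : (Set.range fun s => M (max (τ ω) s) ω) ⊆ Set.range fun s => M s ω := by
      rintro x ⟨s, rfl⟩; exact ⟨max (τ ω) s, rfl⟩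
    have hbdd' : BddAbove (Set.range fun s => M (max (τ ω) s) ω) := hbdd.mono hsub
    constructor
    · intro hS
      by_contra hnotU
      have hall : ∀ t, τ ω ≤ t → M t ω < a := by
        intro t ht
        by_contra hc
        refine hnotU (Set.mem_iUnion.mpr ⟨⌈t⌉₊, ?_⟩)
        exact hit_iff'.mpr ⟨t, ⟨ht, Nat.le_ceil t⟩, not_lt.mp hc⟩
      obtain ⟨T₂, hT₂⟩ := eventually_atTop.mp (hlim.eventually_lt_const (by linarith : (0:ℝ) < a/2))
      obtain ⟨s₂, hs₂K, hs₂max⟩ := isCompact_Icc.exists_isMaxOn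
        (Set.nonempty_Icc.mpr (le_max_left (τ ω) T₂)) ((hMcont ω).continuousOn)
      have hub : ∀ s, M (max (τ ω) s) ω ≤ max (M s₂ ω) (a / 2) := by
        intro s
        rcases le_or_gt (max (τ ω) s) (max (τ ω) T₂) with h | h
        · exact le_max_of_le_left (hs₂max ⟨le_max_left _ _, h⟩)
        · refine le_max_of_le_right (hT₂ _ ?_).le
          exact (le_max_right (τ ω) T₂).trans h.le
      have hlt : (⨆ s, M (max (τ ω) s) ω) < a :=
        lt_of_le_of_lt (ciSup_le hub) (max_lt (hall s₂ hs₂K.1) (by linarith))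
      exact absurd hS (not_le.mpr hlt)
    · intro hUmem
      obtain ⟨n, hn⟩ := Set.mem_iUnion.mp hUmem
      obtain ⟨t, ⟨ht1, _⟩, hMt⟩ := hit_iff'.mp hn
      refine le_trans hMt ?_
      have h := le_ciSup hbdd' t
      rwa [max_eq_right ht1] at h
  set F : Ω → ℝ := Set.indicator {ω | a ≤ ⨆ s, M (max (τ ω) s) ω} (fun _ => (1:ℝ)) with hF_def
  have haeind : F =ᵐ[P] Set.indicator U (fun _ => (1:ℝ)) := by
    filter_upwards [hae] with ω hω
    by_cases h : ω ∈ U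
    · have h1 : ω ∈ {ω | a ≤ ⨆ s, M (max (τ ω) s) ω} := hω.mpr h
      simp only [hF_def, Set.indicator_apply, if_pos h1, if_pos h]
    · have h1 : ω ∉ {ω | a ≤ ⨆ s, M (max (τ ω) s) ω} := fun hc => h (hω.mp hc)
      simp only [hF_def, Set.indicator_apply, if_neg h1, if_neg h]
  have hintU : Integrable (Set.indicator U (fun _ => (1:ℝ))) P :=
    (integrable_const (1:ℝ)).indicator hUmeas
  have hF_int : Integrable F P := hintU.congr haeind.symm
  have hMτmeas : Measurable[hτ.measurableSpace] (stoppedValue M (fun ω => (τ ω : WithTop ℝ≥0))) :=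
    measurable_stoppedValue hprog hτ
  have hgmeas' : Measurable[hτ.measurableSpace] g := by
    have hge : g = fun ω => min 1 (stoppedValue M (fun ω => (τ ω : WithTop ℝ≥0)) ω / a) := rfl
    rw [hge]
    exact measurable_const.min (hMτmeas.div_const a)
  have hgm : AEStronglyMeasurable[hτ.measurableSpace] g P :=
    hgmeas'.stronglyMeasurable.aestronglyMeasurable
  have hg_le : ∀ ω, g ω ≤ 1 := fun ω => min_le_left _ _
  have hg_nonneg : ∀ ω, 0 ≤ g ω := fun ω =>
    le_min one_pos.le (div_nonneg (hMnonneg _ ω) ha.le)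
  have hg_int : Integrable g P := by
    refine Integrable.mono' (integrable_const (1:ℝ))
      ((hgmeas'.mono hτ.measurableSpace_le le_rfl).stronglyMeasurable.aestronglyMeasurable)
      (ae_of_all P fun ω => ?_)
    rw [Real.norm_eq_abs, abs_le]
    exact ⟨by linarith [hg_nonneg ω], hg_le ω⟩
  have hintτ : Integrable (stoppedValue M (fun ω => (τ ω : WithTop ℝ≥0))) P :=
    integrable_stoppedValue_finite hMmart hMcont hMnonneg hM0 hτ
  -- F-integral over any m-measurable set
  have hFint_eq : ∀ B' : Set Ω, MeasurableSet B' →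
      ∫ ω in B', F ω ∂P = (P (B' ∩ U)).toReal := by
    intro B' hB'm
    rw [setIntegral_congr_ae hB'm (haeind.mono fun ω hω _ => hω),
      setIntegral_indicator hUmeas, setIntegral_const]
    simp [measureReal_def]
  -- key martingale computation
  have key : ∀ B' : Set Ω, MeasurableSet[hτ.measurableSpace] B' →
      B' ⊆ {ω | M (τ ω) ω < a} →
      ∫ ω in B', stoppedValue M (fun ω => (τ ω : WithTop ℝ≥0)) ω ∂P = (P (B' ∩ U)).toReal * a := by
    intro B' hB' hB'sub
    have hB'm : MeasurableSet B' := hτ.measurableSpace_le _ hB'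
    set Bn : ℕ → Set Ω := fun n => B' ∩ {ω | τ ω ≤ (n : ℝ≥0)} with hBn_def
    have hBn_Fn : ∀ n : ℕ, MeasurableSet[ℱ (n : ℝ≥0)] (Bn n) := fun n =>
      by simpa only [WithTop.coe_le_coe] using ((hτ.measurableSet B').mp hB').2 (n : ℝ≥0)
    have hBn_m : ∀ n : ℕ, MeasurableSet (Bn n) := fun n => (ℱ.le _) _ (hBn_Fn n)
    have hBn_τms : ∀ n : ℕ, MeasurableSet[hτ.measurableSpace] (Bn n) := fun n =>
      hB'.inter (mset_le'_coe hτ _)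
    have hBn_min : ∀ n : ℕ,
        MeasurableSet[(minc hτ (n : ℝ≥0)).measurableSpace] (Bn n) := fun n => by
        rw [msp_congr (minc hτ (n : ℝ≥0)) (hτ.min_const (n : ℝ≥0))
          (funext fun ω => WithTop.coe_min _ _)]
        exact (hτ.measurableSet_min_const_iff (Bn n)).mpr ⟨hBn_τms n, hBn_Fn n⟩
    have hBn_mono : Monotone Bn := by
      intro i j hij ω hω
      exact ⟨hω.1, le_trans hω.2 (Nat.cast_le.mpr hij : (i : ℝ≥0) ≤ (j : ℝ≥0))⟩
    have hBn_union : (⋃ n : ℕ, Bn n) = B' := by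
      ext ω
      simp only [Set.mem_iUnion, hBn_def, Set.mem_inter_iff, Set.mem_setOf_eq]
      constructor
      · rintro ⟨n, h, _⟩; exact h
      · intro h; exact ⟨⌈τ ω⌉₊, h, Nat.le_ceil _⟩
    -- per-n identity
    have keyN : ∀ n : ℕ, ∫ ω in Bn n, stoppedValue M (fun ω => (τ ω : WithTop ℝ≥0)) ω ∂P =
        (P (Bn n ∩ hitSet M a τ (n : ℝ≥0))).toReal * a
          + ∫ ω in Bn n \ hitSet M a τ (n : ℝ≥0), M (n : ℝ≥0) ω ∂P := by
      intro n
      set σn : Ω → ℝ≥0 := hitT M a τ (n : ℝ≥0) with hσn_def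
      have hσst : IsStoppingTime ℱ (fun ω => (σn ω : WithTop ℝ≥0)) :=
        hitT_isStoppingTime hMmart.stronglyAdapted hMcont hτ ha (n : ℝ≥0)
      have hminσ : ∀ ω, min (τ ω) (n : ℝ≥0) ≤ σn ω := min_le_hitT hMcont
      have hBn_σ : MeasurableSet[hσst.measurableSpace] (Bn n) :=
        (minc hτ _).measurableSpace_mono hσst (fun ω => WithTop.coe_le_coe.mpr (hminσ ω)) _ (hBn_min n)
      obtain ⟨hσ_int, hσ_eq⟩ := os_main hMmart hMcont hσst (hitT_le hMcont)
      obtain ⟨hmin_int, hmin_eq⟩ := os_main hMmart hMcont (minc hτ (n : ℝ≥0))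
        (fun ω => min_le_right _ _)
      have E1 := hmin_eq (Bn n) (hBn_min n)
      have E2 := hσ_eq (Bn n) hBn_σ
      have E3 : ∫ ω in Bn n, stoppedValue M (fun ω => (τ ω : WithTop ℝ≥0)) ω ∂P
          = ∫ ω in Bn n, stoppedValue M (fun ω => ((min (τ ω) (n : ℝ≥0) : ℝ≥0) : WithTop ℝ≥0)) ω ∂P := by
        refine setIntegral_congr_fun (hBn_m n) (fun ω hω => ?_)
        simp only [stoppedValue, WithTop.untopD_coe]
        rw [min_eq_left hω.2]
      have E4 : ∫ ω in Bn n, stoppedValue M (fun ω => (σn ω : WithTop ℝ≥0)) ω ∂P =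
          (P (Bn n ∩ hitSet M a τ (n : ℝ≥0))).toReal * a
            + ∫ ω in Bn n \ hitSet M a τ (n : ℝ≥0), M (n : ℝ≥0) ω ∂P := by
        have hsplit := integral_inter_add_diff (μ := P) (f := stoppedValue M (fun ω => (σn ω : WithTop ℝ≥0)))
          (s := Bn n) (t := hitSet M a τ (n : ℝ≥0)) (hHitMeas n) hσ_int.integrableOn
        rw [← hsplit]
        congr 1
        · have hEq : ∫ x in Bn n ∩ hitSet M a τ (n : ℝ≥0), stoppedValue M (fun ω => (σn ω : WithTop ℝ≥0)) x ∂P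
              = ∫ x in Bn n ∩ hitSet M a τ (n : ℝ≥0), (fun _ => a) x ∂P :=
            setIntegral_congr_fun (f := stoppedValue M (fun ω => (σn ω : WithTop ℝ≥0))) (g := fun _ => a)
              ((hBn_m n).inter (hHitMeas n))
              (fun ω hω => hitT_val hMcont hω.2 (hB'sub hω.1.1))
          rw [hEq, setIntegral_const]
          simp [mul_comm, measureReal_def]
        · refine setIntegral_congr_fun ((hBn_m n).diff (hHitMeas n)) (fun ω hω => ?_)
          simp only [stoppedValue, WithTop.untopD_coe, hσn_def]
          rw [hitT_eq_of_not_mem hω.2]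
      rw [E3, E1, ← E2, E4]
    -- limits
    have L1 : Tendsto (fun n : ℕ => ∫ ω in Bn n, stoppedValue M (fun ω => (τ ω : WithTop ℝ≥0)) ω ∂P) atTop
        (nhds (∫ ω in B', stoppedValue M (fun ω => (τ ω : WithTop ℝ≥0)) ω ∂P)) := by
      have := tendsto_setIntegral_of_monotone hBn_m hBn_mono
        (by rw [hBn_union]; exact hintτ.integrableOn)
      rwa [hBn_union] at this
    have hU2 : (⋃ n : ℕ, (Bn n ∩ hitSet M a τ (n : ℝ≥0))) = B' ∩ U := by
      ext ω
      simp only [Set.mem_iUnion, Set.mem_inter_iff, hU_def]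
      constructor
      · rintro ⟨n, ⟨h1, _⟩, h3⟩
        exact ⟨h1, ⟨n, h3⟩⟩
      · rintro ⟨h1, h2⟩
        obtain ⟨k, hk⟩ := h2
        refine ⟨max k ⌈τ ω⌉₊, ⟨h1, ?_⟩, hHitMono (le_max_left _ _) hk⟩
        exact (Nat.le_ceil _).trans (by exact_mod_cast Nat.cast_le.mpr (le_max_right k ⌈τ ω⌉₊))
    have L2 : Tendsto (fun n : ℕ => (P (Bn n ∩ hitSet M a τ (n : ℝ≥0))).toReal * a) atTop
        (nhds ((P (B' ∩ U)).toReal * a)) := by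
      have hmono2 : Monotone (fun n : ℕ => Bn n ∩ hitSet M a τ (n : ℝ≥0)) := by
        intro i j hij
        exact Set.inter_subset_inter (hBn_mono hij) (hHitMono hij)
      have htm := tendsto_measure_iUnion_atTop (μ := P) hmono2
      rw [hU2] at htm
      exact ((ENNReal.tendsto_toReal (measure_ne_top P _)).comp htm).mul_const a
    have L3 : Tendsto (fun n : ℕ => ∫ ω in Bn n \ hitSet M a τ (n : ℝ≥0), M (n : ℝ≥0) ω ∂P)
        atTop (nhds 0) := by
      have hrw : ∀ n : ℕ, ∫ ω in Bn n \ hitSet M a τ (n : ℝ≥0), M (n : ℝ≥0) ω ∂P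
          = ∫ ω, Set.indicator (Bn n \ hitSet M a τ (n : ℝ≥0)) (M (n : ℝ≥0)) ω ∂P := by
        intro n
        rw [integral_indicator ((hBn_m n).diff (hHitMeas n))]
      simp_rw [hrw]
      have h0 : (0 : ℝ) = ∫ ω, (0 : ℝ) ∂P := by simp
      rw [h0]
      refine tendsto_integral_of_dominated_convergence (fun _ => a) ?_ (integrable_const a) ?_ ?_
      · intro n
        exact (((hMmart.stronglyAdapted (n : ℝ≥0)).mono (ℱ.le _)).indicator
          ((hBn_m n).diff (hHitMeas n))).aestronglyMeasurable
      · intro n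
        refine ae_of_all P (fun ω => ?_)
        by_cases hω : ω ∈ Bn n \ hitSet M a τ (n : ℝ≥0)
        · rw [Set.indicator_of_mem hω, Real.norm_eq_abs,
            abs_of_nonneg (hMnonneg _ ω)]
          exact (M_lt_of_not_mem hω.2 hω.1.2).le
        · rw [Set.indicator_of_notMem hω]
          simpa using ha.le
      · filter_upwards [hMlim] with ω hlim
        have hnat : Tendsto (fun n : ℕ => M (n : ℝ≥0) ω) atTop (nhds 0) :=
          hlim.comp (tendsto_natCast_atTop_atTop)
        refine tendsto_of_tendsto_of_tendsto_of_le_of_le tendsto_const_nhds hnat ?_ ?_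
        · intro n
          by_cases hω : ω ∈ Bn n \ hitSet M a τ (n : ℝ≥0)
          · simp only [Set.indicator_of_mem hω]; exact hMnonneg _ ω
          · simp only [Set.indicator_of_notMem hω]; exact le_rfl
        · intro n
          by_cases hω : ω ∈ Bn n \ hitSet M a τ (n : ℝ≥0)
          · simp only [Set.indicator_of_mem hω]; exact le_rfl
          · simp only [Set.indicator_of_notMem hω]; exact hMnonneg _ ω
    have L4 : Tendsto (fun n : ℕ => ∫ ω in Bn n, stoppedValue M (fun ω => (τ ω : WithTop ℝ≥0)) ω ∂P) atTop
        (nhds ((P (B' ∩ U)).toReal * a + 0)) := by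
      simp_rw [keyN]
      exact L2.add L3
    rw [add_zero] at L4
    exact tendsto_nhds_unique L1 L4
  -- conclude via uniqueness of conditional expectation
  refine ((ae_eq_condExp_of_forall_setIntegral_eq hτ.measurableSpace_le hF_int
    (fun s _ _ => hg_int.integrableOn) (fun B hB _ => ?_) hgm)).symm
  have hBm : MeasurableSet B := hτ.measurableSpace_le _ hB
  set D : Set Ω := {ω | stoppedValue M (fun ω => (τ ω : WithTop ℝ≥0)) ω < a} with hD_def
  have hD : MeasurableSet[hτ.measurableSpace] D := measurableSet_lt hMτmeas measurable_const
  have hDm : MeasurableSet D := hτ.measurableSpace_le _ hD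
  have hsplitg : ∫ ω in B ∩ D, g ω ∂P + ∫ ω in B \ D, g ω ∂P = ∫ ω in B, g ω ∂P :=
    integral_inter_add_diff hDm hg_int.integrableOn
  -- B ∩ D part
  have hg1 : ∫ ω in B ∩ D, g ω ∂P = (P ((B ∩ D) ∩ U)).toReal := by
    have heq : ∫ ω in B ∩ D, g ω ∂P = ∫ ω in B ∩ D, stoppedValue M (fun ω => (τ ω : WithTop ℝ≥0)) ω / a ∂P := by
      refine setIntegral_congr_fun (hBm.inter hDm) (fun ω hω => ?_)
      exact min_eq_right ((div_le_one ha).mpr hω.2.le)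
    rw [heq, integral_div, key (B ∩ D) (hB.inter hD) (fun ω hω => hω.2)]
    field_simp
  -- B \ D part
  have hBD_subU : (B \ D) ⊆ U := by
    intro ω hω
    have haM : a ≤ M (τ ω) ω := not_lt.mp hω.2
    exact Set.mem_iUnion.mpr ⟨⌈τ ω⌉₊, hit_iff'.mpr ⟨τ ω, ⟨le_rfl, Nat.le_ceil _⟩, haM⟩⟩
  have hg2 : ∫ ω in B \ D, g ω ∂P = (P ((B \ D) ∩ U)).toReal := by
    have heq : ∫ ω in B \ D, g ω ∂P = ∫ ω in B \ D, (1:ℝ) ∂P := by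
      refine setIntegral_congr_fun (hBm.diff hDm) (fun ω hω => ?_)
      have haM : a ≤ M (τ ω) ω := not_lt.mp hω.2
      exact min_eq_left ((one_le_div ha).mpr haM)
    rw [heq, setIntegral_const, Set.inter_eq_left.mpr hBD_subU]
    simp [measureReal_def]
  -- combine
  rw [hFint_eq B hBm, ← hsplitg, hg1, hg2]
  have hdisj : Disjoint ((B ∩ D) ∩ U) ((B \ D) ∩ U) := by
    refine Set.disjoint_left.mpr (fun ω h1 h2 => ?_)
    exact h2.1.2 h1.1.2
  have hunion : ((B ∩ D) ∩ U) ∪ ((B \ D) ∩ U) = B ∩ U := by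
    rw [← Set.union_inter_distrib_right, Set.inter_union_diff]
  rw [← hunion, measure_union hdisj ((hBm.diff hDm).inter hUmeas),
    ENNReal.toReal_add (measure_ne_top P _) (measure_ne_top P _)]
end

section
/- Let ρ := inf{t ≥ 0 : M_t = M*_∞} be the (a.s. unique and a.s. finite) time at which M attains its overall maximum. Then for every t ≥ 0, almost surely, P[ρ > t | 𝓕_t] = M_t / M*_t. -/
open MeasureTheory Filter Set
open scoped NNReal ENNReal Topology

section Path
variable {f : ℝ≥0 → ℝ}

/-- maximum of a nonneg continuous path on `Icc a b`, and identification of the `biSup`. -/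
lemma path_max (hc : Continuous f) (h0 : ∀ s, 0 ≤ f s) {a b : ℝ≥0} (hab : a ≤ b) :
    ∃ s₀ ∈ Icc a b, (∀ s ∈ Icc a b, f s ≤ f s₀) ∧ (⨆ s ∈ Icc a b, f s) = f s₀ := by
  obtain ⟨s₀, hs₀, hmax⟩ := isCompact_Icc.exists_isMaxOn ⟨a, left_mem_Icc.2 hab⟩
    hc.continuousOn
  have hmax' : ∀ s ∈ Icc a b, f s ≤ f s₀ := fun s hs => hmax hs
  refine ⟨s₀, hs₀, hmax', le_antisymm ?_ ?_⟩
  · refine Real.iSup_le (fun s => Real.iSup_le (fun hs => hmax' s hs) (h0 s₀)) (h0 s₀)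
  · have hbdd : BddAbove (range fun s => ⨆ _ : s ∈ Icc a b, f s) := by
      refine ⟨f s₀, forall_mem_range.2 fun s => ?_⟩
      exact Real.iSup_le (fun hs => hmax' s hs) (h0 s₀)
    have : f s₀ = ⨆ _ : s₀ ∈ Icc a b, f s₀ := (ciSup_pos (f := fun _ => f s₀) hs₀).symm
    rw [this]
    exact le_ciSup hbdd s₀
end Path

noncomputable def ratEquiv : ℚ ≃ ℕ := Classical.choice nonempty_equiv_of_countable

noncomputable def nnseq (n : ℕ) : ℝ≥0 := Real.toNNReal ((ratEquiv.symm n : ℚ) : ℝ)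

lemma nnseq_dense (x : ℝ≥0) {δ : ℝ} (hδ : 0 < δ) :
    ∃ n, x ≤ nnseq n ∧ (nnseq n : ℝ) < (x : ℝ) + δ := by
  obtain ⟨q, hq1, hq2⟩ := exists_rat_btwn (show (x : ℝ) < (x : ℝ) + δ by linarith)
  have hq0 : (0 : ℝ) ≤ (q : ℝ) := le_trans x.coe_nonneg hq1.le
  obtain ⟨n, hn⟩ : ∃ n, ratEquiv.symm n = q := ⟨ratEquiv q, Equiv.symm_apply_apply _ _⟩
  refine ⟨n, ?_, ?_⟩
  · rw [nnseq, hn, ← NNReal.coe_le_coe, Real.coe_toNNReal _ hq0]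
    exact hq1.le
  · rw [nnseq, hn, Real.coe_toNNReal _ hq0]
    exact hq2

section Path
variable {f : ℝ≥0 → ℝ}

lemma path_sup_eq_iSup_seq (hc : Continuous f) (h0 : ∀ s, 0 ≤ f s) {a b : ℝ≥0} (hab : a ≤ b) :
    (⨆ s ∈ Icc a b, f s) = ⨆ n : ℕ, f (min b (max a (nnseq n))) := by
  obtain ⟨s₀, hs₀, hmax, hsup⟩ := path_max hc h0 hab
  rw [hsup]
  have hclamp : ∀ n, min b (max a (nnseq n)) ∈ Icc a b :=
    fun n => ⟨le_min hab (le_max_left _ _), min_le_left _ _⟩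
  have hbdd : BddAbove (range fun n : ℕ => f (min b (max a (nnseq n)))) :=
    ⟨f s₀, forall_mem_range.2 fun n => hmax _ (hclamp n)⟩
  refine le_antisymm ?_ (Real.iSup_le (fun n => hmax _ (hclamp n)) (h0 s₀))
  refine le_of_forall_pos_le_add fun ε hε => ?_
  obtain ⟨δ, hδ, hcont⟩ := Metric.continuousAt_iff.1 (hc.continuousAt (x := s₀))
    ε hε
  obtain ⟨n, hn1, hn2⟩ := nnseq_dense s₀ hδ
  set c := min b (max a (nnseq n)) with hc_def
  have hc1 : s₀ ≤ c := le_min hs₀.2 (le_trans hn1 (le_max_right _ _))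
  have hcle : c ≤ nnseq n := min_le_of_right_le (max_le (le_trans hs₀.1 hn1) le_rfl)
  have hc2 : (c : ℝ) < (s₀ : ℝ) + δ := lt_of_le_of_lt (by exact_mod_cast hcle) hn2
  have hdist : dist c s₀ < δ := by
    rw [NNReal.dist_eq, abs_sub_lt_iff]
    constructor
    · linarith [hc2]
    · have := NNReal.coe_le_coe.2 hc1; linarith
  have := hcont hdist
  rw [Real.dist_eq, abs_sub_lt_iff] at this
  have hfc : f s₀ - ε < f c := by linarith [this.2]
  exact le_trans (le_of_lt (by linarith)) (add_le_add_left (le_ciSup hbdd n) ε)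
end Path

section Meas
variable {Ω : Type*} {m : MeasurableSpace Ω}

lemma stronglyMeasurable_sup_Icc (ℱ : Filtration ℝ≥0 m) {M : ℝ≥0 → Ω → ℝ}
    (hadp : StronglyAdapted ℱ M) (hMcont : ∀ ω, Continuous fun s => M s ω)
    (h0 : ∀ s ω, 0 ≤ M s ω) {a b : ℝ≥0} (hab : a ≤ b) :
    StronglyMeasurable[ℱ b] (fun ω => ⨆ s ∈ Icc a b, M s ω) := by
  have heq : (fun ω => ⨆ s ∈ Icc a b, M s ω)
      = fun ω => ⨆ n : ℕ, M (min b (max a (nnseq n))) ω :=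
    funext fun ω => path_sup_eq_iSup_seq (hMcont ω) (fun s => h0 s ω) hab
  rw [heq]
  refine Measurable.stronglyMeasurable ?_
  refine Measurable.iSup fun n => ?_
  exact ((hadp _).measurable.mono (ℱ.mono (min_le_left _ _)) le_rfl)
end Meas

namespace DoobCore
variable {Ω : Type*}

/-- sup of `M` over `Icc t b`. -/
noncomputable def RSup (M : ℝ≥0 → Ω → ℝ) (t b : ℝ≥0) (ω : Ω) : ℝ := ⨆ s ∈ Icc t b, M s ω

section PathFacts
variable {M : ℝ≥0 → Ω → ℝ}

lemma le_RSup (hMcont : ∀ ω, Continuous fun s => M s ω) (hMnonneg : ∀ s ω, 0 ≤ M s ω) {t b : ℝ≥0} (ω : Ω) {s : ℝ≥0} (hs : s ∈ Icc t b) :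
    M s ω ≤ RSup M t b ω := by
  obtain ⟨s₀, hs₀, hmax, hsup⟩ := path_max (hMcont ω) (fun u => hMnonneg u ω) (hs.1.trans hs.2)
  rw [RSup, hsup]; exact hmax s hs

lemma RSup_nonneg (hMcont : ∀ ω, Continuous fun s => M s ω) (hMnonneg : ∀ s ω, 0 ≤ M s ω) {t b : ℝ≥0} (hb : t ≤ b) (ω : Ω) : 0 ≤ RSup M t b ω :=
  le_trans (hMnonneg t ω) (le_RSup hMcont hMnonneg ω (left_mem_Icc.2 hb))

lemma RSup_mono (hMcont : ∀ ω, Continuous fun s => M s ω) (hMnonneg : ∀ s ω, 0 ≤ M s ω) {t b b' : ℝ≥0} (hb : t ≤ b) (hbb' : b ≤ b') (ω : Ω) :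
    RSup M t b ω ≤ RSup M t b' ω := by
  obtain ⟨s₀, hs₀, hmax, hsup⟩ := path_max (hMcont ω) (fun u => hMnonneg u ω) hb
  rw [RSup, hsup]
  exact le_RSup hMcont hMnonneg ω ⟨hs₀.1, hs₀.2.trans hbb'⟩

/-- there is a point of `Icc t b` realizing `RSup`. -/
lemma RSup_attained (hMcont : ∀ ω, Continuous fun s => M s ω) (hMnonneg : ∀ s ω, 0 ≤ M s ω) {t b : ℝ≥0} (hb : t ≤ b) (ω : Ω) :
    ∃ s₀ ∈ Icc t b, RSup M t b ω = M s₀ ω := by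
  obtain ⟨s₀, hs₀, _, hsup⟩ := path_max (hMcont ω) (fun u => hMnonneg u ω) hb
  exact ⟨s₀, hs₀, hsup⟩
end PathFacts

/-- grid points -/
noncomputable def gridPt (t : ℝ≥0) (m' j : ℕ) : ℝ≥0 := t + (j : ℝ≥0) * ((2 : ℝ≥0) ^ m')⁻¹

lemma gridPt_mono (t : ℝ≥0) (m' : ℕ) : Monotone (gridPt t m') := fun i j hij =>
  add_le_add_right (mul_le_mul_left (by exact_mod_cast hij) _) t

lemma gridPt_zero (t : ℝ≥0) (m' : ℕ) : gridPt t m' 0 = t := by simp [gridPt]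

lemma t_le_gridPt (t : ℝ≥0) (m' j : ℕ) : t ≤ gridPt t m' j := le_self_add

lemma gridPt_N (t : ℝ≥0) (k m' : ℕ) : gridPt t m' (k * 2 ^ m') = t + (k : ℝ≥0) := by
  have h2 : ((2 : ℝ≥0) ^ m') ≠ 0 := by positivity
  rw [gridPt]
  congr 1
  push_cast
  rw [mul_assoc, mul_inv_cancel₀ h2, mul_one]

noncomputable def jstar (M : ℝ≥0 → Ω → ℝ) (ξ : Ω → ℝ) (t : ℝ≥0) (k m' : ℕ) (ω : Ω) : ℕ :=
  sInf {j | k * 2 ^ m' ≤ j ∨ ξ ω ≤ RSup M t (gridPt t m' j) ω}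

noncomputable def tau (M : ℝ≥0 → Ω → ℝ) (ξ : Ω → ℝ) (t : ℝ≥0) (k m' : ℕ) (ω : Ω) : ℝ≥0 :=
  gridPt t m' (jstar M ξ t k m' ω)

section Jstar
variable {M : ℝ≥0 → Ω → ℝ} {ξ : Ω → ℝ} {t : ℝ≥0} {k m' : ℕ} {ω : Ω}

lemma jstar_mem : k * 2 ^ m' ≤ jstar M ξ t k m' ω ∨
    ξ ω ≤ RSup M t (gridPt t m' (jstar M ξ t k m' ω)) ω :=
  Nat.sInf_mem (⟨k * 2 ^ m', Or.inl le_rfl⟩ :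
    {j | k * 2 ^ m' ≤ j ∨ ξ ω ≤ RSup M t (gridPt t m' j) ω}.Nonempty)

lemma jstar_le_N : jstar M ξ t k m' ω ≤ k * 2 ^ m' := Nat.sInf_le (Or.inl le_rfl)

lemma jstar_le_of_mem {j : ℕ} (hj : k * 2 ^ m' ≤ j ∨ ξ ω ≤ RSup M t (gridPt t m' j) ω) :
    jstar M ξ t k m' ω ≤ j := Nat.sInf_le hj

lemma tau_le_T : tau M ξ t k m' ω ≤ t + (k : ℝ≥0) := by
  rw [tau, ← gridPt_N t k m']
  exact gridPt_mono t m' jstar_le_N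

lemma t_le_tau : t ≤ tau M ξ t k m' ω := t_le_gridPt _ _ _

end Jstar
end DoobCore

namespace DoobCore
section ST
variable {Ω : Type*} {m : MeasurableSpace Ω} (ℱ : Filtration ℝ≥0 m) {M : ℝ≥0 → Ω → ℝ}
  {ξ : Ω → ℝ} {t : ℝ≥0} {k : ℕ}

lemma tau_isStoppingTime (hadp : StronglyAdapted ℱ M) (hMcont : ∀ ω, Continuous fun s => M s ω)
    (hMnonneg : ∀ s ω, 0 ≤ M s ω) (hξ : StronglyMeasurable[ℱ t] ξ) (m' : ℕ) :
    IsStoppingTime ℱ (fun ω => ((tau M ξ t k m' ω : ℝ≥0) : WithTop ℝ≥0)) := by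
  intro u
  simp only [WithTop.coe_le_coe]
  have hset : {ω | tau M ξ t k m' ω ≤ u} = ⋃ j : ℕ,
      {ω | gridPt t m' j ≤ u ∧ (k * 2 ^ m' ≤ j ∨ ξ ω ≤ RSup M t (gridPt t m' j) ω)} := by
    ext ω
    simp only [mem_setOf_eq, mem_iUnion]
    constructor
    · intro h; exact ⟨jstar M ξ t k m' ω, h, jstar_mem⟩
    · rintro ⟨j, hju, hj⟩; exact le_trans (gridPt_mono t m' (jstar_le_of_mem hj)) hju
  rw [hset]
  refine MeasurableSet.iUnion fun j => ?_
  by_cases hgu : gridPt t m' j ≤ u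
  · by_cases hNj : k * 2 ^ m' ≤ j
    · have heq : {ω : Ω | gridPt t m' j ≤ u ∧
          (k * 2 ^ m' ≤ j ∨ ξ ω ≤ RSup M t (gridPt t m' j) ω)} = univ :=
        eq_univ_of_forall fun ω => ⟨hgu, Or.inl hNj⟩
      rw [heq]; exact @MeasurableSet.univ _ (ℱ u)
    · have heq : {ω : Ω | gridPt t m' j ≤ u ∧
          (k * 2 ^ m' ≤ j ∨ ξ ω ≤ RSup M t (gridPt t m' j) ω)}
          = {ω | ξ ω ≤ RSup M t (gridPt t m' j) ω} := by
        ext ω; simp [hgu, hNj]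
      rw [heq]
      have hR : Measurable[ℱ (gridPt t m' j)] (RSup M t (gridPt t m' j)) :=
        (stronglyMeasurable_sup_Icc ℱ hadp hMcont hMnonneg (t_le_gridPt t m' j)).measurable
      have hR' : Measurable[ℱ u] (RSup M t (gridPt t m' j)) := hR.mono (ℱ.mono hgu) le_rfl
      have hξu : Measurable[ℱ u] ξ :=
        hξ.measurable.mono (ℱ.mono (le_trans (t_le_gridPt t m' j) hgu)) le_rfl
      have hpre : {ω : Ω | ξ ω ≤ RSup M t (gridPt t m' j) ω}
          = (fun ω => RSup M t (gridPt t m' j) ω - ξ ω) ⁻¹' (Ici 0) := by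
        ext ω; simp [sub_nonneg]
      rw [hpre]
      have hsub : Measurable[ℱ u] (fun ω => RSup M t (gridPt t m' j) ω - ξ ω) := hR'.sub hξu
      exact hsub measurableSet_Ici
  · have heq : {ω : Ω | gridPt t m' j ≤ u ∧
        (k * 2 ^ m' ≤ j ∨ ξ ω ≤ RSup M t (gridPt t m' j) ω)} = ∅ := by
      ext ω; simp [hgu]
    rw [heq]; exact @MeasurableSet.empty _ (ℱ u)

lemma tau_countable_range (m' : ℕ) : (Set.range (tau M ξ t k m')).Countable := by
  refine (countable_range (gridPt t m')).mono ?_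
  rintro _ ⟨ω, rfl⟩
  exact ⟨jstar M ξ t k m' ω, rfl⟩
end ST

section Conv
variable {Ω : Type*} {M : ℝ≥0 → Ω → ℝ} {ξ : Ω → ℝ} {t : ℝ≥0} {k : ℕ}

lemma tendsto_stoppedValue_tau (hMcont : ∀ ω, Continuous fun s => M s ω)
    (hMnonneg : ∀ s ω, 0 ≤ M s ω) (hξge : ∀ ω, M t ω ≤ ξ ω) (ω : Ω) :
    Tendsto (fun m' => M (tau M ξ t k m' ω) ω) atTop
      (𝓝 (if ξ ω ≤ RSup M t (t + (k : ℝ≥0)) ω then ξ ω else M (t + (k : ℝ≥0)) ω)) := by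
  set T := t + (k : ℝ≥0) with hT
  have hTt : t ≤ T := le_self_add
  by_cases hH : ξ ω ≤ RSup M t T ω
  · rw [if_pos hH]
    set S := {s : ℝ≥0 | s ∈ Icc t T ∧ ξ ω ≤ M s ω} with hSdef
    obtain ⟨s₀, hs₀, hsup⟩ := RSup_attained hMcont hMnonneg hTt ω
    have hSne : S.Nonempty := ⟨s₀, hs₀, by rw [← hsup]; exact hH⟩
    have hSclosed : IsClosed S := by
      have h : S = Icc t T ∩ {s | ξ ω ≤ M s ω} := rfl
      rw [h]; exact isClosed_Icc.inter (isClosed_le continuous_const (hMcont ω))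
    set σ := sInf S with hσdef
    have hσS : σ ∈ S := hSclosed.csInf_mem hSne (OrderBot.bddBelow S)
    have hMσ_ge : ξ ω ≤ M σ ω := hσS.2
    have htσ : t ≤ σ := hσS.1.1
    have hσT : σ ≤ T := hσS.1.2
    have hMσ_le : M σ ω ≤ ξ ω := by
      rcases eq_or_lt_of_le htσ with heq | hlt
      · rw [← heq]; exact hξge ω
      · have hclos : σ ∈ closure (Ico t σ) := by
          rw [closure_Ico (ne_of_lt hlt)]; exact right_mem_Icc.2 htσ
        have hnb : (𝓝[Ico t σ] σ).NeBot := mem_closure_iff_nhdsWithin_neBot.1 hclos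
        have htd : Tendsto (fun s => M s ω) (𝓝[Ico t σ] σ) (𝓝 (M σ ω)) :=
          ((hMcont ω).tendsto σ).mono_left nhdsWithin_le_nhds
        refine le_of_tendsto htd (eventually_nhdsWithin_of_forall fun s hs => ?_)
        by_contra hcon
        push_neg at hcon
        have hsS : s ∈ S := ⟨⟨hs.1, le_trans hs.2.le hσT⟩, hcon.le⟩
        exact absurd (csInf_le (OrderBot.bddBelow S) hsS) (not_le.2 hs.2)
    have hMσ : M σ ω = ξ ω := le_antisymm hMσ_le hMσ_ge
    have hlow : ∀ m', σ ≤ tau M ξ t k m' ω := by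
      intro m'
      rcases jstar_mem (M := M) (ξ := ξ) (t := t) (k := k) (m' := m') (ω := ω) with hN | hξR
      · have h : tau M ξ t k m' ω = T := by
          rw [tau, le_antisymm jstar_le_N hN, gridPt_N]
        rw [h]; exact hσT
      · obtain ⟨s₁, hs₁, hsup₁⟩ := RSup_attained hMcont hMnonneg
          (t_le_gridPt t m' (jstar M ξ t k m' ω)) ω
        have hξs₁ : ξ ω ≤ M s₁ ω := by rw [← hsup₁]; exact hξR
        have hs₁S : s₁ ∈ S := ⟨⟨hs₁.1, le_trans hs₁.2 tau_le_T⟩, hξs₁⟩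
        exact le_trans (csInf_le (OrderBot.bddBelow S) hs₁S) hs₁.2
    have hup : ∀ m', tau M ξ t k m' ω ≤ σ + ((2 : ℝ≥0) ^ m')⁻¹ := by
      intro m'
      have h2 : ((2 : ℝ≥0) ^ m') ≠ 0 := by positivity
      set j₁ := ⌈(σ - t) * (2 : ℝ≥0) ^ m'⌉₊ with hj₁def
      have hσk : σ - t ≤ (k : ℝ≥0) := tsub_le_iff_right.2 (by rw [add_comm]; exact hσT)
      have hj₁N : j₁ ≤ k * 2 ^ m' := by
        refine Nat.ceil_le.2 ?_
        push_cast
        exact mul_le_mul_left hσk _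
      have hσ_le_g : σ ≤ gridPt t m' j₁ := by
        have h1 : (σ - t) * (2 : ℝ≥0) ^ m' ≤ (j₁ : ℝ≥0) := Nat.le_ceil _
        have h3 : σ - t ≤ (j₁ : ℝ≥0) * ((2 : ℝ≥0) ^ m')⁻¹ := by
          calc σ - t = (σ - t) * (2 : ℝ≥0) ^ m' * ((2 : ℝ≥0) ^ m')⁻¹ := by
                rw [mul_assoc, mul_inv_cancel₀ h2, mul_one]
            _ ≤ (j₁ : ℝ≥0) * ((2 : ℝ≥0) ^ m')⁻¹ := mul_le_mul_left h1 _
        calc σ = t + (σ - t) := (add_tsub_cancel_of_le htσ).symm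
          _ ≤ t + (j₁ : ℝ≥0) * ((2 : ℝ≥0) ^ m')⁻¹ := add_le_add_right h3 t
          _ = gridPt t m' j₁ := rfl
      have hg_le : gridPt t m' j₁ ≤ σ + ((2 : ℝ≥0) ^ m')⁻¹ := by
        have h1 : (j₁ : ℝ≥0) ≤ (σ - t) * (2 : ℝ≥0) ^ m' + 1 :=
          (Nat.ceil_lt_add_one zero_le).le
        calc gridPt t m' j₁ = t + (j₁ : ℝ≥0) * ((2 : ℝ≥0) ^ m')⁻¹ := rfl
          _ ≤ t + ((σ - t) * (2 : ℝ≥0) ^ m' + 1) * ((2 : ℝ≥0) ^ m')⁻¹ :=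
              add_le_add_right (mul_le_mul_left h1 _) t
          _ = t + ((σ - t) + ((2 : ℝ≥0) ^ m')⁻¹) := by
              rw [add_mul, mul_assoc, mul_inv_cancel₀ h2, mul_one, one_mul]
          _ = σ + ((2 : ℝ≥0) ^ m')⁻¹ := by rw [← add_assoc, add_tsub_cancel_of_le htσ]
      have hmem : ξ ω ≤ RSup M t (gridPt t m' j₁) ω := by
        rw [← hMσ]
        exact le_RSup hMcont hMnonneg ω ⟨htσ, hσ_le_g⟩
      exact le_trans (gridPt_mono t m' (jstar_le_of_mem (Or.inr hmem))) hg_le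
    have htend : Tendsto (fun m' => tau M ξ t k m' ω) atTop (𝓝 σ) := by
      have h0 : Tendsto (fun m' : ℕ => ((2 : ℝ≥0) ^ m')⁻¹) atTop (𝓝 0) := by
        simp_rw [← inv_pow]
        refine NNReal.tendsto_pow_atTop_nhds_zero_of_lt_one ?_
        rw [← NNReal.coe_lt_coe]
        norm_num
      have h2 : Tendsto (fun m' => σ + ((2 : ℝ≥0) ^ m')⁻¹) atTop (𝓝 σ) := by
        simpa using tendsto_const_nhds.add h0
      exact tendsto_of_tendsto_of_tendsto_of_le_of_le tendsto_const_nhds h2 hlow hup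
    have hfin := ((hMcont ω).tendsto σ).comp htend
    rw [hMσ] at hfin
    exact hfin
  · rw [if_neg hH]
    have hconst : ∀ m', tau M ξ t k m' ω = T := by
      intro m'
      rcases jstar_mem (M := M) (ξ := ξ) (t := t) (k := k) (m' := m') (ω := ω) with hN | hξR
      · rw [tau, le_antisymm jstar_le_N hN, gridPt_N]
      · exact absurd (le_trans hξR (RSup_mono hMcont hMnonneg
          (t_le_gridPt t m' (jstar M ξ t k m' ω)) tau_le_T ω)) hH
    have h : (fun m' => M (tau M ξ t k m' ω) ω) = fun _ => M T ω :=
      funext fun m' => by rw [hconst m']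
    rw [h]
    exact tendsto_const_nhds
end Conv
end DoobCore

namespace DoobCore
section CoreIntegral
variable {Ω : Type*} {m : MeasurableSpace Ω} {P : Measure Ω} [IsProbabilityMeasure P]
  {ℱ : Filtration ℝ≥0 m} {M : ℝ≥0 → Ω → ℝ} {ξ : Ω → ℝ} {t : ℝ≥0} {k : ℕ}

lemma setIntegral_stopped (hMmart : Martingale M ℱ P)
    (hMcont : ∀ ω, Continuous fun s => M s ω) (hMnonneg : ∀ s ω, 0 ≤ M s ω)
    (hξ : StronglyMeasurable[ℱ t] ξ) (hξge : ∀ ω, M t ω ≤ ξ ω) (hξint : Integrable ξ P)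
    {B : Set Ω} (hB : MeasurableSet[ℱ t] B) :
    ∫ ω in B, (if ξ ω ≤ RSup M t (t + (k : ℝ≥0)) ω then ξ ω else M (t + (k : ℝ≥0)) ω) ∂P
      = ∫ ω in B, M t ω ∂P := by
  set T := t + (k : ℝ≥0) with hTdef
  have hTt : t ≤ T := le_self_add
  set V : Ω → ℝ := fun ω => if ξ ω ≤ RSup M t T ω then ξ ω else M T ω with hVdef
  set sv : ℕ → Ω → ℝ := fun m' => stoppedValue M (fun ω => ((tau M ξ t k m' ω : ℝ≥0) : WithTop ℝ≥0)) with hsvdef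
  have hsts : ∀ m', IsStoppingTime ℱ (fun ω => ((tau M ξ t k m' ω : ℝ≥0) : WithTop ℝ≥0)) :=
    fun m' => tau_isStoppingTime ℱ hMmart.stronglyAdapted hMcont hMnonneg hξ m'
  have hτle : ∀ m' (ω : Ω), ((tau M ξ t k m' ω : ℝ≥0) : WithTop ℝ≥0) ≤ T := fun m' ω =>
    WithTop.coe_le_coe.2 tau_le_T
  have hBm : MeasurableSet B := ℱ.le t _ hB
  -- optional sampling at each discretized stopping time
  have h1 : ∀ m', sv m' =ᵐ[P] P[M T | ((hsts m').measurableSpace)] := fun m' =>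
    hMmart.stoppedValue_ae_eq_condExp_of_le_const_of_countable_range (hsts m') (hτle m')
      (((tau_countable_range (M := M) (ξ := ξ) (t := t) (k := k) m').image
        ((↑) : ℝ≥0 → WithTop ℝ≥0)).mono (by rintro _ ⟨ω, rfl⟩; exact ⟨_, ⟨ω, rfl⟩, rfl⟩))
  have hFt_le : ∀ m', ℱ t ≤ (hsts m').measurableSpace := by
    intro m'
    rw [← IsStoppingTime.measurableSpace_const ℱ t]
    exact IsStoppingTime.measurableSpace_mono _ (hsts m') (fun ω => WithTop.coe_le_coe.2 t_le_tau)
  have hint_sv : ∀ m', Integrable (sv m') P := fun m' =>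
    integrable_condExp.congr (h1 m').symm
  have hMTint : Integrable (M T) P := hMmart.integrable T
  -- the basic identity at stage m'
  have hconst : ∀ m', ∫ ω in B, sv m' ω ∂P = ∫ ω in B, M t ω ∂P := by
    intro m'
    have hBσ : MeasurableSet[(hsts m').measurableSpace] B := hFt_le m' _ hB
    calc ∫ ω in B, sv m' ω ∂P
        = ∫ ω in B, (P[M T | (hsts m').measurableSpace]) ω ∂P :=
          integral_congr_ae (ae_restrict_of_ae (h1 m'))
      _ = ∫ ω in B, M T ω ∂P :=
          setIntegral_condExp ((hsts m').measurableSpace_le_of_le (hτle m')) hMTint hBσ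
      _ = ∫ ω in B, (P[M T | ℱ t]) ω ∂P :=
          (setIntegral_condExp (ℱ.le t) hMTint hB).symm
      _ = ∫ ω in B, M t ω ∂P :=
          integral_congr_ae (ae_restrict_of_ae (hMmart.condExp_ae_eq hTt))
  -- properties of sv and V
  have hsv0 : ∀ m' ω, 0 ≤ sv m' ω := fun m' ω => hMnonneg _ ω
  have hV0 : ∀ ω, 0 ≤ V ω := by
    intro ω; rw [hVdef]
    dsimp only
    split_ifs
    · exact le_trans (hMnonneg t ω) (hξge ω)
    · exact hMnonneg T ω
  have hVleξ : ∀ ω, V ω ≤ ξ ω := by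
    intro ω; rw [hVdef]
    dsimp only
    split_ifs with h
    · exact le_rfl
    · exact le_trans (le_RSup hMcont hMnonneg ω (right_mem_Icc.2 hTt)) (le_of_not_ge h)
  have hξmm : Measurable ξ := hξ.measurable.mono (ℱ.le t) le_rfl
  have hRTm : Measurable (RSup M t T) :=
    ((stronglyMeasurable_sup_Icc ℱ hMmart.stronglyAdapted hMcont hMnonneg hTt).measurable).mono
      (ℱ.le T) le_rfl
  have hMTm : Measurable (M T) := ((hMmart.stronglyAdapted T).measurable).mono (ℱ.le T) le_rfl
  have hVmeas : Measurable V := Measurable.ite (measurableSet_le hξmm hRTm) hξmm hMTm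
  have hVint : Integrable V P := by
    refine hξint.mono' hVmeas.aestronglyMeasurable (ae_of_all _ fun ω => ?_)
    rw [Real.norm_eq_abs, abs_of_nonneg (hV0 ω)]
    exact hVleξ ω
  set C : ℝ := ∫ ω, M T ω ∂P with hCdef
  have hC0 : 0 ≤ C := integral_nonneg fun ω => hMnonneg T ω
  -- tail of M T
  have htail_MT : Tendsto (fun K : ℕ => ∫ ω, max (M T ω - K) 0 ∂P) atTop (𝓝 0) := by
    have h := tendsto_integral_of_dominated_convergence (F := fun (K : ℕ) ω => max (M T ω - K) 0)
      (f := fun _ => (0 : ℝ)) (bound := fun ω => M T ω)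
      (fun K => ((hMTm.sub measurable_const).max measurable_const).aestronglyMeasurable)
      hMTint
      (fun K => ae_of_all _ fun ω => by
        rw [Real.norm_eq_abs, abs_of_nonneg (le_max_right _ _)]
        exact max_le (by linarith [Nat.cast_nonneg (α := ℝ) K, hMnonneg T ω]) (hMnonneg T ω))
      (ae_of_all _ fun ω => by
        refine tendsto_atTop_of_eventually_const (i₀ := ⌈M T ω⌉₊) fun K hK => ?_
        have : M T ω - K ≤ 0 := by
          have := Nat.ceil_le.1 hK
          linarith [Nat.le_ceil (M T ω), (Nat.cast_le (α := ℝ)).2 hK]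
        exact max_eq_right this)
    simpa using h
  -- tail of V
  have htail_V : Tendsto (fun K : ℕ => ∫ ω, max (V ω - K) 0 ∂P) atTop (𝓝 0) := by
    have h := tendsto_integral_of_dominated_convergence (F := fun (K : ℕ) ω => max (V ω - K) 0)
      (f := fun _ => (0 : ℝ)) (bound := fun ω => ξ ω)
      (fun K => ((hVmeas.sub measurable_const).max measurable_const).aestronglyMeasurable)
      hξint
      (fun K => ae_of_all _ fun ω => by
        rw [Real.norm_eq_abs, abs_of_nonneg (le_max_right _ _)]
        refine max_le (le_trans ?_ (hVleξ ω)) (le_trans (hV0 ω) (hVleξ ω))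
        have : (0:ℝ) ≤ K := Nat.cast_nonneg K
        linarith)
      (ae_of_all _ fun ω => by
        refine tendsto_atTop_of_eventually_const (i₀ := ⌈V ω⌉₊) fun K hK => ?_
        have : V ω - K ≤ 0 := by
          linarith [Nat.le_ceil (V ω), (Nat.cast_le (α := ℝ)).2 hK]
        exact max_eq_right this)
    simpa using h
  have hunif : ∀ (K K' : ℝ), 0 < K → 0 ≤ K' → ∀ m',
      ∫ ω, max (sv m' ω - K) 0 ∂P ≤ K' * C / K + ∫ ω, max (M T ω - K') 0 ∂P := by
    intro K K' hK hK' m'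
    have hσa_le : (hsts m').measurableSpace ≤ m := (hsts m').measurableSpace_le_of_le (hτle m')
    have hEint : Integrable (P[M T | (hsts m').measurableSpace]) P := integrable_condExp
    have hE0 : 0 ≤ᵐ[P] (P[M T | (hsts m').measurableSpace]) :=
      condExp_nonneg (ae_of_all _ fun ω => hMnonneg T ω)
    have hEsm : StronglyMeasurable[(hsts m').measurableSpace]
        (P[M T | (hsts m').measurableSpace]) := stronglyMeasurable_condExp
    have hSσ : MeasurableSet[(hsts m').measurableSpace]
        ((P[M T | (hsts m').measurableSpace]) ⁻¹' (Ioi K)) := hEsm.measurable measurableSet_Ioi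
    set S : Set Ω := (P[M T | (hsts m').measurableSpace]) ⁻¹' (Ioi K) with hSdef
    have hSm : MeasurableSet S := hσa_le _ hSσ
    have step1 : ∫ ω, max (sv m' ω - K) 0 ∂P
        = ∫ ω, max ((P[M T | (hsts m').measurableSpace]) ω - K) 0 ∂P :=
      integral_congr_ae ((h1 m').mono fun ω h => by simp only [h])
    have hmax_int : Integrable (fun ω => max ((P[M T | (hsts m').measurableSpace]) ω - K) 0) P :=
      (hEint.sub (integrable_const K)).pos_part
    have hind_int : Integrable (S.indicator (P[M T | (hsts m').measurableSpace])) P :=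
      hEint.indicator hSm
    have step2 : ∫ ω, max ((P[M T | (hsts m').measurableSpace]) ω - K) 0 ∂P
        ≤ ∫ ω in S, (P[M T | (hsts m').measurableSpace]) ω ∂P := by
      rw [← integral_indicator hSm]
      refine integral_mono_ae hmax_int hind_int (hE0.mono fun ω hω => ?_)
      by_cases hωS : ω ∈ S
      · rw [indicator_of_mem hωS]
        exact max_le (by linarith [hK.le]) hω
      · rw [indicator_of_notMem hωS]
        have hEK : (P[M T | (hsts m').measurableSpace]) ω ≤ K := by
          by_contra hcon
          exact hωS (by simpa [hSdef] using lt_of_not_ge hcon)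
        exact max_le (by linarith) le_rfl
    have step3 : ∫ ω in S, (P[M T | (hsts m').measurableSpace]) ω ∂P = ∫ ω in S, M T ω ∂P :=
      setIntegral_condExp hσa_le hMTint hSσ
    have hposint : Integrable (fun ω => max (M T ω - K') 0) P :=
      (hMTint.sub (integrable_const K')).pos_part
    have step4 : ∫ ω in S, M T ω ∂P ≤ K' * (P S).toReal + ∫ ω, max (M T ω - K') 0 ∂P := by
      have hpt : ∀ ω, M T ω ≤ K' + max (M T ω - K') 0 := by
        intro ω
        rcases le_total (M T ω) K' with h | h
        · linarith [le_max_right (M T ω - K') (0:ℝ)]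
        · rw [max_eq_left (by linarith)]; linarith
      have h2 : ∫ ω in S, M T ω ∂P ≤ ∫ ω in S, (K' + max (M T ω - K') 0) ∂P :=
        integral_mono_ae hMTint.integrableOn
          ((integrable_const K').add hposint).integrableOn (ae_of_all _ hpt)
      have h3 : ∫ ω in S, (K' + max (M T ω - K') 0) ∂P
          = K' * (P S).toReal + ∫ ω in S, max (M T ω - K') 0 ∂P := by
        rw [integral_add (integrable_const K').integrableOn hposint.integrableOn,
          setIntegral_const]
        simp [mul_comm]
        exact Or.inl rfl
      have h4 : ∫ ω in S, max (M T ω - K') 0 ∂P ≤ ∫ ω, max (M T ω - K') 0 ∂P :=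
        setIntegral_le_integral hposint (ae_of_all _ fun ω => le_max_right _ _)
      calc ∫ ω in S, M T ω ∂P ≤ K' * (P S).toReal + ∫ ω in S, max (M T ω - K') 0 ∂P := by
            rw [← h3]; exact h2
        _ ≤ K' * (P S).toReal + ∫ ω, max (M T ω - K') 0 ∂P := by linarith
    have step5 : (P S).toReal ≤ C / K := by
      have hmarkov := mul_meas_ge_le_integral_of_nonneg hE0 hEint K
      have hsub : S ⊆ {ω | K ≤ (P[M T | (hsts m').measurableSpace]) ω} := fun ω hω =>
        show K ≤ _ from le_of_lt hω
      have hmono : (P S).toReal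
          ≤ (P {ω | K ≤ (P[M T | (hsts m').measurableSpace]) ω}).toReal :=
        ENNReal.toReal_mono (measure_ne_top P _) (measure_mono hsub)
      have hint_eq : ∫ ω, (P[M T | (hsts m').measurableSpace]) ω ∂P = C :=
        integral_condExp hσa_le
      rw [le_div_iff₀ hK, mul_comm]
      calc K * (P S).toReal
          ≤ K * (P {ω | K ≤ (P[M T | (hsts m').measurableSpace]) ω}).toReal :=
            mul_le_mul_of_nonneg_left hmono hK.le
        _ ≤ ∫ ω, (P[M T | (hsts m').measurableSpace]) ω ∂P := hmarkov
        _ = C := hint_eq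
    calc ∫ ω, max (sv m' ω - K) 0 ∂P
        = ∫ ω, max ((P[M T | (hsts m').measurableSpace]) ω - K) 0 ∂P := step1
      _ ≤ ∫ ω in S, (P[M T | (hsts m').measurableSpace]) ω ∂P := step2
      _ = ∫ ω in S, M T ω ∂P := step3
      _ ≤ K' * (P S).toReal + ∫ ω, max (M T ω - K') 0 ∂P := step4
      _ ≤ K' * (C / K) + ∫ ω, max (M T ω - K') 0 ∂P := by
          have := mul_le_mul_of_nonneg_left step5 hK'
          linarith
      _ = K' * C / K + ∫ ω, max (M T ω - K') 0 ∂P := by rw [mul_div_assoc]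
  -- pointwise convergence
  have hconv : ∀ ω, Tendsto (fun m' => sv m' ω) atTop (𝓝 (V ω)) := fun ω =>
    tendsto_stoppedValue_tau hMcont hMnonneg hξge ω
  -- truncated convergence of set integrals
  have hminlim : ∀ K : ℝ, 0 < K →
      Tendsto (fun m' => ∫ ω in B, min (sv m' ω) K ∂P) atTop
        (𝓝 (∫ ω in B, min (V ω) K ∂P)) := by
    intro K hK
    refine tendsto_integral_of_dominated_convergence (bound := fun _ => K)
      (fun m' => (continuous_id.min continuous_const).comp_aestronglyMeasurable
        ((hint_sv m').aestronglyMeasurable.restrict)) (integrable_const K) ?_ ?_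
    · intro m'
      refine ae_of_all _ fun ω => ?_
      rw [Real.norm_eq_abs, abs_of_nonneg (le_min (hsv0 m' ω) hK.le)]
      exact min_le_right _ _
    · exact ae_of_all _ fun ω => (hconv ω).min tendsto_const_nhds
  -- decomposition of an integral at level K
  have hdecomp : ∀ (f : Ω → ℝ), Integrable f P → ∀ K : ℝ,
      ∫ ω in B, f ω ∂P
        = (∫ ω in B, min (f ω) K ∂P) + ∫ ω in B, max (f ω - K) 0 ∂P := by
    intro f hf K
    have h1 : ∀ ω, f ω = min (f ω) K + max (f ω - K) 0 := by
      intro ω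
      rcases le_total (f ω) K with h | h
      · rw [min_eq_left h, max_eq_right (by linarith)]; ring
      · rw [min_eq_right h, max_eq_left (by linarith)]; ring
    calc ∫ ω in B, f ω ∂P = ∫ ω in B, (min (f ω) K + max (f ω - K) 0) ∂P :=
          integral_congr_ae (ae_of_all _ fun ω => h1 ω)
      _ = (∫ ω in B, min (f ω) K ∂P) + ∫ ω in B, max (f ω - K) 0 ∂P :=
          integral_add ((hf.inf (integrable_const K)).integrableOn)
            ((hf.sub (integrable_const K)).pos_part.integrableOn)
  -- the ε-argument
  have key : ∀ ε : ℝ, 0 < ε → |(∫ ω in B, M t ω ∂P) - ∫ ω in B, V ω ∂P| ≤ ε := by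
    intro ε hε
    have hε6 : 0 < ε / 6 := by linarith
    have hε3 : 0 < ε / 3 := by linarith
    obtain ⟨K', hK'spec⟩ : ∃ K' : ℕ, ∫ ω, max (M T ω - K') 0 ∂P ≤ ε / 6 := by
      obtain ⟨N, hN⟩ := (Metric.tendsto_atTop.1 htail_MT) (ε / 6) hε6
      refine ⟨N, ?_⟩
      have := hN N le_rfl
      rw [Real.dist_eq, sub_zero] at this
      exact le_trans (le_abs_self _) this.le
    obtain ⟨K₂, hK₂spec⟩ : ∃ K₂ : ℕ, ∫ ω, max (V ω - K₂) 0 ∂P ≤ ε / 3 := by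
      obtain ⟨N, hN⟩ := (Metric.tendsto_atTop.1 htail_V) (ε / 3) hε3
      refine ⟨N, ?_⟩
      have := hN N le_rfl
      rw [Real.dist_eq, sub_zero] at this
      exact le_trans (le_abs_self _) this.le
    set Kr : ℝ := max (max 1 ((K' : ℝ) * C * 6 / ε + 1)) (K₂ : ℝ) with hKrdef
    have hKr0 : 0 < Kr :=
      lt_of_lt_of_le one_pos (le_trans (le_max_left _ _) (le_max_left _ _))
    have hsvtail : ∀ m', ∫ ω, max (sv m' ω - Kr) 0 ∂P ≤ ε / 3 := by
      intro m'
      refine le_trans (hunif Kr K' hKr0 (Nat.cast_nonneg K') m') ?_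
      have h1 : (K' : ℝ) * C / Kr ≤ ε / 6 := by
        have hKrge : (K' : ℝ) * C * 6 / ε ≤ Kr := by
          refine le_trans (by linarith) (le_trans (le_max_right 1 _) (le_max_left _ _))
        rw [div_le_iff₀ hKr0]
        have h2 : ε / 6 * ((K' : ℝ) * C * 6 / ε) = (K' : ℝ) * C := by
          field_simp
        nlinarith [mul_le_mul_of_nonneg_left hKrge (le_of_lt hε6)]
      linarith
    have hVtail : ∫ ω, max (V ω - Kr) 0 ∂P ≤ ε / 3 := by
      refine le_trans ?_ hK₂spec
      refine integral_mono_ae ((hVint.sub (integrable_const Kr)).pos_part)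
        ((hVint.sub (integrable_const (K₂ : ℝ))).pos_part) (ae_of_all _ fun ω => ?_)
      have : (K₂ : ℝ) ≤ Kr := le_max_right _ _
      exact max_le_max (by linarith) le_rfl
    obtain ⟨m₀, hm₀⟩ := (Metric.tendsto_atTop.1 (hminlim Kr hKr0)) (ε / 3) hε3
    have hdist := hm₀ m₀ le_rfl
    rw [Real.dist_eq] at hdist
    have e1 : ∫ ω in B, M t ω ∂P
        = (∫ ω in B, min (sv m₀ ω) Kr ∂P) + ∫ ω in B, max (sv m₀ ω - Kr) 0 ∂P := by
      rw [← hconst m₀]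
      exact hdecomp _ (hint_sv m₀) Kr
    have e2 : ∫ ω in B, V ω ∂P
        = (∫ ω in B, min (V ω) Kr ∂P) + ∫ ω in B, max (V ω - Kr) 0 ∂P :=
      hdecomp _ hVint Kr
    have hb1 : 0 ≤ ∫ ω in B, max (sv m₀ ω - Kr) 0 ∂P :=
      integral_nonneg fun ω => le_max_right _ _
    have hb2 : ∫ ω in B, max (sv m₀ ω - Kr) 0 ∂P ≤ ε / 3 :=
      le_trans (setIntegral_le_integral ((hint_sv m₀).sub (integrable_const Kr)).pos_part
        (ae_of_all _ fun ω => le_max_right _ _)) (hsvtail m₀)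
    have hb3 : 0 ≤ ∫ ω in B, max (V ω - Kr) 0 ∂P :=
      integral_nonneg fun ω => le_max_right _ _
    have hb4 : ∫ ω in B, max (V ω - Kr) 0 ∂P ≤ ε / 3 :=
      le_trans (setIntegral_le_integral (hVint.sub (integrable_const Kr)).pos_part
        (ae_of_all _ fun ω => le_max_right _ _)) hVtail
    have habs := abs_lt.1 hdist
    rw [e1, e2]
    rw [abs_le]
    constructor <;> linarith [habs.1, habs.2]
  have hzero : |(∫ ω in B, M t ω ∂P) - ∫ ω in B, V ω ∂P| ≤ 0 := by
    refine le_of_forall_pos_le_add fun ε hε => ?_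
    simpa using key ε hε
  have := abs_nonpos_iff.1 hzero
  linarith [this]
end CoreIntegral
end DoobCore

namespace DoobCore
section CondExp
variable {Ω : Type*} {m : MeasurableSpace Ω} {P : Measure Ω} [IsProbabilityMeasure P]
  {ℱ : Filtration ℝ≥0 m} {M : ℝ≥0 → Ω → ℝ} {ξ : Ω → ℝ} {t : ℝ≥0}

lemma condexp_indicator_hit (hMmart : Martingale M ℱ P)
    (hMcont : ∀ ω, Continuous fun s => M s ω) (hMnonneg : ∀ s ω, 0 ≤ M s ω)
    (hMlim : ∀ᵐ ω ∂P, Tendsto (fun s => M s ω) atTop (𝓝 (0 : ℝ)))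
    (hξ : StronglyMeasurable[ℱ t] ξ) (hξge : ∀ ω, M t ω ≤ ξ ω) (hξint : Integrable ξ P)
    (hξpos : ∀ᵐ ω ∂P, 0 < ξ ω) :
    P[Set.indicator {ω | ∃ s, t ≤ s ∧ ξ ω ≤ M s ω} (fun _ => (1 : ℝ)) | ℱ t]
      =ᵐ[P] fun ω => M t ω / ξ ω := by
  set H : Set Ω := {ω | ∃ s, t ≤ s ∧ ξ ω ≤ M s ω} with hHdef
  have hξmm : Measurable ξ := hξ.measurable.mono (ℱ.le t) le_rfl
  have hRk : ∀ k : ℕ, Measurable (RSup M t (t + (k : ℝ≥0))) := fun k =>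
    ((stronglyMeasurable_sup_Icc ℱ hMmart.stronglyAdapted hMcont hMnonneg
      (le_self_add : t ≤ t + (k : ℝ≥0))).measurable).mono (ℱ.le _) le_rfl
  -- H as countable union
  have hHunion : H = ⋃ k : ℕ, {ω | ξ ω ≤ RSup M t (t + (k : ℝ≥0)) ω} := by
    ext ω
    simp only [hHdef, mem_setOf_eq, mem_iUnion]
    constructor
    · rintro ⟨s, hts, hs⟩
      refine ⟨⌈(s : ℝ≥0∞).toReal⌉₊, ?_⟩
      have hsk : s ≤ t + (⌈(s : ℝ≥0∞).toReal⌉₊ : ℝ≥0) := by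
        have h1 : s ≤ (⌈(s : ℝ≥0∞).toReal⌉₊ : ℝ≥0) := by
          rw [← NNReal.coe_le_coe]
          simpa using Nat.le_ceil (s : ℝ)
        exact le_trans h1 le_add_self
      exact le_trans hs (le_RSup hMcont hMnonneg ω ⟨hts, hsk⟩)
    · rintro ⟨k, hk⟩
      obtain ⟨s₁, hs₁, hsup⟩ := RSup_attained hMcont hMnonneg (le_self_add : t ≤ t + (k : ℝ≥0)) ω
      exact ⟨s₁, hs₁.1, by rw [← hsup]; exact hk⟩
  have hHm : MeasurableSet H := by
    rw [hHunion]
    exact MeasurableSet.iUnion fun k => measurableSet_le hξmm (hRk k)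
  have hHk_mono : ∀ (k k' : ℕ), k ≤ k' → ∀ ω, ξ ω ≤ RSup M t (t + (k : ℝ≥0)) ω →
      ξ ω ≤ RSup M t (t + (k' : ℝ≥0)) ω := fun k k' hkk' ω h =>
    le_trans h (RSup_mono hMcont hMnonneg le_self_add
      (add_le_add_right (by exact_mod_cast hkk') t) ω)
  -- V k
  set V : ℕ → Ω → ℝ := fun k ω =>
    if ξ ω ≤ RSup M t (t + (k : ℝ≥0)) ω then ξ ω else M (t + (k : ℝ≥0)) ω with hVdef
  have hV0 : ∀ k ω, 0 ≤ V k ω := by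
    intro k ω; rw [hVdef]; dsimp only
    split_ifs
    · exact le_trans (hMnonneg t ω) (hξge ω)
    · exact hMnonneg _ ω
  have hVleξ : ∀ k ω, V k ω ≤ ξ ω := by
    intro k ω; rw [hVdef]; dsimp only
    split_ifs with h
    · exact le_rfl
    · exact le_trans (le_RSup hMcont hMnonneg ω (right_mem_Icc.2 le_self_add))
        (le_of_not_ge h)
  have hVmeas : ∀ k, Measurable (V k) := fun k =>
    Measurable.ite (measurableSet_le hξmm (hRk k)) hξmm
      (((hMmart.stronglyAdapted _).measurable).mono (ℱ.le _) le_rfl)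
  -- a.e. convergence of V k to the indicator
  have hVconv : ∀ᵐ ω ∂P, Tendsto (fun k => V k ω) atTop (𝓝 (H.indicator ξ ω)) := by
    filter_upwards [hMlim] with ω hω
    by_cases hωH : ω ∈ H
    · rw [indicator_of_mem hωH]
      rw [hHunion] at hωH
      obtain ⟨k₀, hk₀⟩ := mem_iUnion.1 hωH
      refine tendsto_atTop_of_eventually_const (i₀ := k₀) fun k hk => ?_
      rw [hVdef]; dsimp only
      rw [if_pos (hHk_mono k₀ k hk ω hk₀)]
    · rw [indicator_of_notMem hωH]
      have hnot : ∀ k : ℕ, ¬ (ξ ω ≤ RSup M t (t + (k : ℝ≥0)) ω) := by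
        intro k hk
        exact hωH (by rw [hHunion]; exact mem_iUnion.2 ⟨k, hk⟩)
      have heq : (fun k : ℕ => V k ω) = fun k : ℕ => M (t + (k : ℝ≥0)) ω := by
        funext k; rw [hVdef]; dsimp only; rw [if_neg (hnot k)]
      rw [heq]
      have htt : Tendsto (fun k : ℕ => t + (k : ℝ≥0)) atTop atTop := by
        refine tendsto_atTop_mono (fun k => le_add_self) ?_
        exact tendsto_natCast_atTop_atTop
      exact hω.comp htt
  -- set integral identity for the indicator limit
  have hind_int : Integrable (H.indicator ξ) P := hξint.indicator hHm
  have hsetint : ∀ B : Set Ω, MeasurableSet[ℱ t] B →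
      ∫ ω in B, H.indicator ξ ω ∂P = ∫ ω in B, M t ω ∂P := by
    intro B hB
    have hlim : Tendsto (fun k => ∫ ω in B, V k ω ∂P) atTop
        (𝓝 (∫ ω in B, H.indicator ξ ω ∂P)) := by
      refine tendsto_integral_of_dominated_convergence (bound := ξ)
        (fun k => (hVmeas k).aestronglyMeasurable.restrict) hξint.restrict ?_
        (ae_restrict_of_ae hVconv)
      intro k
      refine ae_of_all _ fun ω => ?_
      rw [Real.norm_eq_abs, abs_of_nonneg (hV0 k ω)]
      exact hVleξ k ω
    have hconst : ∀ k : ℕ, ∫ ω in B, V k ω ∂P = ∫ ω in B, M t ω ∂P := fun k =>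
      setIntegral_stopped hMmart hMcont hMnonneg hξ hξge hξint hB
    rw [show (fun k => ∫ ω in B, V k ω ∂P) = fun _ => ∫ ω in B, M t ω ∂P from
      funext hconst] at hlim
    exact tendsto_nhds_unique hlim tendsto_const_nhds
  -- conditional expectation identity
  have hcond : M t =ᵐ[P] P[H.indicator ξ | ℱ t] := by
    refine ae_eq_condExp_of_forall_setIntegral_eq (ℱ.le t) hind_int
      (fun s _ _ => (hMmart.integrable t).integrableOn)
      (fun s hs _ => ?_) ?_
    · exact (hsetint s hs).symm
    · exact StronglyMeasurable.aestronglyMeasurable (hMmart.stronglyAdapted t)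
  -- pull out ξ
  have hprod : H.indicator ξ = fun ω => ξ ω * H.indicator (fun _ => (1 : ℝ)) ω := by
    funext ω
    by_cases hωH : ω ∈ H
    · rw [indicator_of_mem hωH, indicator_of_mem hωH, mul_one]
    · rw [indicator_of_notMem hωH, indicator_of_notMem hωH, mul_zero]
  have hind1_int : Integrable (H.indicator (fun _ => (1 : ℝ))) P :=
    (integrable_const (1 : ℝ)).indicator hHm
  have hpull : P[(fun ω => ξ ω * H.indicator (fun _ => (1 : ℝ)) ω) | ℱ t]
      =ᵐ[P] fun ω => ξ ω * (P[H.indicator (fun _ => (1 : ℝ)) | ℱ t]) ω := by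
    have := condExp_mul_of_stronglyMeasurable_left (μ := P) (m := ℱ t) hξ
      (by rw [show (ξ * H.indicator fun _ => (1:ℝ)) = fun ω => ξ ω * H.indicator (fun _ => (1:ℝ)) ω from rfl, ← hprod]; exact hind_int)
      hind1_int
    exact this
  have hmul : (fun ω => ξ ω * (P[H.indicator (fun _ => (1 : ℝ)) | ℱ t]) ω) =ᵐ[P] M t := by
    refine EventuallyEq.trans (EventuallyEq.symm hpull) ?_
    calc P[(fun ω => ξ ω * H.indicator (fun _ => (1 : ℝ)) ω) | ℱ t]
        =ᵐ[P] P[H.indicator ξ | ℱ t] := by rw [← hprod]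
      _ =ᵐ[P] M t := hcond.symm
  filter_upwards [hmul, hξpos] with ω h1 h2
  rw [eq_div_iff (ne_of_gt h2), mul_comm]
  exact h1
end CondExp
end DoobCore

/-- pointwise identification of `{t < ρ}` for a nice path. -/
lemma rho_gt_iff {f : ℝ≥0 → ℝ} (hc : Continuous f) (h0 : ∀ s, 0 ≤ f s) (hf0 : f 0 = 1)
    (hlim : Tendsto f atTop (𝓝 (0 : ℝ))) (t : ℝ≥0) :
    t < sInf {u | f u = ⨆ v, f v} ↔ ∃ s, t ≤ s ∧ (⨆ s' ∈ Icc 0 t, f s') < f s := by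
  obtain ⟨V, hV⟩ := (Metric.tendsto_atTop (β := ℝ≥0)).1 hlim 1 one_pos
  have hVlt : ∀ v, V ≤ v → f v < 1 := by
    intro v hv
    have := hV v hv
    rw [Real.dist_eq, sub_zero, abs_of_nonneg (h0 v)] at this
    exact this
  obtain ⟨s₀, hs₀, hmax, hsup⟩ := path_max hc h0 (show (0:ℝ≥0) ≤ V from zero_le)
  have hfs₀1 : 1 ≤ f s₀ := hf0 ▸ hmax 0 ⟨le_rfl, zero_le⟩
  have hbdd : BddAbove (range f) := by
    refine ⟨f s₀, forall_mem_range.2 fun v => ?_⟩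
    rcases le_total v V with h | h
    · exact hmax v ⟨zero_le, h⟩
    · exact le_trans (hVlt v h).le hfs₀1
  have hfA : ∀ v, f v ≤ ⨆ v', f v' := fun v => le_ciSup hbdd v
  have hattain : f s₀ = ⨆ v, f v := by
    refine le_antisymm (hfA s₀) ?_
    refine Real.iSup_le (fun v => ?_) (h0 s₀)
    rcases le_total v V with h | h
    · exact hmax v ⟨zero_le, h⟩
    · exact le_trans (hVlt v h).le hfs₀1
  set A := ⨆ v, f v with hAdef
  set S := {u : ℝ≥0 | f u = A} with hSdef
  have hSne : S.Nonempty := ⟨s₀, hattain⟩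
  have hSclosed : IsClosed S := isClosed_eq hc continuous_const
  have hρmem : sInf S ∈ S := hSclosed.csInf_mem hSne (OrderBot.bddBelow _)
  obtain ⟨s₂, hs₂, hmax₂, hsup₂⟩ := path_max hc h0 (show (0:ℝ≥0) ≤ t from zero_le)
  constructor
  · intro hlt
    refine ⟨sInf S, hlt.le, ?_⟩
    have hfinf : f (sInf S) = A := hρmem
    rw [hsup₂, hfinf]
    rcases lt_or_ge (f s₂) A with h | h
    · exact h
    · exfalso
      have hs₂S : s₂ ∈ S := le_antisymm (hfA s₂) h
      exact absurd (le_trans (csInf_le (OrderBot.bddBelow _) hs₂S) hs₂.2) (not_le.2 hlt)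
  · rintro ⟨s, hts, hBs⟩
    rw [hsup₂] at hBs
    rcases lt_or_ge t (sInf S) with h | h
    · exact h
    · exfalso
      have : f (sInf S) ≤ f s₂ := hmax₂ _ ⟨zero_le, h⟩
      have h2 : f (sInf S) = A := hρmem
      have h3 : f s ≤ A := hfA s
      linarith

namespace DoobCore
section Hit
variable {Ω : Type*} {m : MeasurableSpace Ω}

lemma measurableSet_hit (ℱ : Filtration ℝ≥0 m) {M : ℝ≥0 → Ω → ℝ}
    (hadp : StronglyAdapted ℱ M) (hMcont : ∀ ω, Continuous fun s => M s ω)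
    (hMnonneg : ∀ s ω, 0 ≤ M s ω) {ξ : Ω → ℝ} (hξm : Measurable ξ) (t : ℝ≥0) :
    MeasurableSet {ω | ∃ s, t ≤ s ∧ ξ ω ≤ M s ω} := by
  have hRk : ∀ k : ℕ, Measurable (RSup M t (t + (k : ℝ≥0))) := fun k =>
    ((stronglyMeasurable_sup_Icc ℱ hadp hMcont hMnonneg
      (le_self_add : t ≤ t + (k : ℝ≥0))).measurable).mono (ℱ.le _) le_rfl
  have hHunion : {ω : Ω | ∃ s, t ≤ s ∧ ξ ω ≤ M s ω}
      = ⋃ k : ℕ, {ω | ξ ω ≤ RSup M t (t + (k : ℝ≥0)) ω} := by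
    ext ω
    simp only [mem_setOf_eq, mem_iUnion]
    constructor
    · rintro ⟨s, hts, hs⟩
      refine ⟨⌈(s : ℝ)⌉₊, ?_⟩
      have hsk : s ≤ t + (⌈(s : ℝ)⌉₊ : ℝ≥0) := by
        have h1 : s ≤ (⌈(s : ℝ)⌉₊ : ℝ≥0) := by
          rw [← NNReal.coe_le_coe]
          simpa using Nat.le_ceil (s : ℝ)
        exact le_trans h1 le_add_self
      exact le_trans hs (le_RSup hMcont hMnonneg ω ⟨hts, hsk⟩)
    · rintro ⟨k, hk⟩
      obtain ⟨s₁, hs₁, hsup⟩ := RSup_attained hMcont hMnonneg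
        (le_self_add : t ≤ t + (k : ℝ≥0)) ω
      exact ⟨s₁, hs₁.1, by rw [← hsup]; exact hk⟩
  rw [hHunion]
  exact MeasurableSet.iUnion fun k => measurableSet_le hξm (hRk k)

lemma measurableSet_hit_lt (ℱ : Filtration ℝ≥0 m) {M : ℝ≥0 → Ω → ℝ}
    (hadp : StronglyAdapted ℱ M) (hMcont : ∀ ω, Continuous fun s => M s ω)
    (hMnonneg : ∀ s ω, 0 ≤ M s ω) {ξ : Ω → ℝ} (hξm : Measurable ξ) (t : ℝ≥0) :
    MeasurableSet {ω | ∃ s, t ≤ s ∧ ξ ω < M s ω} := by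
  have hRk : ∀ k : ℕ, Measurable (RSup M t (t + (k : ℝ≥0))) := fun k =>
    ((stronglyMeasurable_sup_Icc ℱ hadp hMcont hMnonneg
      (le_self_add : t ≤ t + (k : ℝ≥0))).measurable).mono (ℱ.le _) le_rfl
  have hHunion : {ω : Ω | ∃ s, t ≤ s ∧ ξ ω < M s ω}
      = ⋃ k : ℕ, {ω | ξ ω < RSup M t (t + (k : ℝ≥0)) ω} := by
    ext ω
    simp only [mem_setOf_eq, mem_iUnion]
    constructor
    · rintro ⟨s, hts, hs⟩
      refine ⟨⌈(s : ℝ)⌉₊, ?_⟩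
      have hsk : s ≤ t + (⌈(s : ℝ)⌉₊ : ℝ≥0) := by
        have h1 : s ≤ (⌈(s : ℝ)⌉₊ : ℝ≥0) := by
          rw [← NNReal.coe_le_coe]
          simpa using Nat.le_ceil (s : ℝ)
        exact le_trans h1 le_add_self
      exact lt_of_lt_of_le hs (le_RSup hMcont hMnonneg ω ⟨hts, hsk⟩)
    · rintro ⟨k, hk⟩
      obtain ⟨s₁, hs₁, hsup⟩ := RSup_attained hMcont hMnonneg
        (le_self_add : t ≤ t + (k : ℝ≥0)) ω
      exact ⟨s₁, hs₁.1, by rw [← hsup]; exact hk⟩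
  rw [hHunion]
  exact MeasurableSet.iUnion fun k => measurableSet_lt hξm (hRk k)
end Hit
end DoobCore

open DoobCore

/-- Let `M` be a nonnegative continuous martingale with `M 0 = 1` a.s. and
`M t → 0` a.s. as `t → ∞`, and let `ρ := inf {t | M t = M*_∞}` be the (a.s. unique and a.s.
finite) time of the overall maximum of `M`. Then for every `t ≥ 0`, almost surely,
`P[ρ > t | 𝓕_t] = M t / M*_t`, where `M*_t = sup_{s ∈ [0,t]} M s`. -/
theorem conditional_probability_max_after_t
    {Ω : Type*} {m : MeasurableSpace Ω} {P : Measure Ω} [IsProbabilityMeasure P]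
    (ℱ : Filtration ℝ≥0 m) (M : ℝ≥0 → Ω → ℝ)
    (hMmart : Martingale M ℱ P)
    (hMnonneg : ∀ t ω, 0 ≤ M t ω)
    (hMcont : ∀ ω, Continuous fun t => M t ω)
    (hM0 : ∀ᵐ ω ∂P, M 0 ω = 1)
    (hMlim : ∀ᵐ ω ∂P, Tendsto (fun t => M t ω) atTop (nhds (0 : ℝ)))
    (ρ : Ω → ℝ≥0) (hρ : ∀ ω, ρ ω = sInf {u : ℝ≥0 | M u ω = ⨆ v, M v ω}) :
    ∀ t : ℝ≥0,
      P[Set.indicator {ω | t < ρ ω} (fun _ => (1 : ℝ)) | ℱ t]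
        =ᵐ[P] fun ω => M t ω / (⨆ s ∈ Set.Icc 0 t, M s ω) := by
  intro t
  set Mst : Ω → ℝ := fun ω => ⨆ s ∈ Set.Icc 0 t, M s ω with hMstdef
  have hMst_sm : StronglyMeasurable[ℱ t] Mst :=
    stronglyMeasurable_sup_Icc ℱ hMmart.stronglyAdapted hMcont hMnonneg (show (0:ℝ≥0) ≤ t from zero_le)
  have hMst_m : Measurable Mst := hMst_sm.measurable.mono (ℱ.le t) le_rfl
  have hMs_le : ∀ ω (s : ℝ≥0), s ≤ t → M s ω ≤ Mst ω := by
    intro ω s hst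
    obtain ⟨s₂, hs₂, hmax₂, hsup₂⟩ := path_max (hMcont ω) (fun u => hMnonneg u ω) (show (0:ℝ≥0) ≤ t from zero_le)
    rw [hMstdef]; dsimp only; rw [hsup₂]
    exact hmax₂ s ⟨zero_le, hst⟩
  have hMt_le : ∀ ω, M t ω ≤ Mst ω := fun ω => hMs_le ω t le_rfl
  have hMst1 : ∀ᵐ ω ∂P, 1 ≤ Mst ω := by
    filter_upwards [hM0] with ω h0
    rw [← h0]
    exact hMs_le ω 0 (show (0:ℝ≥0) ≤ t from zero_le)
  -- the comparison event
  set G : Set Ω := {ω | ∃ s, t ≤ s ∧ Mst ω < M s ω} with hGdef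
  have hGm : MeasurableSet G :=
    measurableSet_hit_lt ℱ hMmart.stronglyAdapted hMcont hMnonneg hMst_m t
  have hae_event : ∀ᵐ ω ∂P, ((t < ρ ω) ↔ ω ∈ G) := by
    filter_upwards [hM0, hMlim] with ω h0 hlim
    rw [hρ ω]
    exact rho_gt_iff (hMcont ω) (fun s => hMnonneg s ω) h0 hlim t
  have hf_ae : Set.indicator {ω | t < ρ ω} (fun _ => (1 : ℝ))
      =ᵐ[P] G.indicator (fun _ => (1 : ℝ)) := by
    filter_upwards [hae_event] with ω hiff
    by_cases hωG : ω ∈ G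
    · rw [indicator_of_mem hωG, indicator_of_mem (show ω ∈ {ω | t < ρ ω} from hiff.2 hωG)]
    · rw [indicator_of_notMem hωG,
        indicator_of_notMem (show ω ∉ {ω | t < ρ ω} from fun h => hωG (hiff.1 h))]
  have hf_int : Integrable (Set.indicator {ω | t < ρ ω} (fun _ => (1 : ℝ))) P :=
    ((integrable_const (1 : ℝ)).indicator hGm).congr hf_ae.symm
  -- the candidate conditional expectation
  set g : Ω → ℝ := fun ω => M t ω / Mst ω with hgdef
  have hg_sm : StronglyMeasurable[ℱ t] g := by
    have h1 : Measurable[ℱ t] (M t) := (hMmart.stronglyAdapted t).measurable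
    have h2 : Measurable[ℱ t] Mst := hMst_sm.measurable
    have h3 : Measurable[ℱ t] g := h1.div h2
    exact h3.stronglyMeasurable
  have hg_m : Measurable g := hg_sm.measurable.mono (ℱ.le t) le_rfl
  have hg_bound : ∀ᵐ ω ∂P, ‖g ω‖ ≤ 1 := by
    filter_upwards [hMst1] with ω h1
    have hpos : (0 : ℝ) < Mst ω := lt_of_lt_of_le one_pos h1
    rw [hgdef, Real.norm_eq_abs]
    dsimp only
    rw [abs_of_nonneg (div_nonneg (hMnonneg t ω) hpos.le)]
    rw [div_le_one hpos]
    exact hMt_le ω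
  have hg_int : Integrable g P :=
    (integrable_const (1 : ℝ)).mono' hg_m.aestronglyMeasurable hg_bound
  -- main set-integral identity
  have hmain : ∀ B : Set Ω, MeasurableSet[ℱ t] B →
      ∫ ω in B, g ω ∂P = ∫ ω in B, Set.indicator {ω | t < ρ ω} (fun _ => (1 : ℝ)) ω ∂P := by
    intro B hB
    have hBm : MeasurableSet B := ℱ.le t _ hB
    -- level sequences
    set q : ℕ → ℝ := fun n => 1 + 1 / (n + 1) with hqdef
    have hq1 : ∀ n, 1 ≤ q n := fun n => by
      rw [hqdef]; dsimp only
      have : (0 : ℝ) < (n : ℝ) + 1 := by positivity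
      have := le_of_lt (div_pos one_pos this)
      linarith
    have hq_tendsto : Tendsto q atTop (𝓝 (1 : ℝ)) := by
      have h : Tendsto (fun n : ℕ => 1 / ((n : ℝ) + 1)) atTop (𝓝 0) :=
        tendsto_one_div_add_atTop_nhds_zero_nat
      have h2 : Tendsto (fun _ : ℕ => (1 : ℝ)) atTop (𝓝 1) := tendsto_const_nhds
      have h3 := h2.add h
      rw [hqdef]
      simpa using h3
    have hq_anti : ∀ n n' : ℕ, n ≤ n' → q n' ≤ q n := by
      intro n n' h
      rw [hqdef]; dsimp only
      have h1 : (0 : ℝ) < (n : ℝ) + 1 := by positivity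
      have h2 : (n : ℝ) + 1 ≤ (n' : ℝ) + 1 := by
        have : (n : ℝ) ≤ n' := by exact_mod_cast h
        linarith
      have := one_div_le_one_div_of_le h1 h2
      linarith
    -- the per-(n,c) identity
    set ξ : ℕ → ℕ → Ω → ℝ :=
      fun n c ω => max (M t ω) (q n * min (Mst ω) (c + 1)) with hξdef
    set Gq : ℕ → Set Ω := fun n => {ω | ∃ s, t ≤ s ∧ q n * Mst ω ≤ M s ω} with hGqdef
    have hGq_m : ∀ n, MeasurableSet (Gq n) := fun n =>
      measurableSet_hit ℱ hMmart.stronglyAdapted hMcont hMnonneg (measurable_const.mul hMst_m) t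
    set A : ℕ → Set Ω := fun c => {ω | Mst ω ≤ (c : ℝ) + 1} with hAdef
    have hA_meas : ∀ c, MeasurableSet[ℱ t] (A c) := fun c =>
      hMst_sm.measurable measurableSet_Iic
    have hA_m : ∀ c, MeasurableSet (A c) := fun c => ℱ.le t _ (hA_meas c)
    have hIc : ∀ c : ℕ, ∫ ω in B ∩ A c, G.indicator (fun _ => (1 : ℝ)) ω ∂P
        = ∫ ω in B ∩ A c, g ω ∂P := by
      intro c
      have hBA : MeasurableSet[ℱ t] (B ∩ A c) := hB.inter (hA_meas c)
      have hBAm : MeasurableSet (B ∩ A c) := ℱ.le t _ hBA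
      -- per-n identity
      have hJnc : ∀ n : ℕ, ∫ ω in B ∩ A c, (Gq n).indicator (fun _ => (1 : ℝ)) ω ∂P
          = ∫ ω in B ∩ A c, M t ω / (q n * Mst ω) ∂P := by
        intro n
        have hξ_sm : StronglyMeasurable[ℱ t] (ξ n c) := by
          have h1 : Measurable[ℱ t] (M t) := (hMmart.stronglyAdapted t).measurable
          have h2 : Measurable[ℱ t] Mst := hMst_sm.measurable
          have h3 : Measurable[ℱ t] (ξ n c) :=
            h1.max (measurable_const.mul (h2.min measurable_const))
          exact h3.stronglyMeasurable
        have hξm : Measurable (ξ n c) := hξ_sm.measurable.mono (ℱ.le t) le_rfl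
        have hξge : ∀ ω, M t ω ≤ ξ n c ω := fun ω => le_max_left _ _
        have hq0 : 0 < q n := lt_of_lt_of_le one_pos (hq1 n)
        have hξint : Integrable (ξ n c) P := by
          refine ((hMmart.integrable t).add (integrable_const (q n * ((c : ℝ) + 1)))).mono'
            hξm.aestronglyMeasurable (ae_of_all _ fun ω => ?_)
          rw [Real.norm_eq_abs, abs_of_nonneg (le_trans (hMnonneg t ω) (hξge ω))]
          rw [hξdef]; dsimp only
          have h1 : min (Mst ω) ((c : ℝ) + 1) ≤ (c : ℝ) + 1 := min_le_right _ _
          have h2 : q n * min (Mst ω) ((c : ℝ) + 1) ≤ q n * ((c : ℝ) + 1) :=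
            mul_le_mul_of_nonneg_left h1 hq0.le
          have h3 : (0 : ℝ) ≤ q n * ((c : ℝ) + 1) := by positivity
          have h4 : 0 ≤ M t ω := hMnonneg t ω
          have hb : (M t + fun _ : Ω => q n * ((c : ℝ) + 1)) ω
              = M t ω + q n * ((c : ℝ) + 1) := rfl
          rw [hb]
          rcases max_cases (M t ω) (q n * min (Mst ω) ((c : ℝ) + 1)) with ⟨he, _⟩ | ⟨he, _⟩ <;>
            rw [he] <;> linarith
        have hξpos : ∀ᵐ ω ∂P, 0 < ξ n c ω := by
          filter_upwards [hMst1] with ω h1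
          have h2 : (1 : ℝ) ≤ min (Mst ω) ((c : ℝ) + 1) := by
            refine le_min h1 ?_
            have : (0 : ℝ) ≤ (c : ℝ) := Nat.cast_nonneg c
            linarith
          have h3 : (1 : ℝ) ≤ q n * min (Mst ω) ((c : ℝ) + 1) := by
            have := mul_le_mul (hq1 n) h2 zero_le_one (le_trans zero_le_one (hq1 n))
            simpa using this
          exact lt_of_lt_of_le one_pos (le_trans h3 (le_max_right _ _))
        have hcond := condexp_indicator_hit hMmart hMcont hMnonneg hMlim
          hξ_sm hξge hξint hξpos
        have hHm : MeasurableSet {ω : Ω | ∃ s, t ≤ s ∧ ξ n c ω ≤ M s ω} :=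
          measurableSet_hit ℱ hMmart.stronglyAdapted hMcont hMnonneg hξm t
        have hind_int : Integrable
            ({ω : Ω | ∃ s, t ≤ s ∧ ξ n c ω ≤ M s ω}.indicator (fun _ => (1 : ℝ))) P :=
          (integrable_const (1 : ℝ)).indicator hHm
        have hInc : ∫ ω in B ∩ A c,
            ({ω : Ω | ∃ s, t ≤ s ∧ ξ n c ω ≤ M s ω}.indicator (fun _ => (1 : ℝ))) ω ∂P
            = ∫ ω in B ∩ A c, M t ω / ξ n c ω ∂P := by
          calc ∫ ω in B ∩ A c,
              ({ω : Ω | ∃ s, t ≤ s ∧ ξ n c ω ≤ M s ω}.indicator (fun _ => (1 : ℝ))) ω ∂P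
              = ∫ ω in B ∩ A c,
                (P[{ω : Ω | ∃ s, t ≤ s ∧ ξ n c ω ≤ M s ω}.indicator
                  (fun _ => (1 : ℝ)) | ℱ t]) ω ∂P :=
                (setIntegral_condExp (ℱ.le t) hind_int hBA).symm
            _ = ∫ ω in B ∩ A c, M t ω / ξ n c ω ∂P :=
                integral_congr_ae (ae_restrict_of_ae hcond)
        -- on B ∩ A c the level ξ n c equals q n * Mst
        have hξeq : ∀ ω ∈ B ∩ A c, ξ n c ω = q n * Mst ω := by
          rintro ω ⟨_, hωA⟩
          rw [hξdef]; dsimp only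
          have h1 : min (Mst ω) ((c : ℝ) + 1) = Mst ω := min_eq_left hωA
          rw [h1]
          refine max_eq_right ?_
          have h0 : 0 ≤ Mst ω := le_trans (hMnonneg t ω) (hMt_le ω)
          exact le_trans (hMt_le ω) (le_mul_of_one_le_left h0 (hq1 n))
        calc ∫ ω in B ∩ A c, (Gq n).indicator (fun _ => (1 : ℝ)) ω ∂P
            = ∫ ω in B ∩ A c,
              ({ω : Ω | ∃ s, t ≤ s ∧ ξ n c ω ≤ M s ω}.indicator (fun _ => (1 : ℝ))) ω ∂P := by
              refine setIntegral_congr_fun hBAm fun ω hω => ?_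
              have hmem : ω ∈ Gq n ↔ ω ∈ {ω : Ω | ∃ s, t ≤ s ∧ ξ n c ω ≤ M s ω} := by
                rw [hGqdef]
                simp only [mem_setOf_eq, hξeq ω hω]
              by_cases hωG : ω ∈ Gq n
              · rw [indicator_of_mem hωG, indicator_of_mem (hmem.1 hωG)]
              · rw [indicator_of_notMem hωG, indicator_of_notMem (fun h => hωG (hmem.2 h))]
          _ = ∫ ω in B ∩ A c, M t ω / ξ n c ω ∂P := hInc
          _ = ∫ ω in B ∩ A c, M t ω / (q n * Mst ω) ∂P := by
              refine setIntegral_congr_fun hBAm fun ω hω => ?_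
              rw [hξeq ω hω]
      -- limit in n
      have hGq_sub : ∀ᵐ ω ∂P, ∀ n, ω ∈ Gq n → ω ∈ G := by
        filter_upwards [hMst1] with ω h1
        rintro n ⟨s, hts, hs⟩
        refine ⟨s, hts, ?_⟩
        have hd : (0 : ℝ) < 1 / ((n : ℝ) + 1) := by positivity
        have he : q n * Mst ω - Mst ω = (1 / ((n : ℝ) + 1)) * Mst ω := by
          rw [hqdef]; ring
        have hf2 : (1 / ((n : ℝ) + 1)) * 1 ≤ (1 / ((n : ℝ) + 1)) * Mst ω :=
          mul_le_mul_of_nonneg_left h1 hd.le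
        rw [mul_one] at hf2
        have h2 : Mst ω < q n * Mst ω := by
          have h3 : 0 < q n * Mst ω - Mst ω := by rw [he]; exact lt_of_lt_of_le hd hf2
          linarith
        exact lt_of_lt_of_le h2 hs
      have hG_sub : ∀ᵐ ω ∂P, ω ∈ G → ∃ n, ω ∈ Gq n := by
        filter_upwards [hMst1] with ω h1
        rintro ⟨s, hts, hs⟩
        have hpos : (0 : ℝ) < M s ω - Mst ω := by linarith
        obtain ⟨n, hn⟩ := exists_nat_ge (Mst ω / (M s ω - Mst ω))
        refine ⟨n, s, hts, ?_⟩
        have h3 : Mst ω / (M s ω - Mst ω) ≤ (n : ℝ) + 1 := by linarith [hn]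
        have h4 : Mst ω ≤ (M s ω - Mst ω) * ((n : ℝ) + 1) := by
          rw [div_le_iff₀ hpos] at h3
          linarith [h3]
        have h5 : (0 : ℝ) < (n : ℝ) + 1 := by positivity
        have h6 : Mst ω / ((n : ℝ) + 1) ≤ M s ω - Mst ω :=
          (div_le_iff₀ h5).2 (by linarith)
        have h7 : q n * Mst ω = Mst ω + Mst ω / ((n : ℝ) + 1) := by
          rw [hqdef]; ring
        rw [h7]; linarith
      have hGq_mono : ∀ (n n' : ℕ), n ≤ n' → Gq n ⊆ Gq n' := by
        rintro n n' hnn' ω ⟨s, hts, hs⟩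
        refine ⟨s, hts, le_trans ?_ hs⟩
        have h0 : 0 ≤ Mst ω := le_trans (hMnonneg t ω) (hMt_le ω)
        exact mul_le_mul_of_nonneg_right (hq_anti n n' hnn') h0
      have hlim1 : Tendsto (fun n => ∫ ω in B ∩ A c, (Gq n).indicator (fun _ => (1 : ℝ)) ω ∂P)
          atTop (𝓝 (∫ ω in B ∩ A c, G.indicator (fun _ => (1 : ℝ)) ω ∂P)) := by
        refine tendsto_integral_of_dominated_convergence (bound := fun _ => (1 : ℝ))
          (fun n => ((stronglyMeasurable_const.indicator (hGq_m n)).aestronglyMeasurable).restrict)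
          (integrable_const 1) (fun n => ae_of_all _ fun ω => ?_) ?_
        · rw [Real.norm_eq_abs]
          by_cases hω : ω ∈ Gq n
          · rw [indicator_of_mem hω]; norm_num
          · rw [indicator_of_notMem hω]; norm_num
        · refine ae_restrict_of_ae ?_
          filter_upwards [hGq_sub, hG_sub] with ω hsub hex
          by_cases hωG : ω ∈ G
          · obtain ⟨n₀, hn₀⟩ := hex hωG
            rw [indicator_of_mem hωG]
            refine tendsto_atTop_of_eventually_const (i₀ := n₀) fun n hn => ?_
            rw [indicator_of_mem (hGq_mono n₀ n hn hn₀)]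
          · rw [indicator_of_notMem hωG]
            have : ∀ n, (Gq n).indicator (fun _ => (1:ℝ)) ω = 0 := fun n =>
              indicator_of_notMem (fun h => hωG (hsub n h)) _
            simp_rw [this]
            exact tendsto_const_nhds
      have hlim2 : Tendsto (fun n => ∫ ω in B ∩ A c, M t ω / (q n * Mst ω) ∂P)
          atTop (𝓝 (∫ ω in B ∩ A c, g ω ∂P)) := by
        refine tendsto_integral_of_dominated_convergence (bound := fun _ => (1 : ℝ))
          (fun n => (((hMmart.stronglyAdapted t).measurable.mono (ℱ.le t) le_rfl).div
            (measurable_const.mul hMst_m)).aestronglyMeasurable.restrict)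
          (integrable_const 1) (fun n => ?_) ?_
        · refine ae_restrict_of_ae ?_
          filter_upwards [hMst1] with ω h1
          have hq0 : (0:ℝ) < q n := lt_of_lt_of_le one_pos (hq1 n)
          have hpos : (0 : ℝ) < q n * Mst ω :=
            mul_pos hq0 (lt_of_lt_of_le one_pos h1)
          rw [Real.norm_eq_abs, abs_of_nonneg (div_nonneg (hMnonneg t ω) hpos.le)]
          rw [div_le_one hpos]
          exact le_trans (hMt_le ω)
            (le_mul_of_one_le_left (by linarith) (hq1 n))
        · refine ae_restrict_of_ae ?_
          filter_upwards [hMst1] with ω h1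
          have hMstpos : (0 : ℝ) < Mst ω := lt_of_lt_of_le one_pos h1
          have hne : (1 : ℝ) * Mst ω ≠ 0 := by
            rw [one_mul]; exact ne_of_gt hMstpos
          have hden : Tendsto (fun n => q n * Mst ω) atTop (𝓝 ((1 : ℝ) * Mst ω)) :=
            hq_tendsto.mul_const (Mst ω)
          have hcst : Tendsto (fun _ : ℕ => M t ω) atTop (𝓝 (M t ω)) := tendsto_const_nhds
          have := hcst.div hden hne
          rw [hgdef]
          simpa only [one_mul, Pi.div_def] using this
      -- combine
      have heqseq : (fun n => ∫ ω in B ∩ A c, (Gq n).indicator (fun _ => (1 : ℝ)) ω ∂P)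
          = fun n => ∫ ω in B ∩ A c, M t ω / (q n * Mst ω) ∂P := funext hJnc
      rw [heqseq] at hlim1
      exact tendsto_nhds_unique hlim1 hlim2
    -- limit in c
    have hclim1 : Tendsto (fun c => ∫ ω in B ∩ A c, G.indicator (fun _ => (1 : ℝ)) ω ∂P)
        atTop (𝓝 (∫ ω in B, G.indicator (fun _ => (1 : ℝ)) ω ∂P)) := by
      have hrw : ∀ c : ℕ, ∫ ω in B ∩ A c, G.indicator (fun _ => (1 : ℝ)) ω ∂P
          = ∫ ω in B, (A c).indicator (G.indicator (fun _ => (1 : ℝ))) ω ∂P := fun c =>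
        (setIntegral_indicator (hA_m c)).symm
      simp_rw [hrw]
      refine tendsto_integral_of_dominated_convergence (bound := fun _ => (1 : ℝ))
        (fun c => (((stronglyMeasurable_const.indicator hGm).indicator
          (hA_m c)).aestronglyMeasurable).restrict)
        (integrable_const 1) (fun c => ae_of_all _ fun ω => ?_) ?_
      · rw [Real.norm_eq_abs]
        by_cases h1 : ω ∈ A c
        · rw [indicator_of_mem h1]
          by_cases h2 : ω ∈ G
          · rw [indicator_of_mem h2]; norm_num
          · rw [indicator_of_notMem h2]; norm_num
        · rw [indicator_of_notMem h1]; norm_num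
      · refine ae_of_all _ fun ω => ?_
        obtain ⟨c₀, hc₀⟩ := exists_nat_ge (Mst ω)
        refine tendsto_atTop_of_eventually_const (i₀ := c₀) fun c hc => ?_
        have : ω ∈ A c := by
          rw [hAdef]
          simp only [mem_setOf_eq]
          have : (c₀ : ℝ) ≤ (c : ℝ) := by exact_mod_cast hc
          linarith
        rw [indicator_of_mem this]
    have hclim2 : Tendsto (fun c => ∫ ω in B ∩ A c, g ω ∂P)
        atTop (𝓝 (∫ ω in B, g ω ∂P)) := by
      have hrw : ∀ c : ℕ, ∫ ω in B ∩ A c, g ω ∂P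
          = ∫ ω in B, (A c).indicator g ω ∂P := fun c =>
        (setIntegral_indicator (hA_m c)).symm
      simp_rw [hrw]
      refine tendsto_integral_of_dominated_convergence (bound := fun _ => (1 : ℝ))
        (fun c => ((hg_m.indicator (hA_m c)).aestronglyMeasurable).restrict)
        (integrable_const 1) (fun c => ?_) ?_
      · refine ae_restrict_of_ae ?_
        filter_upwards [hg_bound] with ω h1
        by_cases h2 : ω ∈ A c
        · rw [indicator_of_mem h2]; exact h1
        · rw [indicator_of_notMem h2]; norm_num
      · refine ae_of_all _ fun ω => ?_
        obtain ⟨c₀, hc₀⟩ := exists_nat_ge (Mst ω)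
        refine tendsto_atTop_of_eventually_const (i₀ := c₀) fun c hc => ?_
        have : ω ∈ A c := by
          rw [hAdef]
          simp only [mem_setOf_eq]
          have : (c₀ : ℝ) ≤ (c : ℝ) := by exact_mod_cast hc
          linarith
        rw [indicator_of_mem this]
    have heqc : (fun c => ∫ ω in B ∩ A c, G.indicator (fun _ => (1 : ℝ)) ω ∂P)
        = fun c => ∫ ω in B ∩ A c, g ω ∂P := funext hIc
    rw [heqc] at hclim1
    have hfin : ∫ ω in B, G.indicator (fun _ => (1 : ℝ)) ω ∂P = ∫ ω in B, g ω ∂P :=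
      tendsto_nhds_unique hclim1 hclim2
    calc ∫ ω in B, g ω ∂P = ∫ ω in B, G.indicator (fun _ => (1 : ℝ)) ω ∂P := hfin.symm
      _ = ∫ ω in B, Set.indicator {ω | t < ρ ω} (fun _ => (1 : ℝ)) ω ∂P :=
          integral_congr_ae (ae_restrict_of_ae hf_ae.symm)
  -- conclude via the characterization of conditional expectation
  refine (ae_eq_condExp_of_forall_setIntegral_eq (ℱ.le t) hf_int
    (fun s _ _ => hg_int.integrableOn) (fun s hs _ => hmain s hs)
    hg_sm.aestronglyMeasurable).symm
end

section
/- For every t ≥ 0, almost surely, P[M*_∞ = M*_t | 𝓕_t] = 1 − M_t / M*_t. In other words, the conditional law of the overall maximum M*_∞ given 𝓕_t has an atom at the current running maximum M*_t of mass 1 − M_t/M*_t. (Consequently the conditional law of M*_∞ given 𝓕_t is not absolutely continuous with respect to its unconditional law, so Jacod's criterion fails for the initial enlargement by M*_∞.) -/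
set_option maxHeartbeats 1000000


open MeasureTheory Filter Set
open scoped NNReal ENNReal


namespace CondAtomAux

noncomputable def useq : ℕ → ℝ≥0 := TopologicalSpace.denseSeq ℝ≥0

lemma denseRange_useq : DenseRange useq := TopologicalSpace.denseRange_denseSeq ℝ≥0

noncomputable def proj (a b : ℝ≥0) (s : ℝ≥0) : ℝ≥0 := min b (max a s)

lemma proj_mem {a b : ℝ≥0} (hab : a ≤ b) (s : ℝ≥0) : proj a b s ∈ Icc a b :=
  ⟨le_min hab (le_max_left _ _), min_le_left _ _⟩

lemma dist_proj_le {a b x : ℝ≥0} (hab : a ≤ b) (hx : x ∈ Icc a b) (s : ℝ≥0) :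
    dist (proj a b s) x ≤ dist s x := by
  obtain ⟨hax, hxb⟩ := hx
  have hax' : (a : ℝ) ≤ x := hax
  have hxb' : (x : ℝ) ≤ b := hxb
  have hab' : (a : ℝ) ≤ b := hab
  simp only [NNReal.dist_eq, proj]
  push_cast
  rcases le_total (s : ℝ) (a : ℝ) with h | h
  · rw [max_eq_left h, min_eq_right hab']
    rw [abs_of_nonpos (by linarith), abs_of_nonpos (by linarith)]
    linarith
  · rw [max_eq_right h]
    rcases le_total (s : ℝ) (b : ℝ) with h2 | h2
    · rw [min_eq_right h2]
    · rw [min_eq_left h2]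
      rw [abs_of_nonneg (by linarith), abs_of_nonneg (by linarith)]
      linarith

variable {f : ℝ≥0 → ℝ}

lemma bddAbove_image_Icc (hf : Continuous f) (a b : ℝ≥0) : BddAbove (f '' Icc a b) :=
  (isCompact_Icc.image hf).bddAbove

lemma bddAbove_range_proj (hf : Continuous f) {a b : ℝ≥0} (hab : a ≤ b) :
    BddAbove (Set.range fun i => f (proj a b (useq i))) := by
  refine (bddAbove_image_Icc hf a b).mono ?_
  rintro y ⟨i, rfl⟩
  exact ⟨proj a b (useq i), proj_mem hab _, rfl⟩

lemma le_iSup_proj (hf : Continuous f) {a b : ℝ≥0} (hab : a ≤ b) {x : ℝ≥0} (hx : x ∈ Icc a b) :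
    f x ≤ ⨆ i : ℕ, f (proj a b (useq i)) := by
  refine le_of_forall_lt fun c hc => ?_
  have hcont : ContinuousAt f x := hf.continuousAt
  rw [Metric.continuousAt_iff] at hcont
  obtain ⟨δ, hδ, hball⟩ := hcont (f x - c) (by linarith)
  obtain ⟨i, hi⟩ : ∃ i, dist x (useq i) < δ := by
    have := denseRange_useq
    rw [Metric.denseRange_iff] at this
    exact this x δ hδ
  have hdist : dist (proj a b (useq i)) x < δ :=
    lt_of_le_of_lt (dist_proj_le hab hx _) (by rwa [dist_comm])
  have := hball hdist
  rw [Real.dist_eq, abs_lt] at this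
  have hlt : c < f (proj a b (useq i)) := by linarith [this.1]
  exact lt_of_lt_of_le hlt (le_ciSup (bddAbove_range_proj hf hab) i)

lemma iSup_Icc_eq (hf : Continuous f) (hf0 : ∀ s, 0 ≤ f s) {a b : ℝ≥0} (hab : a ≤ b) :
    (⨆ s ∈ Icc a b, f s) = ⨆ i : ℕ, f (proj a b (useq i)) := by
  have hbdd := bddAbove_range_proj hf hab
  have hbddg : BddAbove (Set.range fun s => ⨆ _ : s ∈ Icc a b, f s) := by
    refine ((bddAbove_image_Icc hf a b).insert 0).mono ?_
    rintro y ⟨s, rfl⟩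
    by_cases hs : s ∈ Icc a b
    · have he : (⨆ _ : s ∈ Icc a b, f s) = f s := ciSup_pos hs
      simp only []
      rw [he]
      exact Set.mem_insert_of_mem _ ⟨s, hs, rfl⟩
    · haveI : IsEmpty (s ∈ Icc a b) := ⟨hs⟩
      simp only []
      rw [Real.iSup_of_isEmpty]
      exact Set.mem_insert _ _
  refine le_antisymm (ciSup_le fun s => ?_) (ciSup_le fun i => ?_)
  · by_cases hs : s ∈ Icc a b
    · rw [ciSup_pos hs]; exact le_iSup_proj hf hab hs
    · haveI : IsEmpty (s ∈ Icc a b) := ⟨hs⟩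
      rw [Real.iSup_of_isEmpty]
      exact le_trans (hf0 _) (le_ciSup hbdd 0)
  · refine le_trans (le_of_eq ?_) (le_ciSup hbddg (proj a b (useq i)))
    exact (ciSup_pos (p := proj a b (useq i) ∈ Icc a b)
      (f := fun _ => f (proj a b (useq i))) (proj_mem hab (useq i))).symm

lemma le_iSup_Icc (hf : Continuous f) (hf0 : ∀ s, 0 ≤ f s) {a b : ℝ≥0} (hab : a ≤ b)
    {x : ℝ≥0} (hx : x ∈ Icc a b) : f x ≤ ⨆ s ∈ Icc a b, f s := by
  rw [iSup_Icc_eq hf hf0 hab]; exact le_iSup_proj hf hab hx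

lemma iSup_Icc_nonneg (hf : Continuous f) (hf0 : ∀ s, 0 ≤ f s) {a b : ℝ≥0} (hab : a ≤ b) :
    0 ≤ ⨆ s ∈ Icc a b, f s :=
  le_trans (hf0 b) (le_iSup_Icc hf hf0 hab ⟨hab, le_rfl⟩)

lemma exists_eq_iSup_Icc (hf : Continuous f) (hf0 : ∀ s, 0 ≤ f s) {a b : ℝ≥0} (hab : a ≤ b) :
    ∃ x ∈ Icc a b, (⨆ s ∈ Icc a b, f s) = f x := by
  obtain ⟨x, hx, hmax⟩ := isCompact_Icc.exists_isMaxOn (Set.nonempty_Icc.2 hab)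
    hf.continuousOn (s := Icc a b)
  refine ⟨x, hx, le_antisymm ?_ (le_iSup_Icc hf hf0 hab hx)⟩
  rw [iSup_Icc_eq hf hf0 hab]
  exact ciSup_le fun i => hmax (proj_mem hab _)

lemma exists_hit_iff (hf : Continuous f) (hf0 : ∀ s, 0 ≤ f s) {a b : ℝ≥0} (hab : a ≤ b)
    {x : ℝ} : (∃ s ∈ Icc a b, x ≤ f s) ↔ x ≤ ⨆ s ∈ Icc a b, f s := by
  constructor
  · rintro ⟨s, hs, hxs⟩
    exact hxs.trans (le_iSup_Icc hf hf0 hab hs)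
  · intro h
    obtain ⟨s, hs, heq⟩ := exists_eq_iSup_Icc hf hf0 hab
    exact ⟨s, hs, heq ▸ h⟩



variable {Ω : Type*} {m : MeasurableSpace Ω}

section PathDefs

variable (M : ℝ≥0 → Ω → ℝ)

open Classical in
/-- capped hitting time of level `x` after time `t`, capped at `c`. -/
noncomputable def hitT (t c : ℝ≥0) (x : ℝ) (ω : Ω) : ℝ≥0 :=
  if _ : ∃ s ∈ Icc t c, x ≤ M s ω then sInf {s | s ∈ Icc t c ∧ x ≤ M s ω} else c

/-- dyadic grid point -/
noncomputable def gd (t : ℝ≥0) (k i : ℕ) : ℝ≥0 := t + (i : ℝ≥0) / 2 ^ k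

/-- index of first grid point at which the level has been hit (capped at `n * 2^k`) -/
noncomputable def dk (t : ℝ≥0) (n k : ℕ) (x : ℝ) (ω : Ω) : ℕ :=
  sInf {i | i = n * 2 ^ k ∨ ∃ s ∈ Icc t (gd t k i), x ≤ M s ω}

noncomputable def tauk (t : ℝ≥0) (n k : ℕ) (x : ℝ) (ω : Ω) : ℝ≥0 :=
  gd t k (dk M t n k x ω)

end PathDefs

section GridFacts

lemma gd_mono {t : ℝ≥0} {k : ℕ} : Monotone (gd t k) := fun i j hij => by
  unfold gd
  have : (i : ℝ≥0) ≤ j := Nat.cast_le.2 hij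
  gcongr

lemma gd_cap {t : ℝ≥0} {k n : ℕ} : gd t k (n * 2 ^ k) = t + n := by
  unfold gd
  push_cast
  rw [mul_div_assoc, div_self (by positivity), mul_one]

lemma le_gd {t : ℝ≥0} {k i : ℕ} : t ≤ gd t k i := le_self_add

end GridFacts

section PathFacts

variable {M : ℝ≥0 → Ω → ℝ} {ω : Ω}
variable (hMc : Continuous fun s => M s ω)

section HitT

variable {t c : ℝ≥0} {x : ℝ} (htc : t ≤ c)

include htc in
lemma hitT_mem_Icc : hitT M t c x ω ∈ Icc t c := by
  unfold hitT
  split_ifs with h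
  · obtain ⟨s, hs, hxs⟩ := h
    constructor
    · exact le_csInf ⟨s, hs, hxs⟩ fun b hb => hb.1.1
    · exact le_trans (csInf_le (OrderBot.bddBelow _) ⟨hs, hxs⟩) hs.2
  · exact ⟨htc, le_rfl⟩

include hMc in
lemma hitT_spec (h : ∃ s ∈ Icc t c, x ≤ M s ω) :
    hitT M t c x ω ∈ Icc t c ∧ x ≤ M (hitT M t c x ω) ω := by
  have hclosed : IsClosed {s | s ∈ Icc t c ∧ x ≤ M s ω} :=
    isClosed_Icc.inter (isClosed_Ici.preimage hMc)
  have hmem : sInf {s | s ∈ Icc t c ∧ x ≤ M s ω} ∈ {s | s ∈ Icc t c ∧ x ≤ M s ω} := by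
    refine hclosed.csInf_mem ?_ (OrderBot.bddBelow _)
    obtain ⟨s, hs, hxs⟩ := h
    exact ⟨s, hs, hxs⟩
  rw [hitT, dif_pos h]
  exact ⟨hmem.1, hmem.2⟩

lemma hitT_le {s : ℝ≥0} (hs : s ∈ Icc t c) (hxs : x ≤ M s ω) : hitT M t c x ω ≤ s := by
  rw [hitT, dif_pos ⟨s, hs, hxs⟩]
  exact csInf_le (OrderBot.bddBelow _) ⟨hs, hxs⟩

lemma hitT_no_hit (h : ¬ ∃ s ∈ Icc t c, x ≤ M s ω) : hitT M t c x ω = c := dif_neg h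

include hMc htc in
lemma M_hitT_le (hMt : M t ω < x) : M (hitT M t c x ω) ω ≤ x := by
  by_cases h : ∃ s ∈ Icc t c, x ≤ M s ω
  · obtain ⟨hmem, hx⟩ := hitT_spec hMc h
    have hts : t ≤ hitT M t c x ω := hmem.1
    have hivt : x ∈ Icc (M t ω) (M (hitT M t c x ω) ω) := ⟨hMt.le, hx⟩
    obtain ⟨s, hs, hMs⟩ := intermediate_value_Icc hts (hMc.continuousOn) hivt
    have hMs' : M s ω = x := hMs
    have hsle : hitT M t c x ω ≤ s := hitT_le ⟨hs.1, hs.2.trans hmem.2⟩ hMs'.ge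
    have heq : s = hitT M t c x ω := le_antisymm hs.2 hsle
    rw [← heq, hMs']
  · rw [hitT_no_hit h]
    by_contra hcon
    exact h ⟨c, ⟨htc, le_rfl⟩, le_of_lt (lt_of_not_ge hcon)⟩

include hMc htc in
lemma M_hitT_le_add (hMnn : 0 ≤ M t ω) (hx : 0 ≤ x) : M (hitT M t c x ω) ω ≤ M t ω + x := by
  by_cases hMt : M t ω < x
  · linarith [M_hitT_le hMc htc hMt]
  · push_neg at hMt
    have h1 : hitT M t c x ω ≤ t := hitT_le ⟨le_rfl, htc⟩ hMt
    have h2 : t ≤ hitT M t c x ω := (hitT_mem_Icc htc).1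
    rw [le_antisymm h1 h2]
    linarith

include hMc htc in
lemma M_hitT_eq (hMt : M t ω < x) (h : ∃ s ∈ Icc t c, x ≤ M s ω) :
    M (hitT M t c x ω) ω = x :=
  le_antisymm (M_hitT_le hMc htc hMt) (hitT_spec hMc h).2

end HitT

section Tauk

variable {t : ℝ≥0} {n k : ℕ} {x : ℝ}

lemma dk_le : dk M t n k x ω ≤ n * 2 ^ k := Nat.sInf_le (Or.inl rfl)

lemma tauk_le : tauk M t n k x ω ≤ t + n := by
  rw [tauk, ← gd_cap (t := t) (k := k) (n := n)]
  exact gd_mono dk_le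

lemma le_tauk : t ≤ tauk M t n k x ω := le_gd

lemma dk_spec : dk M t n k x ω = n * 2 ^ k ∨
    ∃ s ∈ Icc t (gd t k (dk M t n k x ω)), x ≤ M s ω :=
  Nat.sInf_mem (s := {i | i = n * 2 ^ k ∨ ∃ s ∈ Icc t (gd t k i), x ≤ M s ω})
    ⟨n * 2 ^ k, Or.inl rfl⟩

lemma hitT_le_tauk : hitT M t (t + n) x ω ≤ tauk M t n k x ω := by
  rcases dk_spec (M := M) (ω := ω) (t := t) (n := n) (k := k) (x := x) with h | h
  · rw [tauk, h, gd_cap]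
    exact (hitT_mem_Icc le_self_add).2
  · obtain ⟨s, hs, hxs⟩ := h
    have hsc : s ∈ Icc t (t + n) :=
      ⟨hs.1, hs.2.trans (by rw [← gd_cap (t := t) (k := k) (n := n)]; exact gd_mono dk_le)⟩
    exact le_trans (hitT_le hsc hxs) hs.2

include hMc in
lemma tauk_le_hitT_add : tauk M t n k x ω ≤ hitT M t (t + n) x ω + 1 / 2 ^ k := by
  by_cases h : ∃ s ∈ Icc t (t + n), x ≤ M s ω
  · obtain ⟨hmem, hxσ⟩ := hitT_spec hMc h
    set σ := hitT M t (t + n) x ω with hσ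
    set i₁ : ℕ := ⌈(σ - t) * 2 ^ k⌉₊ with hi₁
    have hv1 : σ - t ≤ (i₁ : ℝ≥0) / 2 ^ k := by
      rw [le_div_iff₀ (by positivity : (0 : ℝ≥0) < 2 ^ k)]
      exact Nat.le_ceil _
    have hgd : σ ≤ gd t k i₁ := by
      rw [gd]
      calc σ = t + (σ - t) := by rw [add_tsub_cancel_of_le hmem.1]
        _ ≤ t + (i₁ : ℝ≥0) / 2 ^ k := by gcongr
    have hi₁N : i₁ ≤ n * 2 ^ k := by
      rw [hi₁]
      refine Nat.ceil_le.2 ?_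
      push_cast
      gcongr
      exact tsub_le_iff_left.2 hmem.2
    have hhit : ∃ s ∈ Icc t (gd t k i₁), x ≤ M s ω := ⟨σ, ⟨hmem.1, hgd⟩, hxσ⟩
    have hdk : dk M t n k x ω ≤ i₁ := Nat.sInf_le (Or.inr hhit)
    have hle : tauk M t n k x ω ≤ gd t k i₁ := gd_mono hdk
    refine hle.trans ?_
    rw [gd]
    have hceil : (i₁ : ℝ≥0) ≤ (σ - t) * 2 ^ k + 1 := le_of_lt (Nat.ceil_lt_add_one zero_le)
    calc t + (i₁ : ℝ≥0) / 2 ^ k ≤ t + ((σ - t) * 2 ^ k + 1) / 2 ^ k := by gcongr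
      _ = t + ((σ - t) + 1 / 2 ^ k) := by
          rw [add_div, mul_div_assoc, div_self (by positivity : (2 : ℝ≥0) ^ k ≠ 0), mul_one]
      _ = σ + 1 / 2 ^ k := by rw [← add_assoc, add_tsub_cancel_of_le hmem.1]
  · have hdkN : dk M t n k x ω = n * 2 ^ k := by
      refine le_antisymm dk_le ?_
      by_contra hlt
      push_neg at hlt
      rcases dk_spec (M := M) (ω := ω) (t := t) (n := n) (k := k) (x := x) with h' | h'
      · exact absurd h' hlt.ne
      · obtain ⟨s, hs, hxs⟩ := h'
        refine h ⟨s, ⟨hs.1, hs.2.trans ?_⟩, hxs⟩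
        rw [← gd_cap (t := t) (k := k) (n := n)]
        exact gd_mono dk_le
    rw [tauk, hdkN, gd_cap, hitT_no_hit h]
    exact le_self_add

include hMc in
lemma tendsto_tauk : Tendsto (fun k => tauk M t n k x ω) atTop (nhds (hitT M t (t + n) x ω)) := by
  have h1 : Tendsto (fun k : ℕ => hitT M t (t + n) x ω + 1 / 2 ^ k) atTop
      (nhds (hitT M t (t + n) x ω)) := by
    have h2 : Tendsto (fun k : ℕ => (1 : ℝ≥0) / 2 ^ k) atTop (nhds 0) := by
      simp_rw [div_eq_mul_inv, one_mul, ← inv_pow]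
      exact NNReal.tendsto_pow_atTop_nhds_zero_of_lt_one
        (by rw [← NNReal.coe_lt_coe]; norm_num)
    have := tendsto_const_nhds (x := hitT M t (t + n) x ω) (f := atTop (α := ℕ)) |>.add h2
    simpa using this
  exact tendsto_of_tendsto_of_tendsto_of_le_of_le tendsto_const_nhds h1
    (fun k => hitT_le_tauk) (fun k => tauk_le_hitT_add hMc)

include hMc in
lemma tendsto_M_tauk :
    Tendsto (fun k => M (tauk M t n k x ω) ω) atTop (nhds (M (hitT M t (t + n) x ω) ω)) :=
  (hMc.tendsto _).comp (tendsto_tauk hMc)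

end Tauk

end PathFacts




section Meas

variable {ℱ : Filtration ℝ≥0 m} {M : ℝ≥0 → Ω → ℝ}
variable (hadp : Adapted ℱ M) (hMcont : ∀ ω, Continuous fun s => M s ω)
  (hMnonneg : ∀ s ω, 0 ≤ M s ω)

include hadp hMcont hMnonneg in
lemma measurable_iSup_Icc {a b : ℝ≥0} (hab : a ≤ b) :
    Measurable[ℱ b] fun ω => ⨆ s ∈ Icc a b, M s ω := by
  have hmeas : ∀ s : ℝ≥0, s ≤ b → Measurable[ℱ b] fun ω => M s ω := fun s hs =>
    (hadp s).mono (ℱ.mono hs) le_rfl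
  apply measurable_of_Iic
  intro c
  have hset : (fun ω => ⨆ s ∈ Icc a b, M s ω) ⁻¹' Iic c =
      ⋂ i : ℕ, {ω | M (proj a b (useq i)) ω ≤ c} := by
    ext ω
    simp only [mem_preimage, mem_Iic, mem_iInter, mem_setOf_eq]
    rw [iSup_Icc_eq (hMcont ω) (fun s => hMnonneg s ω) hab]
    exact ciSup_le_iff (bddAbove_range_proj (hMcont ω) hab)
  rw [hset]
  exact MeasurableSet.iInter fun i =>
    measurableSet_le (hmeas _ (proj_mem hab (useq i)).2) measurable_const

include hadp hMcont hMnonneg in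
lemma measurableSet_hit {a b : ℝ≥0} (hab : a ≤ b) (x : ℝ) :
    MeasurableSet[ℱ b] {ω | ∃ s ∈ Icc a b, x ≤ M s ω} := by
  have hset : {ω | ∃ s ∈ Icc a b, x ≤ M s ω} =
      (fun ω => ⨆ s ∈ Icc a b, M s ω) ⁻¹' Ici x := by
    ext ω
    simp only [mem_preimage, mem_Ici, mem_setOf_eq]
    exact exists_hit_iff (hMcont ω) (fun s => hMnonneg s ω) hab
  rw [hset]
  exact measurable_iSup_Icc hadp hMcont hMnonneg hab measurableSet_Ici

include hadp hMcont hMnonneg in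
lemma measurableSet_dk_eq (t : ℝ≥0) (n k : ℕ) (x : ℝ) {i : ℕ} (hi : i ≤ n * 2 ^ k) :
    MeasurableSet[ℱ (gd t k i)] {ω | dk M t n k x ω = i} := by
  have hset : {ω | dk M t n k x ω = i} =
      ({ω | i = n * 2 ^ k ∨ ∃ s ∈ Icc t (gd t k i), x ≤ M s ω} ∩
        ⋂ (j : ℕ) (_ : j < i), {ω | ¬(j = n * 2 ^ k ∨ ∃ s ∈ Icc t (gd t k j), x ≤ M s ω)}) := by
    ext ω
    simp only [mem_inter_iff, mem_setOf_eq, mem_iInter]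
    constructor
    · rintro rfl
      exact ⟨dk_spec, fun j hj => Nat.notMem_of_lt_sInf hj⟩
    · rintro ⟨hmem, hmin⟩
      refine le_antisymm (Nat.sInf_le hmem) (le_of_not_gt fun hlt => ?_)
      exact hmin _ hlt (Nat.sInf_mem (⟨n * 2 ^ k, Or.inl rfl⟩ :
        Set.Nonempty {i | i = n * 2 ^ k ∨ ∃ s ∈ Icc t (gd t k i), x ≤ M s ω}))
  rw [hset]
  refine MeasurableSet.inter ?_ (MeasurableSet.iInter fun j => MeasurableSet.iInter fun hj => ?_)
  · by_cases hiN : i = n * 2 ^ k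
    · have : {ω : Ω | i = n * 2 ^ k ∨ ∃ s ∈ Icc t (gd t k i), x ≤ M s ω} = univ := by
        ext ω; simp [hiN]
      rw [this]; exact MeasurableSet.univ
    · have : {ω : Ω | i = n * 2 ^ k ∨ ∃ s ∈ Icc t (gd t k i), x ≤ M s ω} =
          {ω | ∃ s ∈ Icc t (gd t k i), x ≤ M s ω} := by
        ext ω; simp [hiN]
      rw [this]
      exact measurableSet_hit hadp hMcont hMnonneg le_gd x
  · have hjN : j ≠ n * 2 ^ k := Nat.ne_of_lt (lt_of_lt_of_le hj hi)
    have : {ω : Ω | ¬(j = n * 2 ^ k ∨ ∃ s ∈ Icc t (gd t k j), x ≤ M s ω)} =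
        {ω | ∃ s ∈ Icc t (gd t k j), x ≤ M s ω}ᶜ := by
      ext ω; simp [hjN]
    rw [this]
    exact (ℱ.mono (gd_mono hj.le) _
      (measurableSet_hit hadp hMcont hMnonneg le_gd x)).compl

include hadp hMcont hMnonneg in
lemma isStoppingTime_tauk (t : ℝ≥0) (n k : ℕ) (x : ℝ) :
    IsStoppingTime ℱ (fun ω => (tauk M t n k x ω : WithTop ℝ≥0)) := by
  intro v
  simp only [WithTop.coe_le_coe]
  have hset : {ω | tauk M t n k x ω ≤ v} =
      ⋃ (i : ℕ) (_ : i ≤ n * 2 ^ k ∧ gd t k i ≤ v), {ω | dk M t n k x ω = i} := by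
    ext ω
    simp only [mem_setOf_eq, mem_iUnion]
    constructor
    · intro h
      exact ⟨dk M t n k x ω, ⟨dk_le, h⟩, rfl⟩
    · rintro ⟨i, ⟨hiN, hgd⟩, hdk⟩
      rw [tauk, hdk]
      exact hgd
  rw [hset]
  refine MeasurableSet.iUnion fun i => MeasurableSet.iUnion fun hi => ?_
  exact ℱ.mono hi.2 _ (measurableSet_dk_eq hadp hMcont hMnonneg t n k x hi.1)

lemma countable_range_tauk (t : ℝ≥0) (n k : ℕ) (x : ℝ) :
    (Set.range (tauk M t n k x)).Countable := by
  refine (Set.countable_range (gd t k)).mono ?_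
  rintro y ⟨ω, rfl⟩
  exact ⟨dk M t n k x ω, rfl⟩

end Meas



section Prob

variable {P : Measure Ω} [IsProbabilityMeasure P]
variable {ℱ : Filtration ℝ≥0 m} {M : ℝ≥0 → Ω → ℝ}
variable (hMmart : Martingale M ℱ P) (hMcont : ∀ ω, Continuous fun s => M s ω)
  (hMnonneg : ∀ s ω, 0 ≤ M s ω)

include hMcont hMnonneg in
lemma measurable_M_tauk (t : ℝ≥0) (n k : ℕ) (x : ℝ) (hadp : Adapted ℱ M) :
    Measurable fun ω => M (tauk M t n k x ω) ω := by
  intro S hS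
  have hset : (fun ω => M (tauk M t n k x ω) ω) ⁻¹' S =
      ⋃ (i : ℕ) (_ : i ≤ n * 2 ^ k), ({ω | dk M t n k x ω = i} ∩ {ω | M (gd t k i) ω ∈ S}) := by
    ext ω
    simp only [mem_preimage, mem_iUnion, mem_inter_iff, mem_setOf_eq]
    constructor
    · intro h
      exact ⟨dk M t n k x ω, dk_le, rfl, h⟩
    · rintro ⟨i, _, hdk, hmem⟩
      rw [tauk, hdk]
      exact hmem
  rw [hset]
  refine MeasurableSet.iUnion fun i => MeasurableSet.iUnion fun hi => MeasurableSet.inter ?_ ?_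
  · exact ℱ.le _ _ (measurableSet_dk_eq hadp hMcont hMnonneg t n k x hi)
  · exact ℱ.le _ _ ((hadp _) hS)

include hMmart hMcont hMnonneg in
lemma setIntegral_M_hitT (t : ℝ≥0) (n : ℕ) (x : ℝ) (hx : 0 ≤ x) {B : Set Ω}
    (hB : MeasurableSet[ℱ t] B) :
    ∫ ω in B, M (hitT M t (t + (n : ℝ≥0)) x ω) ω ∂P = ∫ ω in B, M t ω ∂P := by
  have hadp : Adapted ℱ M := hMmart.stronglyAdapted.adapted
  set τ : ℕ → Ω → WithTop ℝ≥0 := fun k ω => tauk M t n k x ω with hτdef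
  have hτ : ∀ k, IsStoppingTime ℱ (τ k) := fun k => isStoppingTime_tauk hadp hMcont hMnonneg t n k x
  have hτ_le : ∀ k ω, τ k ω ≤ ((t + n : ℝ≥0) : WithTop ℝ≥0) := fun k ω =>
    WithTop.coe_le_coe.2 tauk_le
  set g : Ω → ℝ := fun ω => M (hitT M t (t + (n : ℝ≥0)) x ω) ω with hgdef
  set G : ℕ → Ω → ℝ := fun k => P[M (t + (n : ℝ≥0))|((hτ k).measurableSpace)] with hGdef
  have h1 : ∀ k, stoppedValue M (τ k) =ᵐ[P] G k := fun k =>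
    hMmart.stoppedValue_ae_eq_condExp_of_le_const_of_countable_range (hτ k) (hτ_le k)
      (((countable_range_tauk (M := M) t n k x).image (fun y : ℝ≥0 => (y : WithTop ℝ≥0))).mono
        (by rintro _ ⟨ω, rfl⟩; exact ⟨_, ⟨ω, rfl⟩, rfl⟩))
  have hBmsk : ∀ k, MeasurableSet[(hτ k).measurableSpace] B := by
    intro k
    have hmono := IsStoppingTime.measurableSpace_mono (isStoppingTime_const ℱ t) (hτ k)
      (fun ω => WithTop.coe_le_coe.2 le_tauk)
    rw [IsStoppingTime.measurableSpace_const] at hmono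
    exact hmono _ hB
  have h2 : ∀ k, ∫ ω in B, G k ω ∂P = ∫ ω in B, M t ω ∂P := by
    intro k
    rw [hGdef]
    rw [setIntegral_condExp ((hτ k).measurableSpace_le_of_le (hτ_le k))
      (hMmart.integrable _) (hBmsk k)]
    exact (hMmart.setIntegral_eq le_self_add hB).symm
  have htend : ∀ ω, Tendsto (fun k => stoppedValue M (τ k) ω) atTop (nhds (g ω)) := fun ω =>
    tendsto_M_tauk (hMcont ω)
  have hGtend : ∀ᵐ ω ∂P, Tendsto (fun k => G k ω) atTop (nhds (g ω)) := by
    filter_upwards [ae_all_iff.2 h1] with ω hω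
    exact (htend ω).congr fun k => hω k
  have hGmeas : ∀ k, AEStronglyMeasurable (G k) P := fun k =>
    (stronglyMeasurable_condExp.mono ((hτ k).measurableSpace_le_of_le (hτ_le k))).aestronglyMeasurable
  have hgmeas : AEStronglyMeasurable g P :=
    aestronglyMeasurable_of_tendsto_ae atTop hGmeas hGtend
  have hgint : Integrable g P := by
    refine Integrable.mono' ((hMmart.integrable t).add (integrable_const x)) hgmeas
      (Eventually.of_forall fun ω => ?_)
    rw [Real.norm_eq_abs, abs_of_nonneg (hMnonneg _ _)]
    exact M_hitT_le_add (hMcont ω) le_self_add (hMnonneg t ω) hx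
  have hui : UnifIntegrable G 1 P :=
    ((hMmart.integrable (t + n)).uniformIntegrable_condExp
      (fun k => (hτ k).measurableSpace_le_of_le (hτ_le k))).2.1
  have hVitali : Tendsto (fun k => eLpNorm (G k - g) 1 P) atTop (nhds 0) :=
    tendsto_Lp_finite_of_tendsto_ae le_rfl ENNReal.one_ne_top hGmeas
      (memLp_one_iff_integrable.2 hgint) hui hGtend
  have hsetint : Tendsto (fun k => ∫ ω in B, G k ω ∂P) atTop (nhds (∫ ω in B, g ω ∂P)) := by
    refine tendsto_setIntegral_of_L1 g hgint.1 (Eventually.of_forall fun k => integrable_condExp)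
      ?_ B
    have : ∀ k, (∫⁻ ω, ‖G k ω - g ω‖ₑ ∂P) = eLpNorm (G k - g) 1 P := by
      intro k
      rw [eLpNorm_one_eq_lintegral_enorm]
      simp [Pi.sub_apply]
    refine (tendsto_congr this).2 ?_
    exact hVitali
  have := hsetint.congr fun k => h2 k
  exact tendsto_nhds_unique this tendsto_const_nhds

include hMcont hMnonneg in
lemma measurableSet_hitSet (hadp : Adapted ℱ M) (t : ℝ≥0) (x : ℝ) :
    MeasurableSet {ω | ∃ s, t ≤ s ∧ x ≤ M s ω} := by
  have hCeq : {ω | ∃ s, t ≤ s ∧ x ≤ M s ω} =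
      ⋃ n : ℕ, {ω | ∃ s ∈ Icc t (t + (n : ℝ≥0)), x ≤ M s ω} := by
    ext ω
    simp only [mem_setOf_eq, mem_iUnion]
    constructor
    · rintro ⟨s, hts, hxs⟩
      obtain ⟨n, hn⟩ := exists_nat_ge s
      exact ⟨n, s, ⟨hts, le_trans hn le_add_self⟩, hxs⟩
    · rintro ⟨n, s, hs, hxs⟩
      exact ⟨s, hs.1, hxs⟩
  rw [hCeq]
  exact MeasurableSet.iUnion fun n =>
    ℱ.le _ _ (measurableSet_hit hadp hMcont hMnonneg le_self_add x)

include hMmart hMcont hMnonneg in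
lemma measure_hit_eq (hMlim : ∀ᵐ ω ∂P, Tendsto (fun s => M s ω) atTop (nhds (0 : ℝ)))
    (t : ℝ≥0) (x : ℝ) (hx : 0 < x) {B : Set Ω} (hB : MeasurableSet[ℱ t] B)
    (hBsub : ∀ ω ∈ B, M t ω < x) :
    P ({ω | ∃ s, t ≤ s ∧ x ≤ M s ω} ∩ B) = ENNReal.ofReal ((∫ ω in B, M t ω ∂P) / x) := by
  have hadp : Adapted ℱ M := hMmart.stronglyAdapted.adapted
  set C : Set Ω := {ω | ∃ s, t ≤ s ∧ x ≤ M s ω} with hCdef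
  have hCm : MeasurableSet C := measurableSet_hitSet hMcont hMnonneg hadp t x
  have hBm : MeasurableSet B := ℱ.le t _ hB
  set F : ℕ → Ω → ℝ := fun n ω => M (hitT M t (t + (n : ℝ≥0)) x ω) ω with hFdef
  -- a.e. convergence on B towards x * indicator C
  have htendae : ∀ᵐ ω ∂(P.restrict B),
      Tendsto (fun n => F n ω) atTop (nhds (C.indicator (fun _ => x) ω)) := by
    filter_upwards [ae_restrict_of_ae hMlim, ae_restrict_mem hBm] with ω hlim hωB
    by_cases hC : ω ∈ C
    · rw [Set.indicator_of_mem hC]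
      obtain ⟨s, hts, hxs⟩ := hC
      obtain ⟨n₀, hn₀⟩ := exists_nat_ge s
      have heq : ∀ n ≥ n₀, F n ω = x := by
        intro n hn
        refine M_hitT_eq (hMcont ω) le_self_add (hBsub ω hωB)
          ⟨s, ⟨hts, ?_⟩, hxs⟩
        calc s ≤ (n₀ : ℝ≥0) := hn₀
          _ ≤ (n : ℝ≥0) := Nat.cast_le.2 hn
          _ ≤ t + n := le_add_self
      exact Tendsto.congr' (eventually_atTop.2 ⟨n₀, fun n hn => (heq n hn).symm⟩)
        tendsto_const_nhds
    · rw [Set.indicator_of_notMem hC]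
      have heq : ∀ n : ℕ, F n ω = M (t + (n : ℝ≥0)) ω := by
        intro n
        rw [hFdef]
        simp only []
        rw [hitT_no_hit]
        rintro ⟨s, hs, hxs⟩
        exact hC ⟨s, hs.1, hxs⟩
      have : Tendsto (fun n : ℕ => M (t + (n : ℝ≥0)) ω) atTop (nhds 0) := by
        refine hlim.comp ?_
        exact tendsto_atTop_mono (fun _ => le_add_self) tendsto_natCast_atTop_atTop
      exact (this.congr fun n => (heq n).symm)
  have hdom : Tendsto (fun n => ∫ ω in B, F n ω ∂P) atTop
      (nhds (∫ ω in B, C.indicator (fun _ => x) ω ∂P)) := by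
    refine tendsto_integral_of_dominated_convergence (fun _ => x) ?_ ?_ ?_ htendae
    · intro n
      have hFmeas : AEStronglyMeasurable (F n) P :=
        aestronglyMeasurable_of_tendsto_ae atTop
          (fun k => (measurable_M_tauk hMcont hMnonneg t n k x hadp).aestronglyMeasurable)
          (ae_of_all _ fun ω => tendsto_M_tauk (hMcont ω))
      exact hFmeas.restrict
    · exact integrable_const x
    · intro n
      refine (ae_restrict_iff' hBm).2 (Eventually.of_forall fun ω hωB => ?_)
      rw [Real.norm_eq_abs, abs_of_nonneg (hMnonneg _ _)]
      exact M_hitT_le (hMcont ω) le_self_add (hBsub ω hωB)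
  have hconst : ∀ n : ℕ, ∫ ω in B, F n ω ∂P = ∫ ω in B, M t ω ∂P := fun n =>
    setIntegral_M_hitT hMmart hMcont hMnonneg t n x hx.le hB
  have heqint : ∫ ω in B, C.indicator (fun _ => x) ω ∂P = ∫ ω in B, M t ω ∂P :=
    tendsto_nhds_unique (hdom.congr hconst) tendsto_const_nhds
  have hind : ∫ ω in B, C.indicator (fun _ => x) ω ∂P = (P (C ∩ B)).toReal * x := by
    rw [integral_indicator_const x hCm, measureReal_def, Measure.restrict_apply hCm, smul_eq_mul]
  have h1 : (P (C ∩ B)).toReal = (∫ ω in B, M t ω ∂P) / x := by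
    rw [eq_div_iff hx.ne']
    rw [hind] at heqint
    exact heqint
  calc P (C ∩ B) = ENNReal.ofReal ((P (C ∩ B)).toReal) :=
        (ENNReal.ofReal_toReal (measure_ne_top P _)).symm
    _ = ENNReal.ofReal ((∫ ω in B, M t ω ∂P) / x) := by rw [h1]

end Prob



section Prob2

variable {Ω : Type*} {m : MeasurableSpace Ω}
variable {P : Measure Ω} [IsProbabilityMeasure P]
variable {ℱ : Filtration ℝ≥0 m} {M : ℝ≥0 → Ω → ℝ}
variable (hMmart : Martingale M ℱ P) (hMcont : ∀ ω, Continuous fun s => M s ω)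
  (hMnonneg : ∀ s ω, 0 ≤ M s ω)

include hMmart hMcont hMnonneg in
lemma measure_not_max_eq (hM0 : ∀ᵐ ω ∂P, M 0 ω = 1)
    (hMlim : ∀ᵐ ω ∂P, Tendsto (fun s => M s ω) atTop (nhds (0 : ℝ)))
    (t : ℝ≥0) {B : Set Ω} (hB : MeasurableSet[ℱ t] B) :
    P ({ω | ∀ i : ℕ, M (useq i) ω ≤ ⨆ s ∈ Icc 0 t, M s ω}ᶜ ∩ B)
      = ENNReal.ofReal (∫ ω in B, M t ω / (⨆ s ∈ Icc 0 t, M s ω) ∂P) := by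
  classical
  have hadp : Adapted ℱ M := hMmart.stronglyAdapted.adapted
  set St : Ω → ℝ := fun ω => ⨆ s ∈ Icc 0 t, M s ω with hStdef
  have hBm : MeasurableSet B := ℱ.le t _ hB
  have hStnn : ∀ ω, 0 ≤ St ω := fun ω =>
    iSup_Icc_nonneg (hMcont ω) (fun s => hMnonneg s ω) ((zero_le : (0:ℝ≥0) ≤ t))
  have hMtleSt : ∀ ω, M t ω ≤ St ω := fun ω =>
    le_iSup_Icc (hMcont ω) (fun s => hMnonneg s ω) ((zero_le : (0:ℝ≥0) ≤ t)) ⟨(zero_le : (0:ℝ≥0) ≤ t), le_rfl⟩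
  have hStmeasF : Measurable[ℱ t] St :=
    measurable_iSup_Icc hadp hMcont hMnonneg ((zero_le : (0:ℝ≥0) ≤ t))
  have hStm : Measurable St := hStmeasF.mono (ℱ.le t) le_rfl
  -- dyadic levels
  set L : ℕ → Ω → ℝ := fun k ω => ((⌊St ω * 2 ^ k⌋₊ : ℝ) + 1) / 2 ^ k with hLdef
  have hLpos : ∀ k ω, 0 < L k ω := fun k ω => by positivity
  have hStltL : ∀ k ω, St ω < L k ω := by
    intro k ω
    rw [hLdef]
    rw [lt_div_iff₀ (by positivity : (0:ℝ) < 2 ^ k)]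
    exact Nat.lt_floor_add_one _
  have hLle : ∀ k ω, L k ω ≤ St ω + 1 / 2 ^ k := by
    intro k ω
    rw [hLdef]
    have h1 : (⌊St ω * 2 ^ k⌋₊ : ℝ) ≤ St ω * 2 ^ k :=
      Nat.floor_le (mul_nonneg (hStnn ω) (by positivity))
    rw [div_le_iff₀ (by positivity : (0:ℝ) < 2 ^ k), add_mul,
      div_mul_cancel₀ _ (by positivity : (2:ℝ) ^ k ≠ 0)]
    linarith
  have hLanti : ∀ ω, Antitone fun k => L k ω := by
    intro ω
    refine antitone_nat_of_succ_le fun k => ?_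
    have hu : (0:ℝ) ≤ St ω * 2 ^ k := mul_nonneg (hStnn ω) (by positivity)
    have hfl : (⌊St ω * 2 ^ (k + 1)⌋₊ : ℕ) < 2 * ⌊St ω * 2 ^ k⌋₊ + 2 := by
      refine Nat.floor_lt (mul_nonneg (hStnn ω) (by positivity)) |>.2 ?_
      have h2 : St ω * 2 ^ (k + 1) = 2 * (St ω * 2 ^ k) := by ring
      have h3 : St ω * 2 ^ k < ⌊St ω * 2 ^ k⌋₊ + 1 := Nat.lt_floor_add_one _
      rw [h2]
      push_cast
      linarith
    have hfl' : (⌊St ω * 2 ^ (k + 1)⌋₊ : ℝ) + 1 ≤ 2 * ((⌊St ω * 2 ^ k⌋₊ : ℝ) + 1) := by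
      have : (⌊St ω * 2 ^ (k + 1)⌋₊ : ℕ) ≤ 2 * ⌊St ω * 2 ^ k⌋₊ + 1 := Nat.lt_succ_iff.1 hfl
      have := (Nat.cast_le (α := ℝ)).2 this
      push_cast at this ⊢
      linarith
    rw [hLdef]
    simp only []
    rw [div_le_div_iff₀ (by positivity) (by positivity)]
    calc ((⌊St ω * 2 ^ (k+1)⌋₊ : ℝ) + 1) * 2 ^ k ≤ 2 * ((⌊St ω * 2 ^ k⌋₊ : ℝ) + 1) * 2 ^ k := by
          have h4 : (0:ℝ) < 2 ^ k := by positivity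
          nlinarith
      _ = ((⌊St ω * 2 ^ k⌋₊ : ℝ) + 1) * 2 ^ (k + 1) := by ring
  have hLm : ∀ k, Measurable (L k) := by
    intro k
    have h1 : Measurable fun ω => ⌊St ω * 2 ^ k⌋₊ := (hStm.mul_const _).nat_floor
    have h2 : Measurable fun ω => (⌊St ω * 2 ^ k⌋₊ : ℝ) := measurable_from_top.comp h1
    exact (h2.add_const 1).div_const _
  -- ratio functions
  set hk : ℕ → Ω → ℝ := fun k ω => M t ω / L k ω with hhkdef
  have hMtm : Measurable (M t) := (hadp t).mono (ℱ.le t) le_rfl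
  have hhkm : ∀ k, Measurable (hk k) := fun k => hMtm.div (hLm k)
  have hhknn : ∀ k ω, 0 ≤ hk k ω := fun k ω => div_nonneg (hMnonneg _ _) (hLpos k ω).le
  have hhkle1 : ∀ k ω, hk k ω ≤ 1 := fun k ω => by
    rw [hhkdef]
    rw [div_le_one (hLpos k ω)]
    exact (hMtleSt ω).trans (hStltL k ω).le
  have hhkint : ∀ k, IntegrableOn (hk k) B P := by
    intro k
    refine Integrable.mono' (integrable_const 1) ((hhkm k).aestronglyMeasurable.restrict)
      (Eventually.of_forall fun ω => ?_)
    rw [Real.norm_eq_abs, abs_of_nonneg (hhknn k ω)]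
    exact hhkle1 k ω
  -- partition by the floor value
  set E : ℕ → ℕ → Set Ω := fun k j => (fun ω => ⌊St ω * 2 ^ k⌋₊) ⁻¹' {j} with hEdef
  have hEalt : ∀ k j, E k j = St ⁻¹' Ico ((j : ℝ) / 2 ^ k) (((j : ℝ) + 1) / 2 ^ k) := by
    intro k j
    ext ω
    rw [hEdef]
    simp only [mem_preimage, mem_singleton_iff, mem_Ico]
    rw [Nat.floor_eq_iff (mul_nonneg (hStnn ω) (by positivity))]
    constructor
    · rintro ⟨h1, h2⟩
      constructor
      · rw [div_le_iff₀ (by positivity : (0:ℝ) < 2 ^ k)]; exact h1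
      · rw [lt_div_iff₀ (by positivity : (0:ℝ) < 2 ^ k)]; push_cast at h2 ⊢; linarith
    · rintro ⟨h1, h2⟩
      rw [div_le_iff₀ (by positivity : (0:ℝ) < 2 ^ k)] at h1
      rw [lt_div_iff₀ (by positivity : (0:ℝ) < 2 ^ k)] at h2
      refine ⟨h1, ?_⟩
      push_cast
      linarith
  have hEmeasF : ∀ k j, MeasurableSet[ℱ t] (E k j) := fun k j => by
    rw [hEalt k j]
    exact hStmeasF measurableSet_Ico
  have hEm : ∀ k j, MeasurableSet (E k j) := fun k j => ℱ.le t _ (hEmeasF k j)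
  have hEdisj : ∀ k, Pairwise (Function.onFun Disjoint fun j => E k j) := by
    intro k j j' hne
    refine Set.disjoint_left.2 fun ω hj hj' => hne ?_
    rw [hEdef] at hj hj'
    simp only [mem_preimage, mem_singleton_iff] at hj hj'
    rw [← hj, ← hj']
  have hEunion : ∀ k, (⋃ j, E k j ∩ B) = B := by
    intro k
    ext ω
    simp only [mem_iUnion, mem_inter_iff, hEdef, mem_preimage, mem_singleton_iff]
    exact ⟨fun ⟨j, _, h⟩ => h, fun h => ⟨⌊St ω * 2 ^ k⌋₊, rfl, h⟩⟩
  have hLonE : ∀ k j ω, ω ∈ E k j → L k ω = ((j : ℝ) + 1) / 2 ^ k := by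
    intro k j ω hω
    rw [hEdef] at hω
    simp only [mem_preimage, mem_singleton_iff] at hω
    rw [hLdef]
    simp only []
    rw [hω]
  -- the sets D k
  set D : ℕ → Set Ω := fun k => {ω | ∃ s, t ≤ s ∧ L k ω ≤ M s ω} with hDdef
  have hDeq : ∀ k, D k ∩ B =
      ⋃ j : ℕ, ({ω | ∃ s, t ≤ s ∧ ((j : ℝ) + 1) / 2 ^ k ≤ M s ω} ∩ (E k j ∩ B)) := by
    intro k
    ext ω
    simp only [mem_inter_iff, mem_iUnion, hDdef, mem_setOf_eq]
    constructor
    · rintro ⟨⟨s, hts, hLs⟩, hωB⟩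
      refine ⟨⌊St ω * 2 ^ k⌋₊, ⟨s, hts, ?_⟩, ⟨rfl, hωB⟩⟩
      rw [← hLonE k _ ω rfl]
      exact hLs
    · rintro ⟨j, ⟨s, hts, hxs⟩, hωE, hωB⟩
      exact ⟨⟨s, hts, by rw [hLonE k j ω hωE]; exact hxs⟩, hωB⟩
  -- measure of each D k ∩ B
  have hDkB : ∀ k, P (D k ∩ B) = ENNReal.ofReal (∫ ω in B, hk k ω ∂P) := by
    intro k
    have hterm : ∀ j : ℕ,
        P ({ω | ∃ s, t ≤ s ∧ ((j : ℝ) + 1) / 2 ^ k ≤ M s ω} ∩ (E k j ∩ B))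
          = ENNReal.ofReal (∫ ω in E k j ∩ B, hk k ω ∂P) := by
      intro j
      have hxpos : (0:ℝ) < ((j : ℝ) + 1) / 2 ^ k := by positivity
      have hsub : ∀ ω ∈ E k j ∩ B, M t ω < ((j : ℝ) + 1) / 2 ^ k := by
        intro ω hω
        rw [← hLonE k j ω hω.1]
        exact lt_of_le_of_lt (hMtleSt ω) (hStltL k ω)
      rw [measure_hit_eq hMmart hMcont hMnonneg hMlim t _ hxpos
        ((hEmeasF k j).inter hB) hsub]
      congr 1
      rw [div_eq_iff hxpos.ne', ← integral_mul_const]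
      refine setIntegral_congr_fun ((hEm k j).inter hBm) fun ω hω => ?_
      show M t ω = hk k ω * (((j : ℝ) + 1) / 2 ^ k)
      rw [hhkdef]
      simp only []
      rw [hLonE k j ω hω.1, div_mul_cancel₀ _ hxpos.ne']
    have hsum : HasSum (fun j => ∫ ω in E k j ∩ B, hk k ω ∂P) (∫ ω in B, hk k ω ∂P) := by
      have := hasSum_integral_iUnion (μ := P) (f := hk k)
        (s := fun j => E k j ∩ B) (fun j => (hEm k j).inter hBm)
        (fun j j' hne => Set.disjoint_left.2 fun ω h1 h2 =>
          Set.disjoint_left.1 (hEdisj k hne) h1.1 h2.1)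
        (by rw [hEunion k]; exact hhkint k)
      rwa [hEunion k] at this
    rw [hDeq k]
    rw [measure_iUnion ?_ ?_]
    · rw [← hsum.tsum_eq]
      rw [ENNReal.ofReal_tsum_of_nonneg (fun j => integral_nonneg fun ω => hhknn k ω)
        hsum.summable]
      exact tsum_congr hterm
    · intro j j' hne
      exact Set.disjoint_left.2 fun ω h1 h2 =>
        Set.disjoint_left.1 (hEdisj k hne) h1.2.1 h2.2.1
    · intro j
      exact (measurableSet_hitSet hMcont hMnonneg hadp t _).inter ((hEm k j).inter hBm)
  -- monotone limits
  have hDmono : Monotone fun k => D k ∩ B := by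
    intro k k' hkk'
    refine inter_subset_inter_left _ fun ω hω => ?_
    obtain ⟨s, hts, hLs⟩ := hω
    exact ⟨s, hts, le_trans (hLanti ω hkk') hLs⟩
  have htendL : Tendsto (fun k => P (D k ∩ B)) atTop (nhds (P (⋃ k, D k ∩ B))) :=
    tendsto_measure_iUnion_atTop hDmono
  -- identify the union
  have hA'eq : ∀ ω, (∀ i : ℕ, M (useq i) ω ≤ St ω) ↔ ∀ s, M s ω ≤ St ω := by
    intro ω
    constructor
    · intro h s
      have hcl : IsClosed {u : ℝ≥0 | M u ω ≤ St ω} := isClosed_le (hMcont ω) continuous_const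
      have hsub : Set.range useq ⊆ {u : ℝ≥0 | M u ω ≤ St ω} :=
        range_subset_iff.2 h
      have hdense : closure (Set.range useq) = univ := denseRange_useq.closure_range
      have hmem : s ∈ closure (Set.range useq) := by rw [hdense]; trivial
      have hsub' : closure (Set.range useq) ⊆ {u : ℝ≥0 | M u ω ≤ St ω} :=
        (closure_mono hsub).trans hcl.closure_eq.subset
      exact hsub' hmem
    · exact fun h i => h (useq i)
  have hUnionD : (⋃ k, D k ∩ B) = {ω | ∀ i : ℕ, M (useq i) ω ≤ St ω}ᶜ ∩ B := by
    ext ω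
    simp only [mem_iUnion, mem_inter_iff, mem_compl_iff, mem_setOf_eq, hDdef]
    constructor
    · rintro ⟨k, ⟨s, hts, hLs⟩, hωB⟩
      refine ⟨fun hall => ?_, hωB⟩
      have := (hA'eq ω).1 hall s
      have := hStltL k ω
      linarith
    · rintro ⟨hnot, hωB⟩
      rw [hA'eq ω] at hnot
      push_neg at hnot
      obtain ⟨s, hs⟩ := hnot
      have hts : t ≤ s := by
        by_contra hcon
        push_neg at hcon
        exact absurd (le_iSup_Icc (hMcont ω) (fun s' => hMnonneg s' ω) ((zero_le : (0:ℝ≥0) ≤ t))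
          ⟨(zero_le : (0:ℝ≥0) ≤ s), hcon.le⟩) (not_le.2 hs)
      obtain ⟨k, hkey⟩ : ∃ k : ℕ, (1:ℝ) / 2 ^ k < M s ω - St ω := by
        obtain ⟨k, hken⟩ := exists_pow_lt_of_lt_one (sub_pos.2 hs) (by norm_num : (1:ℝ)/2 < 1)
        refine ⟨k, ?_⟩
        rw [div_pow, one_pow] at hken
        exact hken
      refine ⟨k, ⟨s, hts, ?_⟩, hωB⟩
      have := hLle k ω
      linarith
  -- limit of right-hand sides
  have hStpos : ∀ᵐ ω ∂P, 0 < St ω := by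
    filter_upwards [hM0] with ω h0
    have h1 : (1:ℝ) ≤ St ω := by
      rw [← h0]
      exact le_iSup_Icc (hMcont ω) (fun s => hMnonneg s ω) ((zero_le : (0:ℝ≥0) ≤ t)) ⟨le_rfl, (zero_le : (0:ℝ≥0) ≤ t)⟩
    linarith
  have htendInner : Tendsto (fun k => ∫ ω in B, hk k ω ∂P) atTop
      (nhds (∫ ω in B, M t ω / St ω ∂P)) := by
    refine tendsto_integral_of_dominated_convergence (fun _ => 1)
      (fun k => ((hhkm k).aestronglyMeasurable.restrict)) (integrable_const 1)
      (fun k => Eventually.of_forall fun ω => ?_) ?_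
    · rw [Real.norm_eq_abs, abs_of_nonneg (hhknn k ω)]
      exact hhkle1 k ω
    · refine ae_restrict_of_ae ?_
      filter_upwards [hStpos] with ω hpos
      have hLtend : Tendsto (fun k => L k ω) atTop (nhds (St ω)) := by
        have hup : Tendsto (fun k : ℕ => St ω + 1 / 2 ^ k) atTop (nhds (St ω)) := by
          have h2 : Tendsto (fun k : ℕ => (1:ℝ) / 2 ^ k) atTop (nhds 0) := by
            simp_rw [div_eq_mul_inv, one_mul, ← inv_pow]
            exact tendsto_pow_atTop_nhds_zero_of_lt_one (by norm_num) (by norm_num)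
          simpa using tendsto_const_nhds.add h2
        exact tendsto_of_tendsto_of_tendsto_of_le_of_le tendsto_const_nhds hup
          (fun k => (hStltL k ω).le) (fun k => hLle k ω)
      exact (tendsto_const_nhds.div hLtend hpos.ne')
  have htendR : Tendsto (fun k => P (D k ∩ B)) atTop
      (nhds (ENNReal.ofReal (∫ ω in B, M t ω / St ω ∂P))) := by
    have := (ENNReal.continuous_ofReal.tendsto _).comp htendInner
    refine this.congr fun k => ?_
    exact (hDkB k).symm
  rw [← hUnionD]
  exact tendsto_nhds_unique htendL htendR

end Prob2

end CondAtomAux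

open CondAtomAux

/-- Let `M` be a nonnegative continuous martingale with `M 0 = 1` a.s. and
`M t → 0` a.s. as `t → ∞`. Then for every `t ≥ 0`, almost surely,
`P[M*_∞ = M*_t | 𝓕_t] = 1 − M t / M*_t`: the conditional law of the overall maximum
`M*_∞` given `𝓕_t` has an atom at the running maximum `M*_t` of mass `1 − M t / M*_t`. -/
theorem conditional_atom_of_overall_maximum
    {Ω : Type*} {m : MeasurableSpace Ω} {P : Measure Ω} [IsProbabilityMeasure P]
    (ℱ : Filtration ℝ≥0 m) (M : ℝ≥0 → Ω → ℝ)
    (hMmart : Martingale M ℱ P)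
    (hMnonneg : ∀ t ω, 0 ≤ M t ω)
    (hMcont : ∀ ω, Continuous fun t => M t ω)
    (hM0 : ∀ᵐ ω ∂P, M 0 ω = 1)
    (hMlim : ∀ᵐ ω ∂P, Tendsto (fun t => M t ω) atTop (nhds (0 : ℝ))) :
    ∀ t : ℝ≥0,
      P[Set.indicator {ω | (⨆ s, M s ω) = ⨆ s ∈ Set.Icc 0 t, M s ω} (fun _ => (1 : ℝ)) |
          ℱ t]
        =ᵐ[P] fun ω => 1 - M t ω / (⨆ s ∈ Set.Icc 0 t, M s ω) := by
  intro t
  classical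
  have hadp : Adapted ℱ M := hMmart.stronglyAdapted.adapted
  set A'' : Set Ω := {ω | (⨆ s, M s ω) = ⨆ s ∈ Set.Icc 0 t, M s ω} with hA''def
  set A' : Set Ω := {ω | ∀ i : ℕ, M (useq i) ω ≤ ⨆ s ∈ Set.Icc 0 t, M s ω} with hA'def
  set St : Ω → ℝ := fun ω => ⨆ s ∈ Set.Icc 0 t, M s ω with hStdef
  have hStnn : ∀ ω, 0 ≤ St ω := fun ω =>
    iSup_Icc_nonneg (hMcont ω) (fun s => hMnonneg s ω) ((zero_le : (0:ℝ≥0) ≤ t))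
  have hMtleSt : ∀ ω, M t ω ≤ St ω := fun ω =>
    le_iSup_Icc (hMcont ω) (fun s => hMnonneg s ω) ((zero_le : (0:ℝ≥0) ≤ t)) ⟨(zero_le : (0:ℝ≥0) ≤ t), le_rfl⟩
  have hStmeasF : Measurable[ℱ t] St :=
    measurable_iSup_Icc hadp hMcont hMnonneg ((zero_le : (0:ℝ≥0) ≤ t))
  have hStm : Measurable St := hStmeasF.mono (ℱ.le t) le_rfl
  have hA'm : MeasurableSet A' := by
    rw [hA'def]
    have : {ω : Ω | ∀ i : ℕ, M (useq i) ω ≤ St ω} =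
        ⋂ i : ℕ, {ω | M (useq i) ω ≤ St ω} := by
      ext ω; simp [mem_iInter]
    rw [this]
    exact MeasurableSet.iInter fun i =>
      measurableSet_le ((hadp (useq i)).mono (ℱ.le _) le_rfl) hStm
  -- a.s. the whole path is bounded
  have hbdd : ∀ᵐ ω ∂P, BddAbove (Set.range fun s => M s ω) := by
    filter_upwards [hMlim] with ω hlim
    obtain ⟨q, hq⟩ := eventually_atTop.1 (hlim.eventually (gt_mem_nhds one_pos))
    refine ⟨max (⨆ s ∈ Set.Icc 0 q, M s ω) 1, ?_⟩
    rintro y ⟨s, rfl⟩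
    rcases le_total s q with h | h
    · exact le_trans (le_iSup_Icc (hMcont ω) (fun s' => hMnonneg s' ω) ((zero_le : (0:ℝ≥0) ≤ q))
        ⟨(zero_le : (0:ℝ≥0) ≤ s), h⟩) (le_max_left _ _)
    · exact le_trans (hq s h).le (le_max_right _ _)
  -- a.s. A'' and A' agree
  have hAiff : ∀ᵐ ω ∂P, (ω ∈ A'' ↔ ω ∈ A') := by
    filter_upwards [hbdd] with ω hb
    constructor
    · intro h i
      have h1 : M (useq i) ω ≤ ⨆ s, M s ω := le_ciSup hb (useq i)
      have h2 : (⨆ s, M s ω) = St ω := h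
      rw [h2] at h1
      exact h1
    · intro h
      have hforall : ∀ s, M s ω ≤ St ω := by
        intro s
        have hcl : IsClosed {u : ℝ≥0 | M u ω ≤ St ω} := isClosed_le (hMcont ω) continuous_const
        have hsub : Set.range useq ⊆ {u : ℝ≥0 | M u ω ≤ St ω} := range_subset_iff.2 h
        have hdense : closure (Set.range useq) = univ := denseRange_useq.closure_range
        have hmem : s ∈ closure (Set.range useq) := by rw [hdense]; trivial
        exact ((closure_mono hsub).trans hcl.closure_eq.subset) hmem
      refine le_antisymm (ciSup_le hforall) ?_
      obtain ⟨s, _, heq⟩ := exists_eq_iSup_Icc (hMcont ω) (fun s' => hMnonneg s' ω) ((zero_le : (0:ℝ≥0) ≤ t))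
      calc St ω = M s ω := heq
        _ ≤ ⨆ s', M s' ω := le_ciSup hb s
  have hindeq : Set.indicator A'' (fun _ => (1:ℝ)) =ᵐ[P] Set.indicator A' (fun _ => (1:ℝ)) := by
    filter_upwards [hAiff] with ω hiff
    rw [Set.indicator_apply, Set.indicator_apply, if_congr hiff rfl rfl]
  -- the candidate conditional expectation
  set g : Ω → ℝ := fun ω => 1 - M t ω / St ω with hgdef
  have hr01 : ∀ ω, 0 ≤ M t ω / St ω ∧ M t ω / St ω ≤ 1 := by
    intro ω
    refine ⟨div_nonneg (hMnonneg t ω) (hStnn ω), ?_⟩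
    rcases eq_or_lt_of_le (hStnn ω) with h | h
    · have hMt0 : M t ω = 0 := le_antisymm (le_of_le_of_eq (hMtleSt ω) h.symm)
        (hMnonneg t ω)
      rw [hMt0, zero_div]
      norm_num
    · rw [div_le_one h]
      exact hMtleSt ω
  have hgbound : ∀ ω, ‖g ω‖ ≤ 1 := by
    intro ω
    rw [hgdef, Real.norm_eq_abs, abs_le]
    constructor <;> [linarith [(hr01 ω).2]; linarith [(hr01 ω).1]]
  have hgm : Measurable[ℱ t] g := by
    refine Measurable.sub measurable_const ?_
    exact (hadp t).div hStmeasF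
  have hgmm : Measurable g := hgm.mono (ℱ.le t) le_rfl
  have hgint : ∀ S : Set Ω, MeasurableSet S → IntegrableOn g S P := fun S hS =>
    Integrable.mono' (integrable_const 1) hgmm.aestronglyMeasurable.restrict
      (Eventually.of_forall hgbound)
  have hratio_int : ∀ S : Set Ω, MeasurableSet S →
      IntegrableOn (fun ω => M t ω / St ω) S P := by
    intro S hS
    refine Integrable.mono' (integrable_const 1)
      ((((hadp t).mono (ℱ.le t) le_rfl).div hStm).aestronglyMeasurable.restrict)
      (Eventually.of_forall fun ω => ?_)
    rw [Real.norm_eq_abs, abs_of_nonneg (hr01 ω).1]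
    exact (hr01 ω).2
  have hf : Integrable (Set.indicator A' (fun _ => (1:ℝ))) P :=
    (integrable_const (1:ℝ)).indicator hA'm
  have hg_eq : ∀ S : Set Ω, MeasurableSet[ℱ t] S → P S < ⊤ →
      ∫ ω in S, g ω ∂P = ∫ ω in S, Set.indicator A' (fun _ => (1:ℝ)) ω ∂P := by
    intro S hS _
    have hSm : MeasurableSet S := ℱ.le t _ hS
    have hkey := measure_not_max_eq hMmart hMcont hMnonneg hM0 hMlim t hS
    have hRHS : ∫ ω in S, Set.indicator A' (fun _ => (1:ℝ)) ω ∂P = (P (A' ∩ S)).toReal := by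
      rw [integral_indicator_const (1:ℝ) hA'm, measureReal_def, Measure.restrict_apply hA'm, smul_eq_mul, mul_one]
    have hsplit : P (A' ∩ S) + P (A'ᶜ ∩ S) = P S := by
      have h1 := measure_inter_add_diff S hA'm (μ := P)
      rw [Set.diff_eq, Set.inter_comm S A', Set.inter_comm S A'ᶜ] at h1
      exact h1
    have hint_ratio : ∫ ω in S, M t ω / St ω ∂P = (P (A'ᶜ ∩ S)).toReal := by
      rw [hkey]
      rw [ENNReal.toReal_ofReal (integral_nonneg fun ω => (hr01 ω).1)]
    have hLHS : ∫ ω in S, g ω ∂P = (P S).toReal - (P (A'ᶜ ∩ S)).toReal := by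
      rw [hgdef]
      rw [integral_sub (integrable_const (1:ℝ)).integrableOn (hratio_int S hSm)]
      rw [setIntegral_const, smul_eq_mul, mul_one, hint_ratio, measureReal_def]
    rw [hLHS, hRHS]
    have h1 : (P (A' ∩ S)).toReal + (P (A'ᶜ ∩ S)).toReal = (P S).toReal := by
      rw [← ENNReal.toReal_add (measure_ne_top P _) (measure_ne_top P _), hsplit]
    linarith
  have huniq : g =ᵐ[P] P[Set.indicator A' (fun _ => (1:ℝ)) | ℱ t] :=
    ae_eq_condExp_of_forall_setIntegral_eq (ℱ.le t) hf
      (fun S hS _ => hgint S (ℱ.le t _ hS)) hg_eq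
      (StronglyMeasurable.aestronglyMeasurable hgm.stronglyMeasurable)
  exact (condExp_congr_ae hindeq).trans huniq.symm
end

section
/- Let (Ω, 𝓕, P) be a probability space with a filtration (𝓕_t)_{t ≥ 0}, and let Z = (Z_t)_{t ≥ 0} be a real-valued adapted process with Z_t > 0 almost surely for every t and Z_0 = 1 almost surely. If both Z and 1/Z are supermartingales with respect to (𝓕_t) and P, then Z_t = 1 almost surely for every t ≥ 0. -/
open MeasureTheory Filter Set
open scoped NNReal ENNReal

/-- Let `Z` be an adapted process with `Z t > 0` a.s. for every `t` and
`Z 0 = 1` a.s. If both `Z` and `1/Z` are supermartingales, then `Z t = 1` a.s. for every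
`t ≥ 0`. (This is the Jensen-inequality argument underlying the uniqueness of the
numéraire portfolio.) -/
theorem supermartingale_with_supermartingale_inverse_is_one
    {Ω : Type*} {m : MeasurableSpace Ω} {P : Measure Ω} [IsProbabilityMeasure P]
    (ℱ : Filtration ℝ≥0 m) (Z : ℝ≥0 → Ω → ℝ)
    (hZpos : ∀ t : ℝ≥0, ∀ᵐ ω ∂P, 0 < Z t ω)
    (hZ0 : ∀ᵐ ω ∂P, Z 0 ω = 1)
    (hZ : Supermartingale Z ℱ P)
    (hZinv : Supermartingale (fun t ω => (Z t ω)⁻¹) ℱ P) :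
    ∀ t : ℝ≥0, ∀ᵐ ω ∂P, Z t ω = 1 := by
  intro t
  -- integral inequalities
  have h1 : ∫ ω, Z t ω ∂P ≤ ∫ ω, Z 0 ω ∂P := by
    have := hZ.setIntegral_le (zero_le : (0:ℝ≥0) ≤ t) (MeasurableSet.univ : MeasurableSet[ℱ 0] univ)
    simpa [Measure.restrict_univ] using this
  have h2 : ∫ ω, (Z t ω)⁻¹ ∂P ≤ ∫ ω, (Z 0 ω)⁻¹ ∂P := by
    have := hZinv.setIntegral_le (zero_le : (0:ℝ≥0) ≤ t) (MeasurableSet.univ : MeasurableSet[ℱ 0] univ)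
    simpa [Measure.restrict_univ] using this
  have hI0 : ∫ ω, Z 0 ω ∂P = 1 := by
    rw [integral_congr_ae hZ0]; simp
  have hI0' : ∫ ω, (Z 0 ω)⁻¹ ∂P = 1 := by
    rw [integral_congr_ae (hZ0.mono fun ω h => by rw [h, inv_one])]; simp
  -- the function g = Z t + (Z t)⁻¹ - 2 is nonneg a.e. with integral ≤ 0
  set g : Ω → ℝ := fun ω => Z t ω + (Z t ω)⁻¹ - 2 with hg
  have hgint : Integrable g P := ((hZ.integrable t).add (hZinv.integrable t)).sub
    (integrable_const 2)
  have hgnn : 0 ≤ᵐ[P] g := by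
    filter_upwards [hZpos t] with ω hω
    simp only [hg, Pi.zero_apply]
    nlinarith [sq_nonneg (Z t ω - 1), mul_pos hω (inv_pos.mpr hω),
      mul_inv_cancel₀ (ne_of_gt hω)]
  have hgI : ∫ ω, g ω ∂P ≤ 0 := by
    have : ∫ ω, g ω ∂P = (∫ ω, Z t ω ∂P) + (∫ ω, (Z t ω)⁻¹ ∂P) - 2 := by
      rw [hg, show (fun ω => Z t ω + (Z t ω)⁻¹ - 2) = (fun ω => Z t ω + (Z t ω)⁻¹) - fun _ => (2:ℝ) from rfl]
      have hadd : Integrable (fun ω => Z t ω + (Z t ω)⁻¹) P :=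
        (hZ.integrable t).add (hZinv.integrable t)
      rw [integral_sub' hadd (integrable_const 2),
        integral_add (hZ.integrable t) (hZinv.integrable t)]
      simp
    rw [this]
    linarith [h1.trans_eq hI0, h2.trans_eq hI0']
  have hgI0 : ∫ ω, g ω ∂P = 0 :=
    le_antisymm hgI (integral_nonneg_of_ae hgnn)
  have hg0 : g =ᵐ[P] 0 := (integral_eq_zero_iff_of_nonneg_ae hgnn hgint).mp hgI0
  filter_upwards [hg0, hZpos t] with ω h0 hpos
  have h0' : Z t ω + (Z t ω)⁻¹ - 2 = 0 := h0
  have hmul : Z t ω * (Z t ω)⁻¹ = 1 := mul_inv_cancel₀ (ne_of_gt hpos)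
  nlinarith [sq_nonneg (Z t ω - 1)]
end
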